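/- arXiv:math/0006015 — 6 statements merged into one kernel-verified Lean document; each statement's English description precedes it below -/
import Mathlib

section
/- Under the coercivity hypothesis L(x,u) ≥ Θ(u) with Θ superlinear, and lower semicontinuity of L, for every fixed p the function x ↦ H(x,p) = sup_u (⟨p,u⟩ − L(x,u)) is upper semicontinuous. Consequently, for every x ∈ ℝⁿ, M > 0 and ε > 0 there is a neighbourhood U of x such that H(x,p) + ε > H(y,p) for all y ∈ U and all p in the closed ball B_M. -/
open Filter Topology Metric Set
open scoped RealInnerProductSpace

noncomputable section

abbrev Euc (n : ℕ) := EuclideanSpace ℝ (Fin n)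

def contCone {F : Type*} [NormedAddCommGroup F] [NormedSpace ℝ F] (K : Set F) (x : F) : Set F :=
  {v | ∀ ε > 0, ∃ h : ℝ, 0 < h ∧ h < ε ∧ Metric.infDist (x + h • v) K < ε * h}

def Dup {F : Type*} [NormedAddCommGroup F] [NormedSpace ℝ F]
    (W : F → EReal) (x u : F) : EReal :=
  Filter.liminf (fun p : ℝ × F => ((p.1⁻¹ : ℝ) : EReal) * (W (x + p.1 • p.2) - W x))
    ((𝓝[>] (0:ℝ)) ×ˢ 𝓝 u)

def Ham {n : ℕ} (L : Euc n → Euc n → ℝ) (x p : Euc n) : EReal :=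
  ⨆ u : Euc n, ((⟪p, u⟫ - L x u : ℝ) : EReal)

def subdiffP {n : ℕ} (W : ℝ × Euc n → EReal) (q : ℝ × Euc n) : Set (ℝ × Euc n) :=
  {p | ∀ ε > 0, ∀ᶠ z in 𝓝 q,
    W q + ((p.1 * (z.1 - q.1) + ⟪p.2, z.2 - q.2⟫ - ε * ‖z - q‖ : ℝ) : EReal) ≤ W z}

def bolzaValue {n : ℕ} (L : Euc n → Euc n → ℝ) (φ : Euc n → EReal) (t : ℝ) (x : Euc n) : EReal :=
  sInf {c : EReal | ∃ u : ℝ → Euc n,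
    IntervalIntegrable u MeasureTheory.volume 0 t ∧
    IntervalIntegrable (fun s => L (x + ∫ τ in (0:ℝ)..s, u τ) (u s)) MeasureTheory.volume 0 t ∧
    c = ((∫ s in (0:ℝ)..t, L (x + ∫ τ in (0:ℝ)..s, u τ) (u s) : ℝ) : EReal)
        + φ (x + ∫ τ in (0:ℝ)..t, u τ)}

def Superlinear {n : ℕ} (Θ : Euc n → ℝ) : Prop :=
  Filter.Tendsto (fun u : Euc n => Θ u / ‖u‖) (Filter.comap norm Filter.atTop) Filter.atTop

def negPolar {n : ℕ} (T : Set (Euc n)) : Set (Euc n) :=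
  {v | ∀ w ∈ T, ⟪v, w⟫ ≤ 0}

lemma superlinear_bound {n : ℕ} {Θ : Euc n → ℝ} (h : Superlinear Θ) (A : ℝ) :
    ∃ R : ℝ, 0 < R ∧ ∀ u : Euc n, R ≤ ‖u‖ → A * ‖u‖ ≤ Θ u := by
  have h1 := h.eventually (eventually_ge_atTop A)
  rw [Filter.eventually_comap, Filter.eventually_atTop] at h1
  obtain ⟨R, hR⟩ := h1
  refine ⟨max R 1, by positivity, fun u hu => ?_⟩
  have h2 : A ≤ Θ u / ‖u‖ := hR ‖u‖ (le_trans (le_max_left _ _) hu) u rfl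
  have hpos : 0 < ‖u‖ := lt_of_lt_of_le one_pos (le_trans (le_max_right _ _) hu)
  calc A * ‖u‖ ≤ (Θ u / ‖u‖) * ‖u‖ := mul_le_mul_of_nonneg_right h2 hpos.le
    _ = Θ u := div_mul_cancel₀ _ hpos.ne'

lemma ham_ne_bot {n : ℕ} (L : Euc n → Euc n → ℝ) (x p : Euc n) : Ham L x p ≠ ⊥ := by
  have h : ((⟪p, (0:Euc n)⟫ - L x 0 : ℝ) : EReal) ≤ Ham L x p := by
    rw [Ham]; exact le_iSup (fun u : Euc n => ((⟪p, u⟫ - L x u : ℝ) : EReal)) 0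
  intro hb; rw [hb] at h; exact (EReal.bot_lt_coe _).not_ge h

lemma ham_le {n : ℕ} (L : Euc n → Euc n → ℝ) {Θ : Euc n → ℝ}
    (hL0 : ∀ x u, 0 ≤ L x u) (hcoer : ∀ x u, Θ u ≤ L x u)
    {M : ℝ} (hM : 0 ≤ M) {R : ℝ} (hR : 0 ≤ R)
    (hsl : ∀ u : Euc n, R ≤ ‖u‖ → (M + 1) * ‖u‖ ≤ Θ u)
    (x : Euc n) {p : Euc n} (hp : ‖p‖ ≤ M) :
    Ham L x p ≤ ((M * R : ℝ) : EReal) := by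
  rw [Ham]
  refine iSup_le fun u => ?_
  rw [EReal.coe_le_coe_iff]
  have hip : ⟪p, u⟫ ≤ M * ‖u‖ :=
    le_trans (real_inner_le_norm p u) (mul_le_mul_of_nonneg_right hp (norm_nonneg u))
  rcases le_or_gt ‖u‖ R with h | h
  · nlinarith [hL0 x u, norm_nonneg u]
  · have h1 := hsl u h.le
    have h2 := hcoer x u
    nlinarith [norm_nonneg u]

lemma key {n : ℕ} (L : Euc n → Euc n → ℝ) (Θ : Euc n → ℝ)
    (hL0 : ∀ x u, 0 ≤ L x u)
    (hLlsc : LowerSemicontinuous (fun q : Euc n × Euc n => L q.1 q.2))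
    (hLloc : ∀ q : Euc n × Euc n, ∃ U ∈ 𝓝 q, ∃ C : ℝ, ∀ r ∈ U, L r.1 r.2 ≤ C)
    (hΘsl : Superlinear Θ) (hcoer : ∀ x u, Θ u ≤ L x u)
    (x : Euc n) (M : ℝ) (hM : 0 < M) (ε : ℝ) (hε : 0 < ε) :
    ∃ U ∈ 𝓝 x, ∀ y ∈ U, ∀ p : Euc n, ‖p‖ ≤ M →
      Ham L y p ≤ Ham L x p + ((ε / 2 : ℝ) : EReal) := by
  obtain ⟨R₀, hR₀pos, hR₀⟩ := superlinear_bound hΘsl (M + 1)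
  obtain ⟨U0, hU0, C, hC⟩ := hLloc (x, 0)
  have hU1 : {y : Euc n | (y, (0 : Euc n)) ∈ U0} ∈ 𝓝 x := by
    have hcont : Continuous (fun y : Euc n => (y, (0 : Euc n))) :=
      continuous_id.prodMk continuous_const
    exact hcont.continuousAt.preimage_mem_nhds (by simpa using hU0)
  have hCx : L x 0 ≤ C := hC (x, 0) (mem_of_mem_nhds hU0)
  set R : ℝ := max R₀ C with hRdef
  have hRpos : 0 < R := lt_of_lt_of_le hR₀pos (le_max_left _ _)
  -- for each u, a good pair of radii
  have key_u : ∀ u : Euc n, ∃ δ > 0, ∃ r > 0, ∀ y ∈ ball x δ, ∀ v ∈ ball u r,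
      L x u - ε / 4 < L y v ∧ ‖v - u‖ < ε / (4 * M) := by
    intro u
    have hlsc := hLlsc (x, u) (L x u - ε / 4) (by simp; linarith)
    obtain ⟨ρ, hρpos, hρ⟩ := Metric.eventually_nhds_iff_ball.mp hlsc
    refine ⟨ρ, hρpos, min ρ (ε / (4 * M)), by positivity, fun y hy v hv => ?_⟩
    have hv1 : v ∈ ball u ρ := mem_of_mem_of_subset hv (ball_subset_ball (min_le_left _ _))
    have hv2 : dist v u < ε / (4 * M) := lt_of_lt_of_le hv (min_le_right _ _)
    constructor
    · exact hρ (y, v) (by rw [mem_ball, Prod.dist_eq]; exact max_lt (mem_ball.mp hy) (mem_ball.mp hv1))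
    · rwa [← dist_eq_norm]
  choose! δf hδpos rf hrpos hmain using key_u
  have hK : IsCompact (closedBall (0 : Euc n) R) := isCompact_closedBall _ _
  obtain ⟨t, ht_sub, ht_cover⟩ := hK.elim_nhds_subcover (fun u => ball u (rf u))
    (fun u _ => ball_mem_nhds u (hrpos u))
  refine ⟨{y | (y, (0 : Euc n)) ∈ U0} ∩ ⋂ u ∈ t, ball x (δf u),
    inter_mem hU1 ((Filter.biInter_finset_mem t).mpr fun u _ => ball_mem_nhds x (hδpos u)),
    fun y hy p hp => ?_⟩
  conv_lhs => rw [Ham]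
  refine iSup_le fun u => ?_
  rcases le_or_gt ‖u‖ R with hu | hu
  · -- u in the compact ball
    have huK : u ∈ closedBall (0 : Euc n) R := by simpa [dist_zero_right] using hu
    obtain ⟨w, hwt, hwball⟩ := mem_iUnion₂.mp (ht_cover huK)
    have hyball : y ∈ ball x (δf w) := by
      have := hy.2
      rw [mem_iInter₂] at this
      exact this w hwt
    obtain ⟨hL1, hL2⟩ := hmain w y hyball u hwball
    have hip : ⟪p, u - w⟫ ≤ ε / 4 := by
      have h1 : ⟪p, u - w⟫ ≤ ‖p‖ * ‖u - w‖ := real_inner_le_norm _ _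
      have h2 : ‖p‖ * ‖u - w‖ ≤ M * (ε / (4 * M)) :=
        mul_le_mul hp hL2.le (norm_nonneg _) hM.le
      have h3 : M * (ε / (4 * M)) = ε / 4 := by field_simp
      linarith
    have hreal : ⟪p, u⟫ - L y u ≤ (⟪p, w⟫ - L x w) + ε / 2 := by
      have h4 : ⟪p, u⟫ - ⟪p, w⟫ = ⟪p, u - w⟫ := (inner_sub_right p u w).symm
      linarith
    calc ((⟪p, u⟫ - L y u : ℝ) : EReal)
        ≤ (((⟪p, w⟫ - L x w) + ε / 2 : ℝ) : EReal) := EReal.coe_le_coe_iff.mpr hreal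
      _ = ((⟪p, w⟫ - L x w : ℝ) : EReal) + ((ε / 2 : ℝ) : EReal) := EReal.coe_add _ _
      _ ≤ Ham L x p + ((ε / 2 : ℝ) : EReal) := by
          refine add_le_add_left ?_ _
          rw [Ham]; exact le_iSup (fun v : Euc n => ((⟪p, v⟫ - L x v : ℝ) : EReal)) w
  · -- large u
    have h1 : (M + 1) * ‖u‖ ≤ Θ u := hR₀ u (le_trans (le_max_left _ _) hu.le)
    have h2 : Θ u ≤ L y u := hcoer y u
    have h3 : ⟪p, u⟫ ≤ M * ‖u‖ :=
      le_trans (real_inner_le_norm p u) (mul_le_mul_of_nonneg_right hp (norm_nonneg u))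
    have hCR : C ≤ R := le_max_right _ _
    have hreal : ⟪p, u⟫ - L y u ≤ ⟪p, (0 : Euc n)⟫ - L x 0 := by
      have h5 : ⟪p, (0 : Euc n)⟫ = 0 := inner_zero_right p
      linarith
    calc ((⟪p, u⟫ - L y u : ℝ) : EReal)
        ≤ ((⟪p, (0 : Euc n)⟫ - L x 0 : ℝ) : EReal) := EReal.coe_le_coe_iff.mpr hreal
      _ ≤ Ham L x p := by
          rw [Ham]; exact le_iSup (fun v : Euc n => ((⟪p, v⟫ - L x v : ℝ) : EReal)) 0
      _ ≤ Ham L x p + ((ε / 2 : ℝ) : EReal) := by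
          calc Ham L x p = Ham L x p + (0 : EReal) := (add_zero _).symm
            _ ≤ _ := add_le_add_right (by exact_mod_cast (by linarith : (0:ℝ) ≤ ε / 2)) _


theorem stmt2 {n : ℕ} (L : Euc n → Euc n → ℝ) (Θ : Euc n → ℝ)
    (hL0 : ∀ x u, 0 ≤ L x u)
    (hLlsc : LowerSemicontinuous (fun q : Euc n × Euc n => L q.1 q.2))
    (hLloc : ∀ q : Euc n × Euc n, ∃ U ∈ 𝓝 q, ∃ C : ℝ, ∀ r ∈ U, L r.1 r.2 ≤ C)
    (hconv : ∀ x, ConvexOn ℝ Set.univ (L x))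
    (hΘ0 : ∀ u, 0 ≤ Θ u)
    (hΘsl : Superlinear Θ)
    (hcoer : ∀ x u, Θ u ≤ L x u) :
    (∀ p : Euc n, UpperSemicontinuous (fun x => Ham L x p)) ∧
    (∀ x : Euc n, ∀ M : ℝ, 0 < M → ∀ ε : ℝ, 0 < ε →
      ∃ U ∈ 𝓝 x, ∀ y ∈ U, ∀ p : Euc n, ‖p‖ ≤ M →
        Ham L y p < Ham L x p + ((ε : ℝ) : EReal)) := by
  have hfin : ∀ (x p : Euc n), Ham L x p ≠ ⊤ := by
    intro x p
    obtain ⟨R₀, hR₀pos, hR₀⟩ := superlinear_bound hΘsl (‖p‖ + 1)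
    exact ne_top_of_le_ne_top (EReal.coe_ne_top _)
      (ham_le L hL0 hcoer (norm_nonneg p) hR₀pos.le hR₀ x le_rfl)
  constructor
  · intro p x c hc
    have hne1 := hfin x p
    have hne2 := ham_ne_bot L x p
    set a := Ham L x p with ha
    obtain ⟨b, hab, hbc⟩ := exists_between hc
    have hb1 : b ≠ ⊤ := by
      intro h; rw [h] at hbc; exact (not_top_lt hbc)
    have hb2 : b ≠ ⊥ := by
      intro h; rw [h] at hab; exact (not_lt_bot hab)
    have har : ((a.toReal : ℝ) : EReal) = a := EReal.coe_toReal hne1 hne2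
    have hbr : ((b.toReal : ℝ) : EReal) = b := EReal.coe_toReal hb1 hb2
    have harb : a.toReal < b.toReal := by
      rw [← EReal.coe_lt_coe_iff, har, hbr]; exact hab
    set ε : ℝ := b.toReal - a.toReal with hεdef
    have hεpos : 0 < ε := by simp [hεdef]; linarith
    obtain ⟨U, hU, hUmain⟩ := key L Θ hL0 hLlsc hLloc hΘsl hcoer x (‖p‖ + 1)
      (by positivity) ε hεpos
    filter_upwards [hU] with y hy
    have h1 : Ham L y p ≤ a + ((ε / 2 : ℝ) : EReal) :=
      hUmain y hy p (by linarith [norm_nonneg p])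
    have h2 : a + ((ε / 2 : ℝ) : EReal) < c := by
      rw [← har, ← EReal.coe_add]
      refine lt_trans ?_ hbc
      rw [← hbr, EReal.coe_lt_coe_iff]
      simp [hεdef]; linarith
    exact lt_of_le_of_lt h1 h2
  · intro x M hM ε hε
    obtain ⟨U, hU, hUmain⟩ := key L Θ hL0 hLlsc hLloc hΘsl hcoer x M hM ε hε
    refine ⟨U, hU, fun y hy p hp => ?_⟩
    have h1 := hUmain y hy p hp
    have hne1 := hfin x p
    have hne2 := ham_ne_bot L x p
    have har : ((Ham L x p).toReal : EReal) = Ham L x p := EReal.coe_toReal hne1 hne2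
    refine lt_of_le_of_lt h1 ?_
    rw [← har, ← EReal.coe_add, ← EReal.coe_add, EReal.coe_lt_coe_iff]
    linarith
end
end

section
/- Let K ⊆ ℝⁿ be closed and G : K ⇉ ℝⁿ upper semicontinuous with compact convex values. Then K is a viability domain of G (i.e., G(x) ∩ T_K(x) ≠ ∅ for all x ∈ K) if and only if G(x) ∩ closure(convexHull(T_K(x))) ≠ ∅ for every x ∈ K. -/
open Filter Topology Metric Set
open scoped RealInnerProductSpace

noncomputable section

def USCOn {n : ℕ} (K : Set (Euc n)) (G : Euc n → Set (Euc n)) : Prop :=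
  ∀ x ∈ K, ∀ V : Set (Euc n), IsOpen V → G x ⊆ V → ∃ U ∈ 𝓝 x, ∀ y ∈ U ∩ K, G y ⊆ V

open scoped Pointwise

set_option maxHeartbeats 1000000

lemma inner_nonpos_of_prox {n : ℕ} (K : Set (Euc n)) (y z : Euc n) (hz : z ∈ K)
    (hmin : ∀ k ∈ K, dist y z ≤ dist y k) (w : Euc n) (hw : w ∈ contCone K z) :
    ⟪y - z, w⟫ ≤ 0 := by
  by_contra hpos
  push_neg at hpos
  set p := y - z with hp
  set a := ⟪p, w⟫ with ha
  have hden : (0:ℝ) < 2*‖p‖ + (‖w‖+1)^2 := by positivity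
  set η := min 1 (a / (2*‖p‖ + (‖w‖+1)^2)) with hηdef
  have hη0 : 0 < η := lt_min one_pos (div_pos hpos hden)
  have hη1 : η ≤ 1 := min_le_left _ _
  have hηa : η * (2*‖p‖ + (‖w‖+1)^2) ≤ a := by
    rw [← le_div_iff₀ hden]; exact min_le_right _ _
  obtain ⟨h, hh0, hhη, hd⟩ := hw η hη0
  obtain ⟨k, hkK, hk⟩ := (Metric.infDist_lt_iff ⟨z, hz⟩).1 hd
  set e := k - z - h • w with he
  have hek : y - k = p - (h • w + e) := by rw [hp, he]; abel
  have hen : ‖e‖ ≤ η * h := by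
    have h5 : z + h • w - k = -e := by rw [he]; abel
    rw [dist_eq_norm, h5, norm_neg] at hk
    exact hk.le
  have hsq : ‖y - k‖^2 = ‖p‖^2 - 2*(h*a + ⟪p, e⟫) + ‖h • w + e‖^2 := by
    rw [hek, norm_sub_sq_real, inner_add_right, real_inner_smul_right]
  have h4 : ‖p‖^2 ≤ ‖y - k‖^2 := by
    have := hmin k hkK
    rw [dist_eq_norm, dist_eq_norm, ← hp] at this
    exact pow_le_pow_left₀ (norm_nonneg _) this 2
  have h1 : -(‖p‖*(η*h)) ≤ ⟪p, e⟫ := by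
    have := abs_real_inner_le_norm p e
    have h2 : ‖p‖ * ‖e‖ ≤ ‖p‖ * (η*h) := by
      apply mul_le_mul_of_nonneg_left hen (norm_nonneg _)
    cases' abs_le.1 this with hl hr
    linarith
  have h2 : ‖h • w + e‖ ≤ h*(‖w‖+1) := by
    calc ‖h • w + e‖ ≤ ‖h • w‖ + ‖e‖ := norm_add_le _ _
    _ ≤ h*‖w‖ + η*h := by
        rw [norm_smul, Real.norm_eq_abs, abs_of_pos hh0]; linarith
    _ ≤ h*(‖w‖+1) := by nlinarith
  have h3 : ‖h • w + e‖^2 ≤ (h*(‖w‖+1))^2 := pow_le_pow_left₀ (norm_nonneg _) h2 2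
  have hha : h*a ≤ 0 → False := by
    intro hc
    nlinarith [mul_pos hh0 hpos]
  apply hha
  nlinarith [mul_le_mul_of_nonneg_left hηa (le_of_lt hh0), sq_nonneg (‖w‖+1), mul_lt_mul_of_pos_left hhη hh0]

lemma inner_nonpos_closure_hull {n : ℕ} (T : Set (Euc n)) (p : Euc n)
    (hT : ∀ w ∈ T, ⟪p, w⟫ ≤ 0) (v : Euc n)
    (hv : v ∈ closure (convexHull ℝ T)) : ⟪p, v⟫ ≤ 0 := by
  have hlin : IsLinearMap ℝ (fun u : Euc n => ⟪p, u⟫) :=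
    ⟨fun a b => inner_add_right _ _ _, fun c a => real_inner_smul_right _ _ _⟩
  have hconv : Convex ℝ {u : Euc n | ⟪p, u⟫ ≤ 0} := convex_halfSpace_le hlin 0
  have hcl : IsClosed {u : Euc n | ⟪p, u⟫ ≤ 0} :=
    isClosed_le (continuous_const.inner continuous_id) continuous_const
  exact closure_minimal (convexHull_min hT hconv) hcl hv

lemma step_lemma {n : ℕ} (K : Set (Euc n)) (hK : IsClosed K) (G : Euc n → Set (Euc n))
    (husc : ∀ x ∈ K, ∀ V : Set (Euc n), IsOpen V → G x ⊆ V → ∃ U ∈ 𝓝 x, ∀ y ∈ U ∩ K, G y ⊆ V)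
    (hcpt : ∀ x ∈ K, IsCompact (G x))
    (hconv : ∀ x ∈ K, Convex ℝ (G x))
    (Hcc : ∀ x ∈ K, (G x ∩ closure (convexHull ℝ (contCone K x))).Nonempty)
    (x₀ : Euc n) (hx₀ : x₀ ∈ K) (ε : ℝ) (hε : 0 < ε) (hε1 : ε ≤ 1) :
    ∃ t z g, 0 < t ∧ t ≤ ε ∧ z ∈ K ∧ g ∈ G x₀ ∧ ‖z - x₀ - t • g‖ ≤ 2*ε*t := by
  have hKne : K.Nonempty := ⟨x₀, hx₀⟩
  obtain ⟨v₀, hv₀G, -⟩ := Hcc x₀ hx₀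
  have hGne : (G x₀).Nonempty := ⟨v₀, hv₀G⟩
  -- bound on G x₀
  obtain ⟨C, hC⟩ : ∃ C, ∀ v ∈ G x₀, ‖v‖ ≤ C := by
    obtain ⟨C, hCsub⟩ := (hcpt x₀ hx₀).isBounded.subset_closedBall 0
    exact ⟨C, fun v hv => mem_closedBall_zero_iff.1 (hCsub hv)⟩
  obtain ⟨M, hM1, hMC⟩ : ∃ M : ℝ, 1 ≤ M ∧ C + ε ≤ M := by
    refine ⟨max C 0 + 1, ?_, ?_⟩
    · have := le_max_right C 0; linarith
    · have := le_max_left C 0; linarith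
  have hM0 : (0:ℝ) < M := lt_of_lt_of_le one_pos hM1
  -- USC neighborhood
  obtain ⟨r, hr0, hP⟩ : ∃ r > 0, ∀ y ∈ K, dist y x₀ < r → ∀ v ∈ G y, ∃ g ∈ G x₀, dist v g < ε := by
    have hVopen : IsOpen {u : Euc n | infDist u (G x₀) < ε} :=
      isOpen_lt (continuous_infDist_pt (G x₀)) continuous_const
    have hGV : G x₀ ⊆ {u : Euc n | infDist u (G x₀) < ε} := fun u hu => by
      simp only [mem_setOf_eq, infDist_zero_of_mem hu]; exact hε
    obtain ⟨U, hU, hUV⟩ := husc x₀ hx₀ _ hVopen hGV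
    obtain ⟨r, hr0, hball⟩ := Metric.mem_nhds_iff.1 hU
    refine ⟨r, hr0, fun y hy hyr v hv => ?_⟩
    have hvV := hUV y ⟨hball (mem_ball.2 hyr), hy⟩ hv
    exact (Metric.infDist_lt_iff hGne).1 hvV
  -- the convex enlargement
  set A : Set (Euc n) := G x₀ + closedBall (0:Euc n) ε with hAdef
  have hAconv : Convex ℝ A := (hconv x₀ hx₀).add (convex_closedBall _ _)
  have hAne : A.Nonempty := ⟨v₀ + 0, Set.add_mem_add hv₀G (mem_closedBall_self hε.le)⟩
  have hAbound : ∀ a ∈ A, ‖a‖ ≤ M := by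
    intro a ha
    obtain ⟨g, hg, b, hb, rfl⟩ := Set.mem_add.1 ha
    have hbn : ‖b‖ ≤ ε := mem_closedBall_zero_iff.1 hb
    calc ‖g + b‖ ≤ ‖g‖ + ‖b‖ := norm_add_le _ _
    _ ≤ C + ε := add_le_add (hC g hg) hbn
    _ ≤ M := hMC
  have hGA : ∀ y ∈ K, dist y x₀ < r → G y ⊆ A := by
    intro y hy hyr v hv
    obtain ⟨g, hg, hvg⟩ := hP y hy hyr v hv
    have hvg' : ‖v - g‖ ≤ ε := by rw [← dist_eq_norm]; exact hvg.le
    have hveq : v = g + (v - g) := by abel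
    rw [hveq]
    exact Set.add_mem_add hg (mem_closedBall_zero_iff.2 hvg')
  -- time parameters
  obtain ⟨t, ht0, htε, h2tM⟩ : ∃ t : ℝ, 0 < t ∧ t ≤ ε ∧ 2*t*M < r := by
    refine ⟨min ε (r/(4*M)), lt_min hε (by positivity), min_le_left _ _, ?_⟩
    have h1 : min ε (r/(4*M)) ≤ r/(4*M) := min_le_right _ _
    have h2 : 0 < min ε (r/(4*M)) := lt_min hε (by positivity)
    have h3 := (le_div_iff₀ (by positivity : (0:ℝ) < 4*M)).1 h1
    nlinarith [mul_pos h2 hM0]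
  obtain ⟨N, h, hh0, hNh, hht, hhε⟩ :
      ∃ (N : ℕ) (h : ℝ), 0 < h ∧ (N:ℝ)*h = t ∧ h ≤ t ∧ h*M^2 ≤ ε^2*t := by
    refine ⟨⌈M^2/ε^2⌉₊ + 1, t/(⌈M^2/ε^2⌉₊ + 1 : ℕ), ?_, ?_, ?_, ?_⟩
    · positivity
    · field_simp
    · rw [div_le_iff₀ (by positivity)]
      have h1 : (1:ℝ) ≤ ((⌈M^2/ε^2⌉₊ + 1 : ℕ):ℝ) := by exact_mod_cast Nat.one_le_iff_ne_zero.2 (by simp)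
      nlinarith
    · have hce : M^2/ε^2 ≤ ((⌈M^2/ε^2⌉₊ + 1 : ℕ):ℝ) := by
        calc M^2/ε^2 ≤ (⌈M^2/ε^2⌉₊ : ℝ) := Nat.le_ceil _
        _ ≤ _ := by exact_mod_cast Nat.le_succ _
      have hce' : M^2 ≤ ((⌈M^2/ε^2⌉₊ + 1 : ℕ):ℝ) * ε^2 := by
        rw [div_le_iff₀ (by positivity)] at hce; linarith
      rw [div_mul_eq_mul_div, div_le_iff₀ (by positivity)]
      nlinarith [ht0.le, sq_nonneg ε]
  have hN0 : (0:ℝ) < N := by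
    rcases Nat.eq_zero_or_pos N with h0 | h0
    · exfalso; rw [h0] at hNh; simp at hNh; nlinarith
    · exact_mod_cast h0
  -- the Euler induction
  have hind : ∀ m : ℕ, m ≤ N → ∃ y : Euc n,
      (infDist y K)^2 ≤ m * (h^2 * M^2) ∧ ∃ a ∈ A, y - x₀ = ((m:ℝ)*h) • a := by
    intro m
    induction m with
    | zero =>
      intro _
      obtain ⟨a₀, ha₀⟩ := hAne
      exact ⟨x₀, by simp [infDist_zero_of_mem hx₀], a₀, ha₀, by simp⟩
    | succ m ih =>
      intro hmN
      obtain ⟨y, hy2, a, haA, hya⟩ := ih (le_of_lt (Nat.lt_of_succ_le hmN))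
      have hmN' : (m:ℝ) ≤ N := by exact_mod_cast le_of_lt (Nat.lt_of_succ_le hmN)
      have hd2 : (infDist y K)^2 ≤ (t*M)^2 := by
        calc (infDist y K)^2 ≤ m * (h^2*M^2) := hy2
        _ ≤ N * (h^2*M^2) := mul_le_mul_of_nonneg_right hmN' (by positivity)
        _ = (N*h)*h*M^2 := by ring
        _ = t*h*M^2 := by rw [hNh]
        _ ≤ t*t*M^2 := by nlinarith [mul_nonneg (mul_nonneg ht0.le (sq_nonneg M)) (sub_nonneg.2 hht)]
        _ = (t*M)^2 := by ring
      have hdtM : infDist y K ≤ t*M := by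
        have h5 := Real.sqrt_le_sqrt hd2
        rwa [Real.sqrt_sq infDist_nonneg, Real.sqrt_sq (by positivity)] at h5
      have hyx : ‖y - x₀‖ ≤ t*M := by
        rw [hya, norm_smul, Real.norm_eq_abs, abs_of_nonneg (by positivity)]
        calc (m:ℝ)*h*‖a‖ ≤ (N:ℝ)*h*‖a‖ := by
              have hna : (0:ℝ) ≤ ‖a‖ := norm_nonneg _
              have := mul_le_mul_of_nonneg_right hmN' (mul_nonneg hh0.le hna)
              calc (m:ℝ)*h*‖a‖ = (m:ℝ)*(h*‖a‖) := by ring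
              _ ≤ (N:ℝ)*(h*‖a‖) := this
              _ = (N:ℝ)*h*‖a‖ := by ring
        _ ≤ (N:ℝ)*h*M := by
              have h6 := hAbound a haA
              exact mul_le_mul_of_nonneg_left h6 (by positivity)
        _ = t*M := by rw [hNh]
      obtain ⟨z, hzK, hzd⟩ := hK.exists_infDist_eq_dist hKne y
      have hzr : dist z x₀ < r := by
        calc dist z x₀ ≤ dist z y + dist y x₀ := dist_triangle _ _ _
        _ = infDist y K + ‖y - x₀‖ := by rw [dist_comm z y, ← hzd, dist_eq_norm]
        _ ≤ t*M + t*M := add_le_add hdtM hyx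
        _ = 2*t*M := by ring
        _ < r := h2tM
      obtain ⟨v, hvG, hvcl⟩ := Hcc z hzK
      have hvA : v ∈ A := hGA z hzK hzr hvG
      have hvM : ‖v‖ ≤ M := hAbound v hvA
      have hmin : ∀ k ∈ K, dist y z ≤ dist y k := fun k hk => hzd ▸ infDist_le_dist_of_mem hk
      have hinner : ⟪y - z, v⟫ ≤ 0 :=
        inner_nonpos_closure_hull _ _ (fun w hw => inner_nonpos_of_prox K y z hzK hmin w hw) v hvcl
      refine ⟨y + h • v, ?_, ?_⟩
      · have hb1 : infDist (y + h • v) K ≤ dist (y + h • v) z := infDist_le_dist_of_mem hzK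
        have hb2 : (dist (y + h • v) z)^2 ≤ ((m:ℝ)+1) * (h^2*M^2) := by
          have he : y + h • v - z = (y - z) + h • v := by abel
          rw [dist_eq_norm, he, norm_add_sq_real, real_inner_smul_right]
          have hyz : ‖y - z‖^2 = (infDist y K)^2 := by rw [hzd, dist_eq_norm]
          have hv2 : ‖h • v‖^2 ≤ h^2 * M^2 := by
            rw [norm_smul, Real.norm_eq_abs, abs_of_pos hh0, mul_pow]
            exact mul_le_mul_of_nonneg_left (pow_le_pow_left₀ (norm_nonneg v) hvM 2) (sq_nonneg h)
          nlinarith [hy2, mul_nonneg hh0.le (neg_nonneg.2 hinner)]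
        have hq : (infDist (y + h • v) K)^2 ≤ (dist (y + h • v) z)^2 :=
          pow_le_pow_left₀ infDist_nonneg hb1 2
        calc (infDist (y + h • v) K)^2 ≤ ((m:ℝ)+1) * (h^2*M^2) := le_trans hq hb2
        _ = ((m+1 : ℕ):ℝ) * (h^2*M^2) := by push_cast; ring
      · have hm1 : ((m:ℝ)+1) ≠ 0 := by positivity
        refine ⟨((m:ℝ)/(m+1)) • a + (1/((m:ℝ)+1)) • v, ?_, ?_⟩
        · exact hAconv haA hvA (by positivity) (by positivity) (by field_simp)
        · have hcalc : (((m:ℝ)+1)*h) • (((m:ℝ)/(m+1)) • a + (1/((m:ℝ)+1)) • v)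
              = ((m:ℝ)*h) • a + h • v := by
            rw [smul_add, smul_smul, smul_smul]
            have e1 : ((m:ℝ)+1)*h * ((m:ℝ)/(m+1)) = (m:ℝ)*h := by field_simp
            have e2 : ((m:ℝ)+1)*h * (1/((m:ℝ)+1)) = h := by field_simp
            rw [e1, e2]
          have hcast : (((m+1 : ℕ)):ℝ) = (m:ℝ)+1 := by push_cast; ring
          rw [hcast, hcalc, show y + h • v - x₀ = (y - x₀) + h • v by abel, hya]
  -- conclude
  obtain ⟨y, hy2, a, haA, hya⟩ := hind N le_rfl
  obtain ⟨z, hzK, hzd⟩ := hK.exists_infDist_eq_dist hKne y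
  have hdz : dist y z ≤ ε * t := by
    have hsq : (dist y z)^2 ≤ (ε*t)^2 := by
      calc (dist y z)^2 = (infDist y K)^2 := by rw [hzd]
      _ ≤ N * (h^2*M^2) := hy2
      _ = (N*h)*(h*M^2) := by ring
      _ = t*(h*M^2) := by rw [hNh]
      _ ≤ t*(ε^2*t) := mul_le_mul_of_nonneg_left hhε ht0.le
      _ = (ε*t)^2 := by ring
    have h5 := Real.sqrt_le_sqrt hsq
    rwa [Real.sqrt_sq dist_nonneg, Real.sqrt_sq (by positivity)] at h5
  obtain ⟨g, hg, b, hb, hab⟩ := Set.mem_add.1 haA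
  have hbn : ‖b‖ ≤ ε := mem_closedBall_zero_iff.1 hb
  refine ⟨t, z, g, ht0, htε, hzK, hg, ?_⟩
  have hyt : y - x₀ = t • a := by rw [hya, hNh]
  calc ‖z - x₀ - t • g‖ = ‖(z - y) + (y - x₀ - t • g)‖ := by congr 1; abel
  _ ≤ ‖z - y‖ + ‖y - x₀ - t • g‖ := norm_add_le _ _
  _ = dist y z + ‖t • a - t • g‖ := by rw [dist_comm y z, dist_eq_norm, hyt]
  _ = dist y z + t * ‖a - g‖ := by rw [← smul_sub, norm_smul, Real.norm_eq_abs, abs_of_pos ht0]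
  _ ≤ ε*t + t*ε := by
      have hag : a - g = b := by rw [← hab]; abel
      rw [hag]
      exact add_le_add hdz (mul_le_mul_of_nonneg_left hbn ht0.le)
  _ = 2*ε*t := by ring

theorem stmt4 {n : ℕ} (K : Set (Euc n)) (hK : IsClosed K) (G : Euc n → Set (Euc n))
    (husc : USCOn K G)
    (hcpt : ∀ x ∈ K, IsCompact (G x))
    (hconv : ∀ x ∈ K, Convex ℝ (G x)) :
    (∀ x ∈ K, (G x ∩ contCone K x).Nonempty) ↔
    (∀ x ∈ K, (G x ∩ closure (convexHull ℝ (contCone K x))).Nonempty) := by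

  constructor
  · intro H x hx
    obtain ⟨v, hvG, hvT⟩ := H x hx
    exact ⟨v, hvG, subset_closure (subset_convexHull ℝ _ hvT)⟩
  · intro Hcc x₀ hx₀
    have hstep : ∀ k : ℕ, ∃ t z g, 0 < t ∧ t ≤ 1/((k:ℝ)+1) ∧ z ∈ K ∧ g ∈ G x₀ ∧
        ‖z - x₀ - t • g‖ ≤ 2*(1/((k:ℝ)+1))*t := by
      intro k
      have hk0 : (0:ℝ) < 1/((k:ℝ)+1) := by positivity
      have hk1 : (1:ℝ)/((k:ℝ)+1) ≤ 1 := by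
        rw [div_le_one (by positivity)]
        have := Nat.cast_nonneg (α := ℝ) k
        linarith
      exact step_lemma K hK G husc hcpt hconv Hcc x₀ hx₀ _ hk0 hk1
    choose t z g ht0 ht1 hzK hgG hbound using hstep
    obtain ⟨v, hvG, φ, hφ, hgv⟩ := (hcpt x₀ hx₀).tendsto_subseq hgG
    refine ⟨v, hvG, ?_⟩
    intro ε hε
    have h1 : Tendsto (fun i => ‖g (φ i) - v‖) atTop (𝓝 0) :=
      tendsto_iff_norm_sub_tendsto_zero.1 hgv
    have h2 : Tendsto (fun i => (1:ℝ)/((φ i:ℝ)+1)) atTop (𝓝 0) := by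
      have hcast : Tendsto (fun i => ((φ i : ℝ)+1)) atTop atTop :=
        tendsto_atTop_add_const_right _ 1 (tendsto_natCast_atTop_atTop.comp hφ.tendsto_atTop)
      simp only [one_div]; exact hcast.inv_tendsto_atTop
    have hev1 : ∀ᶠ i in atTop, ‖g (φ i) - v‖ < ε/4 :=
      h1.eventually_lt_const (by positivity)
    have hev2 : ∀ᶠ i in atTop, (1:ℝ)/((φ i:ℝ)+1) < ε/4 :=
      h2.eventually_lt_const (by positivity)
    obtain ⟨i, hi1, hi2⟩ := (hev1.and hev2).exists
    set j := φ i with hj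
    set h := t j with hhdef
    have hh0 : 0 < h := ht0 j
    have hhb : h ≤ 1/((j:ℝ)+1) := ht1 j
    refine ⟨h, hh0, lt_of_le_of_lt hhb (lt_of_lt_of_le hi2 (by linarith)), ?_⟩
    have hkey : x₀ + h • v - z j = -(z j - x₀ - h • g j) + h • (v - g j) := by
      rw [smul_sub]; abel
    have hd : infDist (x₀ + h • v) K ≤ ‖x₀ + h • v - z j‖ := by
      rw [← dist_eq_norm]
      exact infDist_le_dist_of_mem (hzK j)
    have hnb : ‖x₀ + h • v - z j‖ < ε * h := by
      calc ‖x₀ + h • v - z j‖ = ‖-(z j - x₀ - h • g j) + h • (v - g j)‖ := by rw [hkey]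
      _ ≤ ‖-(z j - x₀ - h • g j)‖ + ‖h • (v - g j)‖ := norm_add_le _ _
      _ = ‖z j - x₀ - h • g j‖ + h * ‖v - g j‖ := by
          rw [norm_neg, norm_smul, Real.norm_eq_abs, abs_of_pos hh0]
      _ ≤ 2*(1/((j:ℝ)+1))*h + h * ‖v - g j‖ := by
          exact add_le_add (hbound j) le_rfl
      _ < 2*(ε/4)*h + h*(ε/4) := by
          have e1 : 2*(1/((j:ℝ)+1))*h < 2*(ε/4)*h := by
            apply mul_lt_mul_of_pos_right _ hh0
            linarith
          have hi1' : ‖v - g j‖ < ε/4 := by rw [norm_sub_rev]; exact hi1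
          have e2 : h * ‖v - g j‖ < h*(ε/4) :=
            mul_lt_mul_of_pos_left hi1' hh0
          linarith
      _ ≤ ε * h := by nlinarith
    exact lt_of_le_of_lt hd hnb
end
end

section
/- Let K ⊆ ℝⁿ be closed and G : K ⇉ ℝⁿ upper semicontinuous with compact convex values. If for every x ∈ K there exist ε > 0 and an absolutely continuous solution y : [0,ε) → K of the differential inclusion y'(t) ∈ G(y(t)) a.e. with y(0) = x that remains in K, then K is a viability domain of G, i.e., G(x) ∩ T_K(x) ≠ ∅ for all x ∈ K. -/
open Filter Topology Metric Set
open scoped RealInnerProductSpace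

noncomputable section

theorem stmt5 {n : ℕ} (K : Set (Euc n)) (hK : IsClosed K) (G : Euc n → Set (Euc n))
    (husc : USCOn K G)
    (hcpt : ∀ x ∈ K, IsCompact (G x))
    (hconv : ∀ x ∈ K, Convex ℝ (G x))
    (hsol : ∀ x ∈ K, ∃ ε : ℝ, 0 < ε ∧ ∃ y y' : ℝ → Euc n,
      y 0 = x ∧
      (∀ t ∈ Set.Ico (0:ℝ) ε, y t ∈ K) ∧
      (∀ t ∈ Set.Ico (0:ℝ) ε, IntervalIntegrable y' MeasureTheory.volume 0 t ∧
        y t = x + ∫ s in (0:ℝ)..t, y' s) ∧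
      (∀ᵐ t ∂(MeasureTheory.volume.restrict (Set.Ioo (0:ℝ) ε)), y' t ∈ G (y t))) :
    ∀ x ∈ K, (G x ∩ contCone K x).Nonempty := by
  intro x hx
  obtain ⟨ε, hε, y, y', hy0, hyK, hint, hae⟩ := hsol x hx
  have hε2 : (0:ℝ) < ε / 2 := by linarith
  -- Step A: averages of y' lie in cthickening δ (G x) for small times
  have keyA : ∀ δ : ℝ, 0 < δ → ∃ τ : ℝ, 0 < τ ∧ τ ≤ ε / 2 ∧
      ∀ t, 0 < t → t < τ → t⁻¹ • (y t - x) ∈ cthickening δ (G x) := by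
    intro δ hδ
    obtain ⟨U, hU, hGU⟩ := husc x hx (thickening δ (G x)) isOpen_thickening
      (self_subset_thickening hδ (G x))
    obtain ⟨r, hr, hball⟩ := Metric.mem_nhds_iff.1 hU
    -- the primitive F is continuous on [0, ε/2]
    have hi2 : IntervalIntegrable y' MeasureTheory.volume 0 (ε / 2) :=
      (hint (ε / 2) ⟨le_of_lt hε2, by linarith⟩).1
    have hIcc : MeasureTheory.IntegrableOn y' (Set.uIcc 0 (ε / 2)) MeasureTheory.volume := by
      rw [Set.uIcc_of_le (le_of_lt hε2), integrableOn_Icc_iff_integrableOn_Ioc]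
      exact hi2.1
    have hcont := intervalIntegral.continuousOn_primitive_interval hIcc
    have h0mem : (0:ℝ) ∈ Set.uIcc 0 (ε / 2) := Set.left_mem_uIcc
    have hc0 : Filter.Tendsto (fun s => ∫ u in (0:ℝ)..s, y' u)
        (𝓝[Set.uIcc 0 (ε/2)] (0:ℝ)) (𝓝 0) := by
      have := (hcont 0 h0mem).tendsto
      rwa [intervalIntegral.integral_same] at this
    obtain ⟨τ₀, hτ₀, hτball⟩ := Metric.tendsto_nhdsWithin_nhds.1 hc0 r hr
    refine ⟨min τ₀ (ε / 2), lt_min hτ₀ hε2, min_le_right _ _, ?_⟩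
    intro t ht htτ
    have htε2 : t < ε / 2 := lt_of_lt_of_le htτ (min_le_right _ _)
    have htε : t < ε := by linarith
    -- all y s for s ∈ (0, t] lie in U ∩ K
    have hmem : ∀ s, 0 < s → s ≤ t → y s ∈ U ∩ K := by
      intro s hs hst
      have hsε2 : s ≤ ε / 2 := le_of_lt (lt_of_le_of_lt hst htε2)
      have hsε : s < ε := by linarith
      have hys := (hint s ⟨le_of_lt hs, hsε⟩).2
      have hdist : dist (∫ u in (0:ℝ)..s, y' u) 0 < r := by
        apply hτball
        · exact Set.mem_uIcc.2 (Or.inl ⟨le_of_lt hs, hsε2⟩)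
        · rw [Real.dist_eq, sub_zero, abs_of_pos hs]
          exact lt_of_le_of_lt hst htτ |>.trans_le (min_le_left _ _)
      refine ⟨hball ?_, hyK s ⟨le_of_lt hs, hsε⟩⟩
      rw [Metric.mem_ball, hys]
      simpa [dist_eq_norm] using hdist
    -- a.e. membership in the closed thickening on (0, t)
    have hsub : Set.Ioo (0:ℝ) t ⊆ Set.Ioo (0:ℝ) ε := Set.Ioo_subset_Ioo le_rfl (le_of_lt htε)
    have hae' : ∀ᵐ s ∂(MeasureTheory.volume.restrict (Set.Ioo (0:ℝ) t)),
        y' s ∈ cthickening δ (G x) := by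
      have h1 : ∀ᵐ s ∂(MeasureTheory.volume.restrict (Set.Ioo (0:ℝ) t)), y' s ∈ G (y s) :=
        MeasureTheory.ae_mono (MeasureTheory.Measure.restrict_mono hsub le_rfl) hae
      have h2 : ∀ᵐ s ∂(MeasureTheory.volume.restrict (Set.Ioo (0:ℝ) t)), s ∈ Set.Ioo (0:ℝ) t :=
        MeasureTheory.ae_restrict_mem measurableSet_Ioo
      filter_upwards [h1, h2] with s hs1 hs2
      exact Metric.thickening_subset_cthickening δ (G x)
        (hGU (y s) (hmem s hs2.1 (le_of_lt hs2.2)) hs1)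
    -- integrability on (0, t)
    have hintt : MeasureTheory.Integrable y' (MeasureTheory.volume.restrict (Set.Ioo (0:ℝ) t)) :=
      ((hint t ⟨le_of_lt ht, htε⟩).1.1).mono_set Set.Ioo_subset_Ioc_self
    -- set up the average
    have hvolIoo : (MeasureTheory.volume (Set.Ioo (0:ℝ) t)) = ENNReal.ofReal t := by
      rw [Real.volume_Ioo, sub_zero]
    haveI : MeasureTheory.IsFiniteMeasure (MeasureTheory.volume.restrict (Set.Ioo (0:ℝ) t)) := by
      constructor
      rw [MeasureTheory.Measure.restrict_apply_univ, hvolIoo]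
      exact ENNReal.ofReal_lt_top
    haveI : NeZero (MeasureTheory.volume.restrict (Set.Ioo (0:ℝ) t)) := by
      constructor
      rw [Ne, MeasureTheory.Measure.restrict_eq_zero, hvolIoo]
      simpa using ht
    have havg := Convex.average_mem ((hconv x hx).cthickening δ)
      (Metric.isClosed_cthickening) hae' hintt
    rw [MeasureTheory.average_eq] at havg
    have hμuniv : ((MeasureTheory.volume.restrict (Set.Ioo (0:ℝ) t)) Set.univ).toReal = t := by
      rw [MeasureTheory.Measure.restrict_apply_univ, hvolIoo, ENNReal.toReal_ofReal (le_of_lt ht)]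
    rw [MeasureTheory.measureReal_def, hμuniv] at havg
    have hcalc : (∫ s, y' s ∂(MeasureTheory.volume.restrict (Set.Ioo (0:ℝ) t))) = y t - x := by
      have hyt := (hint t ⟨le_of_lt ht, htε⟩).2
      rw [← MeasureTheory.integral_Ioc_eq_integral_Ioo,
        ← intervalIntegral.integral_of_le (le_of_lt ht)]
      rw [hyt]; abel
    rwa [hcalc] at havg
  -- Step B: build the sequence
  choose τ hτpos hτle hτmem using fun k : ℕ => keyA ((k:ℝ)+1)⁻¹ (by positivity)
  set h : ℕ → ℝ := fun k => min (τ k / 2) (((k:ℝ)+1)⁻¹ / 2) with hh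
  have hhpos : ∀ k, 0 < h k := fun k => lt_min (by linarith [hτpos k]) (by positivity)
  have hhτ : ∀ k, h k < τ k := fun k => lt_of_le_of_lt (min_le_left _ _) (by linarith [hτpos k])
  have hhk : ∀ k, h k < ((k:ℝ)+1)⁻¹ := by
    intro k
    have hp : 0 < ((k:ℝ)+1)⁻¹ := by positivity
    exact lt_of_le_of_lt (min_le_right _ _) (by linarith)
  set v : ℕ → Euc n := fun k => (h k)⁻¹ • (y (h k) - x) with hv
  have hvmem : ∀ k : ℕ, v k ∈ cthickening (((k:ℝ)+1)⁻¹) (G x) :=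
    fun k => hτmem k (h k) (hhpos k) (hhτ k)
  have hvmem1 : ∀ k, v k ∈ cthickening 1 (G x) := by
    intro k
    refine Metric.cthickening_mono ?_ (G x) (hvmem k)
    rw [← inv_one]
    exact inv_anti₀ one_pos (by linarith [Nat.cast_nonneg (α := ℝ) k])
  obtain ⟨w, hwmem, φ, hφ, hφtend⟩ :=
    ((hcpt x hx).cthickening (r := 1)).tendsto_subseq hvmem1
  -- w ∈ G x
  have hwGx : w ∈ G x := by
    have hclosure : w ∈ closure (G x) := by
      rw [Metric.closure_eq_iInter_cthickening]
      refine Set.mem_iInter.2 fun δ => Set.mem_iInter.2 fun hδ => ?_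
      have hclosed : IsClosed (cthickening δ (G x)) := Metric.isClosed_cthickening
      refine hclosed.mem_of_tendsto hφtend ?_
      obtain ⟨N, hN⟩ := exists_nat_gt δ⁻¹
      filter_upwards [Filter.eventually_ge_atTop N] with j hj
      refine Metric.cthickening_mono ?_ (G x) (hvmem (φ j))
      have h1 : δ⁻¹ ≤ ((φ j : ℝ) + 1) := by
        have h2 : (N:ℝ) ≤ (φ j : ℝ) := by exact_mod_cast le_trans hj hφ.le_apply
        linarith [hN.le]
      calc ((φ j : ℝ) + 1)⁻¹ ≤ (δ⁻¹)⁻¹ := by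
            apply inv_anti₀ (by positivity) h1
        _ = δ := inv_inv δ
    rwa [(hcpt x hx).isClosed.closure_eq] at hclosure
  refine ⟨w, hwGx, ?_⟩
  -- w ∈ contCone K x
  intro ε' hε'
  have htend2 : Filter.Tendsto (fun j => dist ((v ∘ φ) j) w) Filter.atTop (𝓝 0) :=
    tendsto_iff_dist_tendsto_zero.1 hφtend
  obtain ⟨N₁, hN₁⟩ := (Metric.tendsto_atTop.1 hφtend) ε' hε'
  obtain ⟨N₂, hN₂⟩ := exists_nat_gt (ε')⁻¹
  set j := max N₁ N₂ with hj
  set t := h (φ j) with htdef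
  have htpos : 0 < t := hhpos _
  have htsmall : t < ε' := by
    have h1 : t < ((φ j : ℝ) + 1)⁻¹ := hhk _
    have h2 : (ε')⁻¹ < (φ j : ℝ) + 1 := by
      have : (N₂ : ℝ) ≤ (φ j : ℝ) := by
        exact_mod_cast le_trans (le_max_right N₁ N₂) hφ.le_apply
      linarith [hN₂]
    calc t < ((φ j : ℝ) + 1)⁻¹ := h1
      _ < ((ε')⁻¹)⁻¹ := by apply inv_strictAnti₀ (by positivity) h2
      _ = ε' := inv_inv ε'
  refine ⟨t, htpos, htsmall, ?_⟩
  have hyt : y t ∈ K := hyK t ⟨le_of_lt htpos, by linarith [hτle (φ j), hhτ (φ j), hε2]⟩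
  have hdist : dist ((v ∘ φ) j) w < ε' := hN₁ j (le_max_left _ _)
  calc Metric.infDist (x + t • w) K ≤ dist (x + t • w) (y t) :=
        Metric.infDist_le_dist_of_mem hyt
    _ = ‖t • w - (y t - x)‖ := by rw [dist_eq_norm]; congr 1; abel
    _ = ‖t • (w - v (φ j))‖ := by
        rw [hv]
        congr 1
        rw [smul_sub, smul_smul, mul_inv_cancel₀ (ne_of_gt htpos), one_smul]
    _ = t * ‖w - v (φ j)‖ := by rw [norm_smul, Real.norm_eq_abs, abs_of_pos htpos]
    _ < t * ε' := by
        apply mul_lt_mul_of_pos_left _ htpos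
        rw [← dist_eq_norm, dist_comm]
        exact hdist
    _ = ε' * t := mul_comm _ _
end
end

section
/- (Viability Theorem, key implication) Let K ⊆ ℝⁿ be closed and G : K ⇉ ℝⁿ upper semicontinuous with compact convex values. If G(x) ∩ T_K(x) ≠ ∅ for every x ∈ K, then for every x₀ ∈ K there exist ε > 0 and an absolutely continuous function y : [0,ε) → K with y(0) = x₀ and y'(t) ∈ G(y(t)) for almost every t ∈ [0,ε). -/
open Filter Topology Metric Set
open scoped RealInnerProductSpace

noncomputable section

open MeasureTheory intervalIntegral
open scoped Interval


lemma lipRe_cont {f : ℝ → ℝ} {L : ℝ} (hf : ∀ a b, |f a - f b| ≤ L * |a - b|) :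
    Continuous f := by
  have hL0 : 0 ≤ L := by
    have := hf 0 1
    simp at this
    nlinarith [abs_nonneg (f 0 - f 1)]
  have : LipschitzWith L.toNNReal f := by
    apply LipschitzWith.of_dist_le_mul
    intro a b
    simpa [Real.dist_eq, Real.coe_toNNReal L hL0] using hf a b
  exact this.continuous

lemma lipRe_deriv_bound {f : ℝ → ℝ} {L : ℝ} (hL : 0 ≤ L)
    (hf : ∀ a b, |f a - f b| ≤ L * |a - b|) (t : ℝ) : |deriv f t| ≤ L := by
  by_cases hd : DifferentiableAt ℝ f t
  · have h := hd.hasDerivAt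
    rw [hasDerivAt_iff_tendsto_slope] at h
    have h2 : Tendsto (fun y => |slope f t y|) (𝓝[≠] t) (𝓝 |deriv f t|) :=
      h.abs
    refine le_of_tendsto h2 ?_
    filter_upwards [self_mem_nhdsWithin] with y hy
    have hyt : y - t ≠ 0 := sub_ne_zero.2 hy
    rw [slope_def_field]
    rw [div_eq_mul_inv, abs_mul, abs_inv]
    rw [inv_eq_one_div]
    rw [mul_one_div]
    rw [div_le_iff₀ (by positivity)]
    exact hf y t
  · simp [deriv_zero_of_not_differentiableAt hd, hL]

lemma lipRe_integral_deriv_le {f : ℝ → ℝ} {L : ℝ} (hL : 0 ≤ L)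
    (hf : ∀ a b, |f a - f b| ≤ L * |a - b|) {a b : ℝ} (hab : a ≤ b) :
    ∫ t in a..b, deriv f t ≤ f b - f a := by
  have hcont : Continuous f := lipRe_cont hf
  set μ := volume.restrict (Ioc a b) with hμ
  have hμfin : μ (Set.univ) ≠ ⊤ := by
    simp [hμ, Measure.restrict_apply]
  -- integrability of deriv f
  have hderiv_meas : Measurable (deriv f) := measurable_deriv f
  have hbdd : ∀ t, |deriv f t| ≤ L := lipRe_deriv_bound hL hf
  have hint : Integrable (deriv f) μ := by
    refine ⟨hderiv_meas.aestronglyMeasurable, ?_⟩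
    apply HasFiniteIntegral.of_bounded (C := L)
    filter_upwards with t using by simpa [Real.norm_eq_abs] using hbdd t
  -- the sequence of difference quotients
  set c : ℕ → ℝ := fun n => 1 / (n + 1 : ℝ) with hc
  have hcpos : ∀ n, 0 < c n := fun n => by positivity
  have hc0 : Tendsto c atTop (𝓝 0) := tendsto_one_div_add_atTop_nhds_zero_nat
  set g : ℕ → ℝ → ℝ := fun n t => (f (t + c n) - f t) / c n with hg
  -- pointwise convergence at differentiability points
  have hslope : ∀ t, DifferentiableAt ℝ f t → Tendsto (fun n => g n t) atTop (𝓝 (deriv f t)) := by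
    intro t hd
    have h := hd.hasDerivAt
    rw [hasDerivAt_iff_tendsto_slope] at h
    have htend : Tendsto (fun n => t + c n) atTop (𝓝[≠] t) := by
      apply tendsto_nhdsWithin_of_tendsto_nhds_of_eventually_within
      · simpa using (tendsto_const_nhds.add hc0)
      · filter_upwards with n
        have := hcpos n
        simp only [Set.mem_compl_iff, Set.mem_singleton_iff]
        intro hcontra
        nlinarith [hcontra ▸ (by linarith : t < t + c n)]
    have := h.comp htend
    apply this.congr
    intro n
    simp only [Function.comp_apply, slope_def_field]
    rw [hg]
    field_simp
    congr 1; ring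
  -- the integral of g n
  have hfint : ∀ u v : ℝ, IntervalIntegrable f volume u v := fun u v =>
    hcont.intervalIntegrable u v
  have hgint_eq : ∀ n, ∫ t in a..b, g n t =
      ((∫ t in (0:ℝ)..(b + c n), f t) - (∫ t in (0:ℝ)..b, f t)
        - ((∫ t in (0:ℝ)..(a + c n), f t) - (∫ t in (0:ℝ)..a, f t))) / c n := by
    intro n
    have h1 : ∫ t in a..b, (f (t + c n) - f t) =
        (∫ t in (a + c n)..(b + c n), f t) - ∫ t in a..b, f t := by
      have hint1 : IntervalIntegrable (fun t => f (t + c n)) volume a b :=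
        (hcont.comp (continuous_id.add continuous_const)).intervalIntegrable a b
      rw [intervalIntegral.integral_sub hint1 (hfint a b)]
      congr 1
      exact integral_comp_add_right f (c n)
    have h2 : (∫ t in (a + c n)..(b + c n), f t) =
        (∫ t in (0:ℝ)..(b + c n), f t) - (∫ t in (0:ℝ)..(a + c n), f t) := by
      rw [← integral_interval_sub_left (hfint 0 (b + c n)) (hfint 0 (a + c n))]
    have h3 : (∫ t in a..b, f t) = (∫ t in (0:ℝ)..b, f t) - (∫ t in (0:ℝ)..a, f t) := by
      rw [← integral_interval_sub_left (hfint 0 b) (hfint 0 a)]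
    calc ∫ t in a..b, g n t = (∫ t in a..b, (f (t + c n) - f t)) / c n := by
          rw [← intervalIntegral.integral_div]
        _ = _ := by rw [h1, h2, h3]; ring
    -- done
  -- convergence of ∫ g n
  have hF : ∀ u : ℝ, HasDerivAt (fun v => ∫ t in (0:ℝ)..v, f t) (f u) u := by
    intro u
    exact (intervalIntegral.integral_hasStrictDerivAt_right (hfint 0 u)
      (hcont.stronglyMeasurableAtFilter _ _) hcont.continuousAt).hasDerivAt
  have hquot : ∀ u : ℝ, Tendsto (fun n =>
      ((∫ t in (0:ℝ)..(u + c n), f t) - ∫ t in (0:ℝ)..u, f t) / c n) atTop (𝓝 (f u)) := by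
    intro u
    have h := (hF u)
    rw [hasDerivAt_iff_tendsto_slope] at h
    have htend : Tendsto (fun n => u + c n) atTop (𝓝[≠] u) := by
      apply tendsto_nhdsWithin_of_tendsto_nhds_of_eventually_within
      · simpa using (tendsto_const_nhds.add hc0)
      · filter_upwards with n
        have := hcpos n
        simp only [Set.mem_compl_iff, Set.mem_singleton_iff]
        intro hcontra
        nlinarith [hcontra ▸ (by linarith : u < u + c n)]
    have := h.comp htend
    apply this.congr
    intro n
    simp only [Function.comp_apply, slope_def_field]
    field_simp
    congr 1; ring
  have hIg : Tendsto (fun n => ∫ t in a..b, g n t) atTop (𝓝 (f b - f a)) := by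
    have := (hquot b).sub (hquot a)
    apply this.congr'
    filter_upwards with n
    rw [hgint_eq n]
    ring
  -- Fatou
  have hgmeas : ∀ n, Measurable (fun t => g n t + L) := by
    intro n
    exact ((hcont.comp (by continuity)).sub hcont).measurable.div_const _ |>.add_const _
  have hgnn : ∀ n t, 0 ≤ g n t + L := by
    intro n t
    have hc : (0:ℝ) < c n := hcpos n
    have h2 : -(L * c n) ≤ f (t + c n) - f t := by
      have habs := hf (t + c n) t
      rw [abs_le] at habs
      have heq : |t + c n - t| = c n := by
        rw [show t + c n - t = c n by ring, abs_of_pos (hcpos n)]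
      rw [heq] at habs
      linarith [habs.1]
    have h3 : -(L) ≤ (f (t + c n) - f t) / c n := by
      rw [le_div_iff₀ hc]
      linarith
    simp only [hg]
    linarith
  -- Rademacher
  have hL0 : (L : ℝ) = (L.toNNReal : ℝ) := (Real.coe_toNNReal L hL).symm
  have hlipW : LipschitzWith L.toNNReal f := LipschitzWith.of_dist_le_mul (fun x y => by
    rw [Real.dist_eq, Real.dist_eq, ← hL0]; exact hf x y)
  have hdiff : ∀ᵐ t ∂(volume : Measure ℝ), DifferentiableAt ℝ f t :=
    hlipW.ae_differentiableAt_of_real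
  have hdiffμ : ∀ᵐ t ∂μ, DifferentiableAt ℝ f t := ae_restrict_of_ae hdiff
  have hliminf : ∀ᵐ t ∂μ, Filter.liminf (fun n => ENNReal.ofReal (g n t + L)) atTop
      = ENNReal.ofReal (deriv f t + L) := by
    filter_upwards [hdiffμ] with t hd
    have h1 : Tendsto (fun n => g n t + L) atTop (𝓝 (deriv f t + L)) :=
      (hslope t hd).add_const L
    have h2 : Tendsto (fun n => ENNReal.ofReal (g n t + L)) atTop
        (𝓝 (ENNReal.ofReal (deriv f t + L))) :=
      (ENNReal.continuous_ofReal.tendsto _).comp h1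
    exact h2.liminf_eq
  have hfatou := lintegral_liminf_le (μ := μ) (u := atTop) (f := fun n t => ENNReal.ofReal (g n t + L))
      (fun n => ((hgmeas n).ennreal_ofReal))
  rw [lintegral_congr_ae hliminf] at hfatou
  have hintL : Integrable (fun t => deriv f t + L) μ := hint.add (integrable_const L)
  have hLHS : ∫⁻ t, ENNReal.ofReal (deriv f t + L) ∂μ
      = ENNReal.ofReal (∫ t, (deriv f t + L) ∂μ) := by
    rw [MeasureTheory.ofReal_integral_eq_lintegral_ofReal hintL ?_]
    filter_upwards with t
    have := hbdd t; rw [abs_le] at this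
    simp only [Pi.zero_apply]
    linarith [this.1]
  have hgcont : ∀ n, Continuous (fun t => g n t + L) := by
    intro n
    exact (((hcont.comp (continuous_id.add continuous_const)).sub hcont).div_const _).add
      continuous_const
  have hgn_int : ∀ n, Integrable (fun t => g n t + L) μ :=
    fun n => (hgcont n).integrableOn_Ioc
  have hgn_int' : ∀ n, Integrable (fun t => g n t) μ :=
    fun n => (((hcont.comp (continuous_id.add continuous_const)).sub hcont).div_const
      _).integrableOn_Ioc
  have hIgL : Tendsto (fun n => ∫ t, (g n t + L) ∂μ) atTop (𝓝 (f b - f a + L * (b - a))) := by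
    have heq : ∀ n, ∫ t, (g n t + L) ∂μ = (∫ t in a..b, g n t) + L * (b - a) := by
      intro n
      rw [integral_add (hgn_int' n) (integrable_const L)]
      congr 1
      · rw [intervalIntegral.integral_of_le hab]
      · simp [hμ, Real.volume_Ioc, ENNReal.toReal_ofReal (by linarith : (0:ℝ) ≤ b - a), mul_comm, hab]
    rw [show (𝓝 (f b - f a + L * (b - a))) = 𝓝 ((f b - f a) + L * (b - a)) from rfl]
    apply Tendsto.congr (fun n => (heq n).symm)
    exact hIg.add_const _
  have hRHS : Filter.liminf (fun n => ∫⁻ t, ENNReal.ofReal (g n t + L) ∂μ) atTop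
      = ENNReal.ofReal (f b - f a + L * (b - a)) := by
    have heq : ∀ n, ∫⁻ t, ENNReal.ofReal (g n t + L) ∂μ
        = ENNReal.ofReal (∫ t, (g n t + L) ∂μ) := fun n =>
      (MeasureTheory.ofReal_integral_eq_lintegral_ofReal (hgn_int n)
        (Filter.Eventually.of_forall (hgnn n))).symm
    have h2 : Tendsto (fun n => ∫⁻ t, ENNReal.ofReal (g n t + L) ∂μ) atTop
        (𝓝 (ENNReal.ofReal (f b - f a + L * (b - a)))) := by
      apply Tendsto.congr (fun n => (heq n).symm)
      exact (ENNReal.continuous_ofReal.tendsto _).comp hIgL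
    exact h2.liminf_eq
  rw [hLHS, hRHS] at hfatou
  have hY : 0 ≤ f b - f a + L * (b - a) := by
    have habs := hf b a; rw [abs_le] at habs
    have : |b - a| = b - a := abs_of_nonneg (by linarith)
    rw [this] at habs
    linarith [habs.1]
  rw [ENNReal.ofReal_le_ofReal_iff hY] at hfatou
  have hsplit : ∫ t, (deriv f t + L) ∂μ = (∫ t in a..b, deriv f t) + L * (b - a) := by
    rw [integral_add hint (integrable_const L)]
    congr 1
    · rw [intervalIntegral.integral_of_le hab]
    · simp [hμ, Real.volume_Ioc, ENNReal.toReal_ofReal (by linarith : (0:ℝ) ≤ b - a), mul_comm, hab]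
  rw [hsplit] at hfatou
  linarith

lemma lipRe_integral_deriv {f : ℝ → ℝ} {L : ℝ} (hL : 0 ≤ L)
    (hf : ∀ a b, |f a - f b| ≤ L * |a - b|) {a b : ℝ} (hab : a ≤ b) :
    ∫ t in a..b, deriv f t = f b - f a := by
  have h1 := lipRe_integral_deriv_le hL hf hab
  have hnf : ∀ x y, |(fun u => -(f u)) x - (fun u => -(f u)) y| ≤ L * |x - y| := by
    intro x y
    simp only
    rw [show -(f x) - -(f y) = f y - f x by ring, abs_sub_comm x y]
    exact hf y x
  have h2 := lipRe_integral_deriv_le hL hnf hab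
  have h2' : (∫ t in a..b, -(deriv f t)) ≤ -(f b) + f a := by
    calc (∫ t in a..b, -(deriv f t)) = ∫ t in a..b, deriv (fun u => -(f u)) t := by
          apply intervalIntegral.integral_congr; intro t _; rw [deriv.fun_neg]
      _ ≤ (fun u => -(f u)) b - (fun u => -(f u)) a := h2
      _ = -(f b) + f a := by simp only; ring
  rw [intervalIntegral.integral_neg] at h2'
  linarith


lemma lipVec_integral_deriv {n : ℕ} {y : ℝ → Euc n} {L : ℝ} (hL : 0 ≤ L)
    (hy : ∀ s t, ‖y s - y t‖ ≤ L * |s - t|) {a b : ℝ} (hab : a ≤ b) :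
    y b = y a + ∫ t in a..b, deriv y t := by
  have hmeas : Measurable (deriv y) := measurable_deriv y
  have hbdd : ∀ t, ‖deriv y t‖ ≤ L := by
    intro t
    by_cases hd : DifferentiableAt ℝ y t
    · have h := hd.hasDerivAt
      rw [hasDerivAt_iff_tendsto_slope] at h
      refine le_of_tendsto h.norm ?_
      filter_upwards [self_mem_nhdsWithin] with u hu
      have hut : u - t ≠ 0 := sub_ne_zero.2 hu
      show ‖(u - t)⁻¹ • (y u - y t)‖ ≤ L
      rw [norm_smul, norm_inv, Real.norm_eq_abs]
      rw [inv_mul_le_iff₀ (abs_pos.2 hut)]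
      calc ‖y u - y t‖ ≤ L * |u - t| := hy u t
        _ = |u - t| * L := mul_comm _ _
    · simp [deriv_zero_of_not_differentiableAt hd, hL]
  have hint : IntervalIntegrable (deriv y) volume a b := by
    rw [intervalIntegrable_iff]
    have hfin : IsFiniteMeasure (volume.restrict (Ι a b)) := by
      constructor
      rw [Measure.restrict_apply MeasurableSet.univ, Set.univ_inter]
      exact measure_Ioc_lt_top
    refine ⟨hmeas.aestronglyMeasurable.restrict, ?_⟩
    exact HasFiniteIntegral.of_bounded (C := L) (by filter_upwards with t using hbdd t)
  have hlipW : LipschitzWith L.toNNReal y := LipschitzWith.of_dist_le_mul (fun u v => by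
    rw [dist_eq_norm, Real.dist_eq, Real.coe_toNNReal L hL]; exact hy u v)
  have hdiffae : ∀ᵐ t ∂(volume : Measure ℝ), DifferentiableAt ℝ y t :=
    hlipW.ae_differentiableAt
  have key : ∫ t in a..b, deriv y t = y b - y a := by
    apply ext_inner_left ℝ
    intro p
    have hflip : ∀ u v, |(fun s => ⟪p, y s⟫) u - (fun s => ⟪p, y s⟫) v| ≤ (‖p‖ * L) * |u - v| := by
      intro u v
      simp only
      calc |⟪p, y u⟫ - ⟪p, y v⟫| = |⟪p, y u - y v⟫| := by rw [inner_sub_right]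
        _ ≤ ‖p‖ * ‖y u - y v‖ := abs_real_inner_le_norm p _
        _ ≤ ‖p‖ * (L * |u - v|) := mul_le_mul_of_nonneg_left (hy u v) (norm_nonneg p)
        _ = (‖p‖ * L) * |u - v| := by ring
    have hftc := lipRe_integral_deriv (mul_nonneg (norm_nonneg p) hL) hflip hab
    have hae : ∀ᵐ t ∂(volume : Measure ℝ), deriv (fun s => ⟪p, y s⟫) t = ⟪p, deriv y t⟫ := by
      filter_upwards [hdiffae] with t hd
      have h1 : HasDerivAt (fun s => ⟪p, y s⟫) ⟪p, deriv y t⟫ t := by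
        have h2 := (innerSL ℝ p).hasFDerivAt.comp_hasDerivAt t hd.hasDerivAt
        exact h2
      exact h1.deriv
    have heq1 : ∫ t in a..b, deriv (fun s => ⟪p, y s⟫) t = ∫ t in a..b, ⟪p, deriv y t⟫ :=
      intervalIntegral.integral_congr_ae (by filter_upwards [hae] with t ht _ using ht)
    have hintr : Integrable (deriv y) (volume.restrict (Ioc a b)) := by
      rw [intervalIntegrable_iff] at hint
      exact hint.mono_set (by rw [Set.uIoc_of_le hab])
    have hcomm : ∫ t in a..b, ⟪p, deriv y t⟫ = ⟪p, ∫ t in a..b, deriv y t⟫ := by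
      rw [intervalIntegral.integral_of_le hab, intervalIntegral.integral_of_le hab]
      have h3 := (innerSL ℝ p).integral_comp_comm hintr
      simpa using h3
    rw [← hcomm, ← heq1, hftc, inner_sub_right]
  rw [key]
  abel

set_option maxHeartbeats 2000000 in
lemma approx {n : ℕ} {K : Set (Euc n)} (hK : IsClosed K) {G : Euc n → Set (Euc n)}
    (hviab : ∀ x ∈ K, (G x ∩ contCone K x).Nonempty)
    {x₀ : Euc n} (hx₀ : x₀ ∈ K) {r M T : ℝ} (hr : 0 < r) (hM : 0 ≤ M)
    (hGbdd : ∀ z ∈ K ∩ closedBall x₀ (2*r), ∀ v ∈ G z, ‖v‖ ≤ M)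
    (hT : T = r / (M + 1))
    {δ : ℝ} (hδ0 : 0 < δ) (hδ1 : δ ≤ 1) (hδr : δ ≤ r) :
    ∃ w : ℝ → Euc n, Measurable w ∧ (∀ s, ‖w s‖ ≤ M + 1) ∧
      ∀ s ∈ Ico (0:ℝ) T, ∃ z v, z ∈ K ∧ v ∈ G z ∧ ‖v - w s‖ ≤ δ ∧
        ‖z - (x₀ + ∫ u in (0:ℝ)..s, w u)‖ ≤ (M + 2) * δ := by
  have hM1 : (0:ℝ) < M + 1 := by linarith
  have hT0 : 0 < T := by rw [hT]; positivity
  have hMT : (M + 1) * T = r := by rw [hT]; field_simp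
  have hKne : K.Nonempty := ⟨x₀, hx₀⟩
  set K₀ : Set (Euc n) := K ∩ closedBall x₀ r with hK₀
  have hx₀K₀ : x₀ ∈ K₀ := ⟨hx₀, mem_closedBall_self hr.le⟩
  have hK₀cpt : IsCompact K₀ := (isCompact_closedBall x₀ r).inter_left hK
  -- tangency data at each point of K₀
  have htang : ∀ x : K₀, ∃ q : ℝ × Euc n × Euc n, 0 < q.1 ∧ q.1 < δ/2 ∧
      q.2.1 ∈ G (x : Euc n) ∧ q.2.2 ∈ K ∧
      ‖q.2.2 - ((x : Euc n) + q.1 • q.2.1)‖ ≤ (δ/2) * q.1 := by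
    rintro ⟨x, hxK, hxB⟩
    obtain ⟨v, hvG, hvT⟩ := hviab x hxK
    obtain ⟨h, hh0, hhδ, hdist⟩ := hvT (δ/2) (by positivity)
    obtain ⟨x', hx'K, hx'd⟩ := (infDist_lt_iff hKne).1 hdist
    exact ⟨(h, v, x'), hh0, hhδ, hvG, hx'K, by
      rw [← dist_eq_norm, dist_comm]; exact hx'd.le⟩
  choose q hq0 hqδ hqG hqK hqd using htang
  -- finite subcover
  have hcov : K₀ ⊆ ⋃ x : K₀, ball (x : Euc n) ((δ/2) * (q x).1) := by
    intro x hx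
    exact mem_iUnion.2 ⟨⟨x, hx⟩, mem_ball_self (by have := hq0 ⟨x, hx⟩; positivity)⟩
  obtain ⟨tf, htf⟩ := hK₀cpt.elim_finite_subcover _
    (fun x : K₀ => isOpen_ball) hcov
  have htfne : tf.Nonempty := by
    by_contra hne
    rw [Finset.not_nonempty_iff_eq_empty] at hne
    have := htf hx₀K₀
    simp [hne] at this
  set h₀ : ℝ := tf.inf' htfne (fun x => (q x).1) with hh₀
  have hh₀pos : 0 < h₀ := by
    rw [hh₀, Finset.lt_inf'_iff]
    exact fun x _ => hq0 x
  have hh₀δ : h₀ ≤ δ := by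
    obtain ⟨i, hi⟩ := htfne
    calc h₀ ≤ (q i).1 := Finset.inf'_le _ hi
      _ ≤ δ := by have := hqδ i; linarith
  -- good step at every point of K₀
  have hstep : ∀ x ∈ K₀, ∃ p : ℝ × Euc n × Euc n × Euc n,
      h₀ ≤ p.1 ∧ p.1 ≤ δ ∧ p.2.2.1 ∈ K ∧ ‖p.2.2.1 - x‖ ≤ δ ∧ p.2.1 ∈ G p.2.2.1 ∧
      p.2.2.2 ∈ K ∧ ‖p.2.2.2 - (x + p.1 • p.2.1)‖ ≤ δ * p.1 := by
    intro x hx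
    obtain ⟨i, hitf, hxi⟩ := mem_iUnion₂.1 (htf hx)
    have hxi' : dist x (i : Euc n) < (δ/2) * (q i).1 := mem_ball.1 hxi
    refine ⟨((q i).1, (q i).2.1, (i : Euc n), (q i).2.2), Finset.inf'_le _ hitf,
      (by have := hqδ i; linarith), i.2.1, ?_, hqG i, hqK i, ?_⟩
    · rw [← dist_eq_norm, dist_comm]
      have h1 := hqδ i
      have h2 := hq0 i
      nlinarith [hxi']
    · have h1 : ‖(q i).2.2 - (x + (q i).1 • (q i).2.1)‖ ≤
          ‖(q i).2.2 - ((i : Euc n) + (q i).1 • (q i).2.1)‖ + ‖(i : Euc n) - x‖ := by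
        have : (q i).2.2 - (x + (q i).1 • (q i).2.1) =
            ((q i).2.2 - ((i : Euc n) + (q i).1 • (q i).2.1)) + ((i : Euc n) - x) := by abel
        rw [this]
        exact norm_add_le _ _
      have h2 : ‖(i : Euc n) - x‖ ≤ (δ/2) * (q i).1 := by
        rw [← dist_eq_norm, dist_comm]; exact hxi'.le
      have h3 := hqd i
      linarith
  classical
  -- total step function
  set step : Euc n → ℝ × Euc n × Euc n × Euc n := fun x =>
    if hx : x ∈ K₀ then Classical.choose (hstep x hx) else (h₀, 0, x, x) with hstepdef
  have hstep_h : ∀ x, h₀ ≤ (step x).1 ∧ (step x).1 ≤ δ := by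
    intro x
    rw [hstepdef]
    by_cases hx : x ∈ K₀
    · simp only [dif_pos hx]
      obtain ⟨a, b, _⟩ := Classical.choose_spec (hstep x hx)
      exact ⟨a, b⟩
    · simp [dif_neg hx, hh₀δ]
  have hstep_good : ∀ x (hx : x ∈ K₀),
      (step x).2.2.1 ∈ K ∧ ‖(step x).2.2.1 - x‖ ≤ δ ∧ (step x).2.1 ∈ G (step x).2.2.1 ∧
      (step x).2.2.2 ∈ K ∧ ‖(step x).2.2.2 - (x + (step x).1 • (step x).2.1)‖ ≤ δ * (step x).1 := by
    intro x hx
    rw [hstepdef]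
    simp only [dif_pos hx]
    obtain ⟨_, _, c, d, e, f, g⟩ := Classical.choose_spec (hstep x hx)
    exact ⟨c, d, e, f, g⟩
  -- recursion
  set X : ℕ → Euc n := fun i => Nat.rec x₀ (fun _ xi => (step xi).2.2.2) i with hX
  have hXsucc : ∀ i, X (i+1) = (step (X i)).2.2.2 := fun i => rfl
  set hh : ℕ → ℝ := fun i => (step (X i)).1 with hhdef
  set tt : ℕ → ℝ := fun i => ∑ j ∈ Finset.range i, hh j with httdef
  have htt0 : tt 0 = 0 := by simp [httdef]
  have httsucc : ∀ i, tt (i+1) = tt i + hh i := by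
    intro i; simp only [httdef, Finset.sum_range_succ]
  have hhpos : ∀ i, h₀ ≤ hh i ∧ hh i ≤ δ := fun i => hstep_h (X i)
  have httmono : ∀ i j, i ≤ j → tt i ≤ tt j := by
    intro i j hij
    rw [httdef]
    apply Finset.sum_le_sum_of_subset_of_nonneg (Finset.range_subset_range.2 hij)
    intro k _ _
    exact le_trans hh₀pos.le (hhpos k).1
  have httge : ∀ i : ℕ, (i : ℝ) * h₀ ≤ tt i := by
    intro i
    induction i with
    | zero => simp [htt0]
    | succ i ih =>
      rw [httsucc]
      push_cast
      have := (hhpos i).1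
      linarith
  -- invariant
  have hinv : ∀ i, tt i ≤ T → X i ∈ K ∧ ‖X i - x₀‖ ≤ (M+1) * tt i := by
    intro i
    induction i with
    | zero => intro _; rw [htt0]; simp only [mul_zero]; exact ⟨hx₀, by simp [hX]⟩
    | succ i ih =>
      intro hti
      have hti' : tt i ≤ T := by
        have := httsucc i; have := (hhpos i).1; linarith [hh₀pos]
      obtain ⟨hXK, hXnorm⟩ := ih hti'
      have hXK₀ : X i ∈ K₀ := by
        refine ⟨hXK, ?_⟩
        rw [mem_closedBall, dist_eq_norm]
        calc ‖X i - x₀‖ ≤ (M+1) * tt i := hXnorm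
          _ ≤ (M+1) * T := by nlinarith
          _ = r := hMT
      obtain ⟨hzK, hzx, hvG, hx'K, hx'd⟩ := hstep_good (X i) hXK₀
      have hvM : ‖(step (X i)).2.1‖ ≤ M := by
        apply hGbdd _ ⟨hzK, ?_⟩ _ hvG
        rw [mem_closedBall, dist_eq_norm]
        calc ‖(step (X i)).2.2.1 - x₀‖ ≤ ‖(step (X i)).2.2.1 - X i‖ + ‖X i - x₀‖ := by
              have : (step (X i)).2.2.1 - x₀ = ((step (X i)).2.2.1 - X i) + (X i - x₀) := by abel
              rw [this]; exact norm_add_le _ _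
          _ ≤ δ + r := by
              have : ‖X i - x₀‖ ≤ r := by
                calc ‖X i - x₀‖ ≤ (M+1) * tt i := hXnorm
                  _ ≤ (M+1) * T := by nlinarith
                  _ = r := hMT
              linarith
          _ ≤ 2 * r := by linarith
      have hstepnorm : ‖X (i+1) - X i‖ ≤ hh i * (M + 1) := by
        rw [hXsucc]
        calc ‖(step (X i)).2.2.2 - X i‖
            ≤ ‖(step (X i)).2.2.2 - (X i + (step (X i)).1 • (step (X i)).2.1)‖
              + ‖(step (X i)).1 • (step (X i)).2.1‖ := by
              have : (step (X i)).2.2.2 - X i =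
                  ((step (X i)).2.2.2 - (X i + (step (X i)).1 • (step (X i)).2.1))
                  + (step (X i)).1 • (step (X i)).2.1 := by abel
              rw [this]; exact norm_add_le _ _
          _ ≤ δ * hh i + hh i * M := by
              have h1 : ‖(step (X i)).1 • (step (X i)).2.1‖ ≤ hh i * M := by
                rw [norm_smul, Real.norm_eq_abs, abs_of_pos (lt_of_lt_of_le hh₀pos (hhpos i).1)]
                exact mul_le_mul_of_nonneg_left hvM (le_trans hh₀pos.le (hhpos i).1)
              have h2 := hx'd
              exact add_le_add h2 h1
          _ ≤ hh i * (M + 1) := by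
              have := (hhpos i).2
              have h3 : 0 < hh i := lt_of_lt_of_le hh₀pos (hhpos i).1
              nlinarith
      constructor
      · rw [hXsucc]; exact hx'K
      · calc ‖X (i+1) - x₀‖ ≤ ‖X (i+1) - X i‖ + ‖X i - x₀‖ := by
              have : X (i+1) - x₀ = (X (i+1) - X i) + (X i - x₀) := by abel
              rw [this]; exact norm_add_le _ _
          _ ≤ hh i * (M+1) + (M+1) * tt i := add_le_add hstepnorm hXnorm
          _ = (M+1) * tt (i+1) := by rw [httsucc]; ring
  -- the exit index N
  have hNex : ∃ i, T < tt i := by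
    obtain ⟨i, hi⟩ := exists_nat_gt (T / h₀)
    exact ⟨i, by
      have := httge i
      rw [div_lt_iff₀ hh₀pos] at hi
      linarith⟩
  set N : ℕ := Nat.find hNex with hN
  have hTN : T < tt N := Nat.find_spec hNex
  have hltN : ∀ i < N, tt i ≤ T := fun i hi => le_of_not_gt (Nat.find_min hNex hi)
  have hN1 : 1 ≤ N := by
    by_contra hcon
    push_neg at hcon
    interval_cases N
    · rw [htt0] at hTN; linarith
  -- derived good-step facts for i < N
  have hgood : ∀ i < N, (step (X i)).2.2.1 ∈ K ∧ ‖(step (X i)).2.2.1 - X i‖ ≤ δ ∧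
      (step (X i)).2.1 ∈ G (step (X i)).2.2.1 ∧ ‖(step (X i)).2.1‖ ≤ M ∧
      ‖X (i+1) - (X i + hh i • (step (X i)).2.1)‖ ≤ δ * hh i ∧
      ‖X (i+1) - X i‖ ≤ hh i * (M+1) := by
    intro i hi
    have hti := hltN i hi
    obtain ⟨hXK, hXnorm⟩ := hinv i hti
    have hXr : ‖X i - x₀‖ ≤ r := by
      calc ‖X i - x₀‖ ≤ (M+1) * tt i := hXnorm
        _ ≤ (M+1) * T := by nlinarith
        _ = r := hMT
    have hXK₀ : X i ∈ K₀ := ⟨hXK, by rw [mem_closedBall, dist_eq_norm]; exact hXr⟩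
    obtain ⟨hzK, hzx, hvG, hx'K, hx'd⟩ := hstep_good (X i) hXK₀
    have hvM : ‖(step (X i)).2.1‖ ≤ M := by
      apply hGbdd _ ⟨hzK, ?_⟩ _ hvG
      rw [mem_closedBall, dist_eq_norm]
      calc ‖(step (X i)).2.2.1 - x₀‖ ≤ ‖(step (X i)).2.2.1 - X i‖ + ‖X i - x₀‖ := by
            have : (step (X i)).2.2.1 - x₀ = ((step (X i)).2.2.1 - X i) + (X i - x₀) := by abel
            rw [this]; exact norm_add_le _ _
        _ ≤ δ + r := add_le_add hzx hXr
        _ ≤ 2 * r := by linarith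
    have hhipos : 0 < hh i := lt_of_lt_of_le hh₀pos (hhpos i).1
    refine ⟨hzK, hzx, hvG, hvM, by rw [hXsucc]; exact hx'd, ?_⟩
    rw [hXsucc]
    calc ‖(step (X i)).2.2.2 - X i‖
        ≤ ‖(step (X i)).2.2.2 - (X i + (step (X i)).1 • (step (X i)).2.1)‖
          + ‖(step (X i)).1 • (step (X i)).2.1‖ := by
          have : (step (X i)).2.2.2 - X i =
              ((step (X i)).2.2.2 - (X i + (step (X i)).1 • (step (X i)).2.1))
              + (step (X i)).1 • (step (X i)).2.1 := by abel
          rw [this]; exact norm_add_le _ _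
      _ ≤ δ * hh i + hh i * M := by
          refine add_le_add hx'd ?_
          rw [norm_smul, Real.norm_eq_abs, abs_of_pos hhipos]
          exact mul_le_mul_of_nonneg_left hvM hhipos.le
      _ ≤ hh i * (M + 1) := by
          have := (hhpos i).2
          nlinarith
  -- the derivative function
  set c : ℕ → Euc n := fun i => (hh i)⁻¹ • (X (i+1) - X i) with hcdef
  set w : ℝ → Euc n := fun s =>
    ∑ i ∈ Finset.range N, (Ico (tt i) (tt (i+1))).indicator (fun _ => c i) s with hwdef
  have hhipos : ∀ i, 0 < hh i := fun i => lt_of_lt_of_le hh₀pos (hhpos i).1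
  have hcnorm : ∀ i < N, ‖c i‖ ≤ M + 1 := by
    intro i hi
    rw [hcdef]
    simp only
    rw [norm_smul, norm_inv, Real.norm_eq_abs, abs_of_pos (hhipos i)]
    rw [inv_mul_le_iff₀ (hhipos i)]
    calc ‖X (i+1) - X i‖ ≤ hh i * (M+1) := (hgood i hi).2.2.2.2.2
      _ = hh i * (M+1) := rfl
  have hwmeas : Measurable w := by
    rw [hwdef]
    apply Finset.measurable_sum
    intro i _
    exact Measurable.indicator measurable_const measurableSet_Ico
  -- pointwise evaluation
  have hweval : ∀ i < N, ∀ s ∈ Ico (tt i) (tt (i+1)), w s = c i := by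
    intro i hi s hs
    rw [hwdef]
    simp only
    rw [Finset.sum_eq_single i]
    · rw [indicator_of_mem hs]
    · intro j hj hne
      apply indicator_of_notMem
      intro hmem
      rcases lt_or_gt_of_ne hne with hlt | hgt
      · exact absurd (lt_of_lt_of_le hmem.2 (httmono (j+1) i hlt)) (not_lt.2 hs.1)
      · exact absurd (lt_of_lt_of_le hs.2 (httmono (i+1) j hgt)) (not_lt.2 hmem.1)
    · intro hni
      exact absurd (Finset.mem_range.2 hi) hni
  have hwnorm : ∀ s, ‖w s‖ ≤ M + 1 := by
    intro s
    by_cases hex : ∃ i < N, s ∈ Ico (tt i) (tt (i+1))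
    · obtain ⟨i, hi, hs⟩ := hex
      rw [hweval i hi s hs]
      exact hcnorm i hi
    · push_neg at hex
      have : w s = 0 := by
        rw [hwdef]
        simp only
        apply Finset.sum_eq_zero
        intro j hj
        exact indicator_of_notMem (hex j (Finset.mem_range.1 hj)) _
      rw [this, norm_zero]
      linarith
  have hwint : ∀ a b : ℝ, IntervalIntegrable w volume a b := by
    intro a b
    rw [intervalIntegrable_iff]
    have hfin : IsFiniteMeasure (volume.restrict (Ι a b)) := by
      constructor
      rw [Measure.restrict_apply MeasurableSet.univ, Set.univ_inter]
      exact measure_Ioc_lt_top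
    exact ⟨hwmeas.aestronglyMeasurable.restrict,
      HasFiniteIntegral.of_bounded (C := M+1) (by filter_upwards with s using hwnorm s)⟩
  -- node values
  have hnode : ∀ i ≤ N, (∫ u in (0:ℝ)..(tt i), w u) = X i - x₀ := by
    intro i hi
    induction i with
    | zero => simp [htt0, hX]
    | succ i ih =>
      have hi' : i ≤ N := le_trans (Nat.le_succ i) hi
      have hiN : i < N := lt_of_lt_of_le (Nat.lt_succ_self i) hi
      have hsplit : (∫ u in (0:ℝ)..(tt (i+1)), w u) =
          (∫ u in (0:ℝ)..(tt i), w u) + ∫ u in (tt i)..(tt (i+1)), w u :=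
        (intervalIntegral.integral_add_adjacent_intervals (hwint 0 (tt i))
          (hwint (tt i) (tt (i+1)))).symm
      have hconst : (∫ u in (tt i)..(tt (i+1)), w u) = X (i+1) - X i := by
        have httle : tt i ≤ tt (i+1) := httmono i (i+1) (Nat.le_succ i)
        have hae : ∀ᵐ u ∂(volume : Measure ℝ), u ∈ Ι (tt i) (tt (i+1)) → w u = c i := by
          have hsing : (volume : Measure ℝ) {tt (i+1)} = 0 := measure_singleton _
          filter_upwards [compl_mem_ae_iff.2 hsing] with u hu hmem
          rw [uIoc_of_le httle] at hmem
          have hune : u ≠ tt (i+1) := by simpa using hu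
          exact hweval i hiN u ⟨hmem.1.le, lt_of_le_of_ne hmem.2 hune⟩
        calc (∫ u in (tt i)..(tt (i+1)), w u) = ∫ _ in (tt i)..(tt (i+1)), c i :=
              intervalIntegral.integral_congr_ae hae
          _ = (tt (i+1) - tt i) • c i := intervalIntegral.integral_const _
          _ = hh i • c i := by rw [httsucc]; congr 1; ring
          _ = X (i+1) - X i := by
              rw [hcdef]
              simp only
              rw [smul_smul, mul_inv_cancel₀ (ne_of_gt (hhipos i)), one_smul]
      rw [hsplit, ih hi', hconst]
      abel
  -- final property
  refine ⟨w, hwmeas, hwnorm, ?_⟩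
  rintro s ⟨hs0, hsT⟩
  have hfind : ∃ j, s < tt j := ⟨N, lt_trans hsT hTN⟩
  set j₀ : ℕ := Nat.find hfind with hj₀
  have hj₀spec : s < tt j₀ := Nat.find_spec hfind
  have hj₀pos : 1 ≤ j₀ := by
    by_contra hcon
    push_neg at hcon
    interval_cases j₀
    · rw [htt0] at hj₀spec; linarith
  set i : ℕ := j₀ - 1 with hidef
  have hisucc : i + 1 = j₀ := Nat.succ_pred_eq_of_pos hj₀pos
  have hile : tt i ≤ s := by
    have := Nat.find_min hfind (m := i) (by omega)
    push_neg at this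
    exact this
  have hilt : s < tt (i+1) := by rw [hisucc]; exact hj₀spec
  have hiN : i < N := by
    by_contra hcon
    push_neg at hcon
    have := httmono N i hcon
    linarith [hTN]
  obtain ⟨hzK, hzx, hvG, hvM, hx'd, hstepn⟩ := hgood i hiN
  refine ⟨(step (X i)).2.2.1, (step (X i)).2.1, hzK, hvG, ?_, ?_⟩
  · -- ‖v - w s‖ ≤ δ
    rw [hweval i hiN s ⟨hile, hilt⟩]
    have hkey : hh i • ((step (X i)).2.1 - c i) = (X i + hh i • (step (X i)).2.1) - X (i+1) := by
      rw [hcdef]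
      simp only
      rw [smul_sub (hh i), smul_smul, mul_inv_cancel₀ (ne_of_gt (hhipos i)), one_smul]
      abel
    have h1 : ‖(step (X i)).2.1 - c i‖ = (hh i)⁻¹ * ‖hh i • ((step (X i)).2.1 - c i)‖ := by
      rw [norm_smul, Real.norm_eq_abs, abs_of_pos (hhipos i)]
      field_simp
      rw [mul_div_assoc, div_self (ne_of_gt (hhipos i)), mul_one]
    have h2 : ‖(step (X i)).2.1 - c i‖ ≤ (hh i)⁻¹ * (δ * hh i) := by
      rw [h1, hkey, norm_sub_rev]
      exact mul_le_mul_of_nonneg_left hx'd (inv_nonneg.2 (hhipos i).le)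
    calc ‖(step (X i)).2.1 - c i‖ ≤ (hh i)⁻¹ * (δ * hh i) := h2
      _ = δ := by
          field_simp
          rw [div_self (ne_of_gt (hhipos i))]
  · -- distance from z to the trajectory
    have hYs : ‖X i - (x₀ + ∫ u in (0:ℝ)..s, w u)‖ ≤ (M+1) * δ := by
      have hsub : (∫ u in (0:ℝ)..s, w u) - (∫ u in (0:ℝ)..(tt i), w u)
          = ∫ u in (tt i)..s, w u :=
        intervalIntegral.integral_interval_sub_left (hwint 0 s) (hwint 0 (tt i))
      have hni := hnode i hiN.le
      have hbound : ‖∫ u in (tt i)..s, w u‖ ≤ (M+1) * |s - tt i| := by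
        apply intervalIntegral.norm_integral_le_of_norm_le_const
        intro u _
        exact hwnorm u
      have hsd : |s - tt i| ≤ δ := by
        rw [abs_of_nonneg (by linarith)]
        have h1 := httsucc i
        have h2 := (hhpos i).2
        linarith
      have heq : X i - (x₀ + ∫ u in (0:ℝ)..s, w u)
          = -(∫ u in (tt i)..s, w u) := by
        rw [← hsub, hni]
        abel
      rw [heq, norm_neg]
      calc ‖∫ u in (tt i)..s, w u‖ ≤ (M+1) * |s - tt i| := hbound
        _ ≤ (M+1) * δ := by nlinarith [abs_nonneg (s - tt i)]
    calc ‖(step (X i)).2.2.1 - (x₀ + ∫ u in (0:ℝ)..s, w u)‖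
        ≤ ‖(step (X i)).2.2.1 - X i‖ + ‖X i - (x₀ + ∫ u in (0:ℝ)..s, w u)‖ := by
          have : (step (X i)).2.2.1 - (x₀ + ∫ u in (0:ℝ)..s, w u)
              = ((step (X i)).2.2.1 - X i) + (X i - (x₀ + ∫ u in (0:ℝ)..s, w u)) := by abel
          rw [this]; exact norm_add_le _ _
      _ ≤ δ + (M+1) * δ := add_le_add hzx hYs
      _ = (M + 2) * δ := by ring

lemma inter_subset_G {n : ℕ} {K : Set (Euc n)} {G : Euc n → Set (Euc n)}
    (husc : USCOn K G) (hcpt : ∀ x ∈ K, IsCompact (G x)) (hconv : ∀ x ∈ K, Convex ℝ (G x))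
    {x : Euc n} (hx : x ∈ K) {wv : Euc n}
    (hwv : ∀ η > (0:ℝ), wv ∈ closure (convexHull ℝ
      {u : Euc n | ∃ z v, z ∈ K ∧ ‖z - x‖ ≤ η ∧ v ∈ G z ∧ ‖v - u‖ ≤ η})) :
    wv ∈ G x := by
  by_contra hcon
  obtain ⟨f, c₁, c₂, hfG, hc, hfw⟩ := geometric_hahn_banach_compact_closed
    (hconv x hx) (hcpt x hx) (convex_singleton wv) isClosed_singleton
    (disjoint_singleton_right.2 hcon)
  obtain ⟨U, hU, hUG⟩ := husc x hx (f ⁻¹' Iio c₁) (isOpen_Iio.preimage f.continuous)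
    (fun v hv => hfG v hv)
  obtain ⟨ρ, hρ0, hρU⟩ := Metric.nhds_basis_closedBall.mem_iff.1 hU
  set η : ℝ := min ρ ((c₂ - c₁) / (2 * (‖f‖ + 1))) with hη
  have hc21 : 0 < c₂ - c₁ := by linarith
  have hη0 : 0 < η := by
    apply lt_min hρ0
    positivity
  have hhalf : IsClosed {u : Euc n | f u ≤ c₁ + ‖f‖ * η} :=
    isClosed_le f.continuous continuous_const
  have hhalfconv : Convex ℝ {u : Euc n | f u ≤ c₁ + ‖f‖ * η} :=
    convex_halfSpace_le (LinearMap.isLinear (f : Euc n →ₗ[ℝ] ℝ)) _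
  have hsub : {u : Euc n | ∃ z v, z ∈ K ∧ ‖z - x‖ ≤ η ∧ v ∈ G z ∧ ‖v - u‖ ≤ η}
      ⊆ {u : Euc n | f u ≤ c₁ + ‖f‖ * η} := by
    rintro u ⟨z, v, hzK, hzx, hvG, hvu⟩
    have hzU : z ∈ U := hρU (by
      rw [mem_closedBall, dist_eq_norm]
      exact le_trans hzx (min_le_left _ _))
    have hfv : f v < c₁ := hUG z ⟨hzU, hzK⟩ hvG
    have hfuv : f u - f v = f (u - v) := by rw [map_sub]
    have hb : |f (u - v)| ≤ ‖f‖ * η := by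
      calc |f (u - v)| ≤ ‖f‖ * ‖u - v‖ := f.le_opNorm _
        _ ≤ ‖f‖ * η := by
            apply mul_le_mul_of_nonneg_left _ (norm_nonneg f)
            rw [norm_sub_rev]
            exact hvu
    have := abs_le.1 hb
    simp only [mem_setOf_eq]
    linarith
  have hCsub : closure (convexHull ℝ
      {u : Euc n | ∃ z v, z ∈ K ∧ ‖z - x‖ ≤ η ∧ v ∈ G z ∧ ‖v - u‖ ≤ η})
      ⊆ {u : Euc n | f u ≤ c₁ + ‖f‖ * η} :=
    closure_minimal (convexHull_min hsub hhalfconv) hhalf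
  have hwin := hCsub (hwv η hη0)
  have hfw' : c₂ < f wv := hfw wv rfl
  have hηb : ‖f‖ * η ≤ (c₂ - c₁) / 2 := by
    have h1 : η ≤ (c₂ - c₁) / (2 * (‖f‖ + 1)) := min_le_right _ _
    have h2 : ‖f‖ * η ≤ (‖f‖ + 1) * η := by nlinarith [norm_nonneg f, hη0]
    have h3 : (‖f‖ + 1) * η ≤ (‖f‖ + 1) * ((c₂ - c₁) / (2 * (‖f‖ + 1))) :=
      mul_le_mul_of_nonneg_left h1 (by positivity)
    have h4 : (‖f‖ + 1) * ((c₂ - c₁) / (2 * (‖f‖ + 1))) = (c₂ - c₁) / 2 := by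
      field_simp
    linarith
  simp only [mem_setOf_eq] at hwin
  linarith

set_option maxHeartbeats 2000000 in
theorem stmt6 {n : ℕ} (K : Set (Euc n)) (hK : IsClosed K) (G : Euc n → Set (Euc n))
    (husc : USCOn K G)
    (hcpt : ∀ x ∈ K, IsCompact (G x))
    (hconv : ∀ x ∈ K, Convex ℝ (G x))
    (hviab : ∀ x ∈ K, (G x ∩ contCone K x).Nonempty) :
    ∀ x₀ ∈ K, ∃ ε : ℝ, 0 < ε ∧ ∃ y y' : ℝ → Euc n,
      y 0 = x₀ ∧
      (∀ t ∈ Set.Ico (0:ℝ) ε, y t ∈ K) ∧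
      (∀ t ∈ Set.Ico (0:ℝ) ε, IntervalIntegrable y' MeasureTheory.volume 0 t ∧
        y t = x₀ + ∫ s in (0:ℝ)..t, y' s) ∧
      (∀ᵐ t ∂(MeasureTheory.volume.restrict (Set.Ioo (0:ℝ) ε)), y' t ∈ G (y t))  := by
  intro x₀ hx₀
  classical
  have hKne : K.Nonempty := ⟨x₀, hx₀⟩
  -- a bound for G near x₀
  obtain ⟨M₀, hM₀⟩ := (hcpt x₀ hx₀).isBounded.subset_closedBall 0
  set M : ℝ := max M₀ 0 + 1 with hMdef
  have hM0 : 0 ≤ M := by positivity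
  have hGx₀V : G x₀ ⊆ ball (0 : Euc n) M := by
    intro v hv
    have := hM₀ hv
    rw [mem_closedBall, dist_zero_right] at this
    rw [mem_ball, dist_zero_right]
    calc ‖v‖ ≤ M₀ := this
      _ ≤ max M₀ 0 := le_max_left _ _
      _ < M := by rw [hMdef]; linarith
  obtain ⟨U, hU, hUG⟩ := husc x₀ hx₀ (ball 0 M) isOpen_ball hGx₀V
  obtain ⟨ρ, hρ0, hρU⟩ := Metric.nhds_basis_closedBall.mem_iff.1 hU
  set r : ℝ := ρ / 2 with hrdef
  have hr : 0 < r := by positivity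
  have hGbdd : ∀ z ∈ K ∩ closedBall x₀ (2*r), ∀ v ∈ G z, ‖v‖ ≤ M := by
    rintro z ⟨hzK, hzB⟩ v hv
    have hzU : z ∈ U := hρU (by
      rw [mem_closedBall] at hzB ⊢
      calc dist z x₀ ≤ 2 * r := hzB
        _ = ρ := by rw [hrdef]; ring)
    have := hUG z ⟨hzU, hzK⟩ hv
    rw [mem_ball, dist_zero_right] at this
    exact this.le
  set T : ℝ := r / (M + 1) with hTdef
  have hM1 : (0:ℝ) < M + 1 := by linarith
  have hT0 : 0 < T := by rw [hTdef]; positivity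
  -- the sequence of approximate solutions
  set δ : ℕ → ℝ := fun k => min 1 r / (k + 1) with hδdef
  have hδpos : ∀ k, 0 < δ k := by
    intro k
    rw [hδdef]
    have : (0:ℝ) < min 1 r := lt_min one_pos hr
    positivity
  have hδ1 : ∀ k, δ k ≤ 1 := by
    intro k
    rw [hδdef]
    calc min 1 r / (k+1) ≤ min 1 r / 1 := by
          apply div_le_div_of_nonneg_left (le_of_lt (lt_min one_pos hr)) one_pos
          push_cast; linarith
      _ = min 1 r := div_one _
      _ ≤ 1 := min_le_left _ _
  have hδr : ∀ k, δ k ≤ r := by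
    intro k
    rw [hδdef]
    calc min 1 r / (k+1) ≤ min 1 r / 1 := by
          apply div_le_div_of_nonneg_left (le_of_lt (lt_min one_pos hr)) one_pos
          push_cast; linarith
      _ = min 1 r := div_one _
      _ ≤ r := min_le_right _ _
  have hδ0 : Tendsto δ atTop (𝓝 0) := by
    rw [hδdef]
    have h1 : Tendsto (fun k : ℕ => 1 / ((k:ℝ) + 1)) atTop (𝓝 0) :=
      tendsto_one_div_add_atTop_nhds_zero_nat
    have := h1.const_mul (min 1 r)
    rw [mul_zero] at this
    apply this.congr
    intro k
    field_simp
  have happrox : ∀ k : ℕ, ∃ w : ℝ → Euc n, Measurable w ∧ (∀ s, ‖w s‖ ≤ M + 1) ∧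
      ∀ s ∈ Ico (0:ℝ) T, ∃ z v, z ∈ K ∧ v ∈ G z ∧ ‖v - w s‖ ≤ δ k ∧
        ‖z - (x₀ + ∫ u in (0:ℝ)..s, w u)‖ ≤ (M + 2) * δ k := fun k =>
    approx hK hviab hx₀ hr hM0 hGbdd hTdef (hδpos k) (hδ1 k) (hδr k)
  choose W hWmeas hWnorm hWprop using happrox
  have hWint : ∀ k (a b : ℝ), IntervalIntegrable (W k) volume a b := by
    intro k a b
    rw [intervalIntegrable_iff]
    have hfin : IsFiniteMeasure (volume.restrict (Ι a b)) := by
      constructor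
      rw [Measure.restrict_apply MeasurableSet.univ, Set.univ_inter]
      exact measure_Ioc_lt_top
    exact ⟨(hWmeas k).aestronglyMeasurable.restrict,
      HasFiniteIntegral.of_bounded (C := M+1) (by filter_upwards with s using hWnorm k s)⟩
  set Y : ℕ → ℝ → Euc n := fun k τ => x₀ + ∫ u in (0:ℝ)..τ, W k u with hYdef
  have hYlip : ∀ k (s t : ℝ), ‖Y k s - Y k t‖ ≤ (M+1) * |s - t| := by
    intro k s t
    have h1 : Y k s - Y k t = ∫ u in t..s, W k u := by
      rw [hYdef]
      simp only
      rw [add_sub_add_left_eq_sub]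
      exact intervalIntegral.integral_interval_sub_left (hWint k 0 s) (hWint k 0 t)
    rw [h1]
    exact intervalIntegral.norm_integral_le_of_norm_le_const (fun u _ => hWnorm k u)
  have hY0 : ∀ k, Y k 0 = x₀ := by
    intro k
    rw [hYdef]
    simp
  -- ultrafilter limit
  set 𝒰 : Ultrafilter ℕ := Ultrafilter.of atTop with h𝒰def
  have h𝒰 : (𝒰 : Filter ℕ) ≤ atTop := Ultrafilter.of_le atTop
  have hlim : ∀ τ : ℝ, ∃ yy : Euc n, Tendsto (fun k => Y k τ) 𝒰 (𝓝 yy) := by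
    intro τ
    have hmem : ∀ k, Y k τ ∈ closedBall x₀ ((M+1) * |τ|) := by
      intro k
      rw [mem_closedBall, dist_eq_norm]
      have := hYlip k τ 0
      rw [hY0 k] at this
      simpa using this
    have hcb : IsCompact (closedBall x₀ ((M+1)*|τ|)) := isCompact_closedBall _ _
    obtain ⟨yy, _, h⟩ := hcb.ultrafilter_le_nhds (𝒰.map (fun k => Y k τ)) (by
      rw [Ultrafilter.coe_map, Filter.le_principal_iff]
      apply Filter.mem_map.2
      filter_upwards with k using hmem k)
    exact ⟨yy, by rwa [Ultrafilter.coe_map] at h⟩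
  choose y hy using hlim
  have hy0 : y 0 = x₀ := by
    have h1 : Tendsto (fun k => Y k 0) 𝒰 (𝓝 x₀) := by
      apply tendsto_const_nhds.congr
      intro k
      exact (hY0 k).symm
    exact tendsto_nhds_unique (hy 0) h1
  have hylip : ∀ s t : ℝ, ‖y s - y t‖ ≤ (M+1) * |s - t| := by
    intro s t
    have h1 : Tendsto (fun k => ‖Y k s - Y k t‖) 𝒰 (𝓝 ‖y s - y t‖) :=
      ((hy s).sub (hy t)).norm
    exact le_of_tendsto h1 (by filter_upwards with k using hYlip k s t)
  have hyK : ∀ τ ∈ Ico (0:ℝ) T, y τ ∈ K := by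
    rintro τ hτ
    have h1 : Tendsto (fun k => infDist (Y k τ) K) 𝒰 (𝓝 (infDist (y τ) K)) :=
      ((continuous_infDist_pt K).tendsto _).comp (hy τ)
    have h2 : Tendsto (fun k => infDist (Y k τ) K) atTop (𝓝 0) := by
      apply squeeze_zero (fun k => infDist_nonneg) (g := fun k => (M+2) * δ k)
      · intro k
        obtain ⟨z, v, hzK, _, _, hzY⟩ := hWprop k τ hτ
        calc infDist (Y k τ) K ≤ dist (Y k τ) z := infDist_le_dist_of_mem hzK
          _ ≤ (M+2) * δ k := by rw [dist_eq_norm, norm_sub_rev]; exact hzY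
      · have := hδ0.const_mul (M+2)
        rwa [mul_zero] at this
    have h3 : Tendsto (fun k => infDist (Y k τ) K) 𝒰 (𝓝 0) := h2.mono_left h𝒰
    have h4 : infDist (y τ) K = 0 := tendsto_nhds_unique h1 h3
    rw [← (hK.mem_iff_infDist_zero hKne)] at h4
    exact h4
  -- differentiability
  have hylipW : LipschitzWith (M+1).toNNReal y := LipschitzWith.of_dist_le_mul (fun u v => by
    rw [dist_eq_norm, Real.dist_eq, Real.coe_toNNReal _ hM1.le]
    exact hylip u v)
  have hydiff : ∀ᵐ t ∂(volume : Measure ℝ), DifferentiableAt ℝ y t :=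
    hylipW.ae_differentiableAt
  -- derivative bound and integrability
  have hder_meas : Measurable (deriv y) := measurable_deriv y
  have hder_bdd : ∀ t, ‖deriv y t‖ ≤ M + 1 := by
    intro t
    by_cases hd : DifferentiableAt ℝ y t
    · have h := hd.hasDerivAt
      rw [hasDerivAt_iff_tendsto_slope] at h
      refine le_of_tendsto h.norm ?_
      filter_upwards [self_mem_nhdsWithin] with u hu
      have hut : u - t ≠ 0 := sub_ne_zero.2 hu
      show ‖(u - t)⁻¹ • (y u - y t)‖ ≤ M + 1
      rw [norm_smul, norm_inv, Real.norm_eq_abs]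
      rw [inv_mul_le_iff₀ (abs_pos.2 hut)]
      calc ‖y u - y t‖ ≤ (M+1) * |u - t| := hylip u t
        _ = |u - t| * (M+1) := mul_comm _ _
    · simp only [deriv_zero_of_not_differentiableAt hd, norm_zero]
      linarith
  have hder_int : ∀ a b : ℝ, IntervalIntegrable (deriv y) volume a b := by
    intro a b
    rw [intervalIntegrable_iff]
    have hfin : IsFiniteMeasure (volume.restrict (Ι a b)) := by
      constructor
      rw [Measure.restrict_apply MeasurableSet.univ, Set.univ_inter]
      exact measure_Ioc_lt_top
    exact ⟨hder_meas.aestronglyMeasurable.restrict,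
      HasFiniteIntegral.of_bounded (C := M+1) (by filter_upwards with s using hder_bdd s)⟩
  -- the key pointwise differential inclusion
  have hmain : ∀ t ∈ Ioo (0:ℝ) T, DifferentiableAt ℝ y t → deriv y t ∈ G (y t) := by
    rintro t ⟨ht0, htT⟩ hd
    apply inter_subset_G husc hcpt hconv (hyK t ⟨ht0.le, htT⟩)
    intro η hη
    set A := {u : Euc n | ∃ z v, z ∈ K ∧ ‖z - y t‖ ≤ η ∧ v ∈ G z ∧ ‖v - u‖ ≤ η} with hA
    set C := closure (convexHull ℝ A) with hC
    have hCc : IsClosed C := isClosed_closure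
    have hCconv : Convex ℝ C := (convex_convexHull ℝ A).closure
    -- difference quotients lie in C
    have hquot : ∀ h : ℝ, 0 < h → t + h < T → (M+1)*h ≤ η/2 →
        h⁻¹ • (y (t+h) - y t) ∈ C := by
      intro h hh0 hhT hhη
      have hμIoc : (volume (Ioc t (t+h))) = ENNReal.ofReal h := by
        rw [Real.volume_Ioc]
        congr 1
        ring
      have hk : ∀ᶠ k in (𝒰 : Filter ℕ), h⁻¹ • (Y k (t+h) - Y k t) ∈ C := by
        have he1 : Tendsto (fun k => (M+2) * δ k) 𝒰 (𝓝 0) := by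
          have := hδ0.const_mul (M+2)
          rw [mul_zero] at this
          exact this.mono_left h𝒰
        have he2 : Tendsto (fun k => ‖Y k t - y t‖) 𝒰 (𝓝 0) := by
          have h5 : Tendsto (fun k => Y k t - y t) 𝒰 (𝓝 (y t - y t)) :=
            (hy t).sub tendsto_const_nhds
          rw [sub_self] at h5
          simpa using h5.norm
        have he3 : Tendsto (fun k => (M+2) * δ k + ‖Y k t - y t‖) 𝒰 (𝓝 0) := by
          have := he1.add he2
          rwa [add_zero] at this
        have he4 : ∀ᶠ k in (𝒰 : Filter ℕ), (M+2) * δ k + ‖Y k t - y t‖ < η/2 := by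
          have : Iio (η/2) ∈ 𝓝 (0:ℝ) := Iio_mem_nhds (by positivity)
          exact he3 this
        filter_upwards [he4] with k hk4
        -- membership of W k s in A for s ∈ Ioc t (t+h)
        have hmemA : ∀ s ∈ Ioc t (t+h), W k s ∈ A := by
          rintro s ⟨hst, hsth⟩
          have hsIco : s ∈ Ico (0:ℝ) T := ⟨by linarith, by linarith⟩
          obtain ⟨z, v, hzK, hvG, hvW, hzY⟩ := hWprop k s hsIco
          refine ⟨z, v, hzK, ?_, hvG, ?_⟩
          · calc ‖z - y t‖ ≤ ‖z - Y k s‖ + ‖Y k s - Y k t‖ + ‖Y k t - y t‖ := by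
                  have : z - y t = (z - Y k s) + (Y k s - Y k t) + (Y k t - y t) := by abel
                  rw [this]
                  exact norm_add₃_le
              _ ≤ (M+2) * δ k + (M+1) * |s - t| + ‖Y k t - y t‖ :=
                  add_le_add (add_le_add hzY (hYlip k s t)) le_rfl
              _ ≤ (M+2) * δ k + (M+1) * h + ‖Y k t - y t‖ := by
                  have h6 : |s - t| ≤ h := by rw [abs_of_nonneg (by linarith)]; linarith
                  nlinarith [mul_le_mul_of_nonneg_left h6 hM1.le]
              _ ≤ η/2 + η/2 := by linarith
              _ = η := by ring
          · have hδη : δ k ≤ η := by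
              have h1 : δ k ≤ (M+2) * δ k := by
                nlinarith [mul_nonneg (by linarith : (0:ℝ) ≤ M + 1) (hδpos k).le]
              have h2 : (0:ℝ) ≤ ‖Y k t - y t‖ := norm_nonneg _
              have h3 : (M+2) * δ k < η/2 := by linarith
              have h4 : δ k < η/2 := lt_of_le_of_lt h1 h3
              exact le_trans h4.le (by linarith : η/2 ≤ η)
            exact le_trans hvW hδη
        -- the average of W k over Ioc t (t+h) lies in C
        have havg : (⨍ s in Ioc t (t+h), W k s ∂(volume : Measure ℝ)) ∈ C := by
          apply hCconv.set_average_mem hCc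
          · rw [hμIoc]
            simp [ne_of_gt (ENNReal.ofReal_pos.2 hh0)]
          · rw [hμIoc]; exact ENNReal.ofReal_ne_top
          · filter_upwards [ae_restrict_mem measurableSet_Ioc] with s hs
            exact subset_closure (subset_convexHull ℝ A (hmemA s hs))
          · rw [IntegrableOn]
            have hfin : IsFiniteMeasure (volume.restrict (Ioc t (t+h))) := by
              constructor
              rw [Measure.restrict_apply MeasurableSet.univ, Set.univ_inter]
              exact measure_Ioc_lt_top
            exact ⟨(hWmeas k).aestronglyMeasurable.restrict,
              HasFiniteIntegral.of_bounded (C := M+1)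
                (by filter_upwards with s using hWnorm k s)⟩
        have haeq : (⨍ s in Ioc t (t+h), W k s ∂(volume : Measure ℝ))
            = h⁻¹ • (Y k (t+h) - Y k t) := by
          rw [setAverage_eq, measureReal_def, hμIoc, ENNReal.toReal_ofReal hh0.le]
          congr 1
          rw [hYdef]
          simp only
          rw [add_sub_add_left_eq_sub]
          rw [intervalIntegral.integral_interval_sub_left (hWint k 0 (t+h)) (hWint k 0 t)]
          rw [intervalIntegral.integral_of_le (by linarith : t ≤ t + h)]
        rwa [haeq] at havg
      have htendq : Tendsto (fun k => h⁻¹ • (Y k (t+h) - Y k t)) 𝒰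
          (𝓝 (h⁻¹ • (y (t+h) - y t))) :=
        ((hy (t+h)).sub (hy t)).const_smul _
      exact hCc.mem_of_tendsto htendq hk
    -- pass to the limit h → 0⁺
    have hderiv : Tendsto (fun h : ℝ => h⁻¹ • (y (t+h) - y t)) (𝓝[>] 0)
        (𝓝 (deriv y t)) := by
      have h := hd.hasDerivAt
      rw [hasDerivAt_iff_tendsto_slope] at h
      have hmap : Tendsto (fun h : ℝ => t + h) (𝓝[>] (0:ℝ)) (𝓝[≠] t) := by
        apply tendsto_nhdsWithin_of_tendsto_nhds_of_eventually_within
        · have hcnt : Continuous (fun h : ℝ => t + h) := continuous_const.add continuous_id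
          have h7 : Tendsto (fun h : ℝ => t + h) (𝓝 (0:ℝ)) (𝓝 t) := by
            have := hcnt.tendsto (0:ℝ)
            simpa using this
          exact h7.mono_left nhdsWithin_le_nhds
        · filter_upwards [self_mem_nhdsWithin] with u hu
          simp only [Set.mem_compl_iff, Set.mem_singleton_iff]
          have h0u : (0:ℝ) < u := hu
          intro hcontra
          have : t + u = t := hcontra
          linarith
      have := h.comp hmap
      apply this.congr
      intro u
      simp only [Function.comp_apply, slope, vsub_eq_sub]
      rw [show t + u - t = u from by ring]
    apply hCc.mem_of_tendsto hderiv
    have hIoo : Ioo (0:ℝ) (min (T - t) (η / (2 * (M+1)))) ∈ 𝓝[>] (0:ℝ) := by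
      apply Ioo_mem_nhdsGT_of_mem
      exact ⟨le_refl 0, lt_min (by linarith) (by positivity)⟩
    filter_upwards [hIoo] with h hh
    apply hquot h hh.1
    · have := lt_of_lt_of_le hh.2 (min_le_left _ _)
      linarith
    · have := le_of_lt (lt_of_lt_of_le hh.2 (min_le_right _ _))
      calc (M+1) * h ≤ (M+1) * (η / (2 * (M+1))) :=
            mul_le_mul_of_nonneg_left this hM1.le
        _ = η/2 := by
            field_simp
  -- assemble the answer
  refine ⟨T, hT0, y, deriv y, hy0, hyK, ?_, ?_⟩
  · intro t ht
    refine ⟨hder_int 0 t, ?_⟩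
    have := lipVec_integral_deriv hM1.le hylip ht.1
    rw [this, hy0]
  · have h1 : ∀ᵐ t ∂(volume.restrict (Ioo (0:ℝ) T)), DifferentiableAt ℝ y t :=
      ae_restrict_of_ae hydiff
    have h2 : ∀ᵐ t ∂(volume.restrict (Ioo (0:ℝ) T)), t ∈ Ioo (0:ℝ) T :=
      ae_restrict_mem measurableSet_Ioo
    filter_upwards [h1, h2] with t hdt hmt
    exact hmain t hmt hdt
end
end

section
/- (Rockafellar-type lemma) Let W : ℝⁿ → ℝ ∪ {+∞} be lower semicontinuous, x ∈ dom(W), and let (p,0) ∈ [T_{Epi(W)}(x, W(x))]⁻ with p ≠ 0. Then there exist points x_ε → x (as ε → 0+) with W(x_ε) → W(x) and vectors (p_ε, q_ε) ∈ [T_{Epi(W)}(x_ε, W(x_ε))]⁻ converging to (p,0) such that q_ε < 0 for every ε > 0. -/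
open Filter Topology Metric Set
open scoped RealInnerProductSpace

noncomputable section

def eepi {n : ℕ} (W : Euc n → EReal) : Set (Euc n × ℝ) :=
  {p | W p.1 ≤ (p.2 : EReal)}

def negPolarP {n : ℕ} (T : Set (Euc n × ℝ)) : Set (Euc n × ℝ) :=
  {v | ∀ w ∈ T, ⟪v.1, w.1⟫ + v.2 * w.2 ≤ (0:ℝ)}

set_option maxHeartbeats 2000000

namespace Stmt9Aux

variable {n : ℕ}

lemma isClosed_eepi (W : Euc n → EReal) (hW : LowerSemicontinuous W) : IsClosed (eepi W) := by
  rw [← isOpen_compl_iff, isOpen_iff_mem_nhds]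
  intro z hz
  simp only [Set.mem_compl_iff, eepi, Set.mem_setOf_eq, not_le] at hz
  obtain ⟨c, hc1, hc2⟩ := EReal.lt_iff_exists_real_btwn.1 hz
  have hU : IsOpen {y : Euc n | (c : EReal) < W y} := hW.isOpen_preimage c
  have hopen : IsOpen {w : Euc n × ℝ | (c : EReal) < W w.1 ∧ w.2 < c} := by
    exact (hU.preimage continuous_fst).inter (isOpen_Iio.preimage continuous_snd)
  refine Filter.mem_of_superset (hopen.mem_nhds ⟨hc2, by exact_mod_cast hc1⟩) ?_
  intro w hw
  simp only [Set.mem_compl_iff, eepi, Set.mem_setOf_eq, not_le]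
  exact lt_trans (by exact_mod_cast hw.2) hw.1

lemma sqrt_expand {τ : ℝ} (hτ : 0 < τ) (v w : Euc n) (hw : ‖w‖ ≤ τ/2) :
    Real.sqrt (‖v + w‖^2 + τ^2) ≤
      Real.sqrt (‖v‖^2 + τ^2) + ⟪v, w⟫ / Real.sqrt (‖v‖^2 + τ^2) + ‖w‖^2 / τ := by
  set F := Real.sqrt (‖v‖^2 + τ^2) with hF
  have hF2 : F^2 = ‖v‖^2 + τ^2 := Real.sq_sqrt (by positivity)
  have hFτ : τ ≤ F := by
    have h := Real.sqrt_le_sqrt (show τ^2 ≤ ‖v‖^2 + τ^2 by nlinarith [sq_nonneg ‖v‖])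
    rwa [Real.sqrt_sq hτ.le] at h
  have hF0 : 0 < F := lt_of_lt_of_le hτ hFτ
  have hvF : ‖v‖ ≤ F := by
    have h := Real.sqrt_le_sqrt (show ‖v‖^2 ≤ ‖v‖^2 + τ^2 by nlinarith)
    rwa [Real.sqrt_sq (norm_nonneg v)] at h
  have hI : |⟪v, w⟫| ≤ ‖v‖ * ‖w‖ := abs_real_inner_le_norm v w
  set G := ⟪v, w⟫ / F with hG
  set N := ‖w‖ with hN
  have hN0 : 0 ≤ N := norm_nonneg w
  have hGF : G * F = ⟪v, w⟫ := div_mul_cancel₀ _ hF0.ne'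
  have hGN : |G| ≤ N := by
    rw [hG, abs_div, abs_of_pos hF0, div_le_iff₀ hF0]
    calc |⟪v, w⟫| ≤ ‖v‖ * N := hI
    _ ≤ N * F := by nlinarith
  set H := N^2 / τ with hH
  have hH0 : 0 ≤ H := by positivity
  have hτH : τ * H = N^2 := by rw [hH]; field_simp
  have hFH : N^2 ≤ F * H := by nlinarith
  have hGlb : -N ≤ G := neg_le_of_abs_le hGN
  have hGub : G ≤ N := le_of_abs_le hGN
  have hRpos : 0 ≤ F + G + H := by nlinarith
  calc Real.sqrt (‖v + w‖^2 + τ^2) ≤ Real.sqrt ((F + G + H)^2) := by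
        apply Real.sqrt_le_sqrt
        have hexp : ‖v + w‖^2 = ‖v‖^2 + 2 * ⟪v, w⟫ + ‖w‖^2 := norm_add_sq_real v w
        rw [hexp, ← hGF]
        nlinarith [sq_nonneg (N - H), sq_nonneg G]
    _ = F + G + H := Real.sqrt_sq hRpos
    _ = F + ⟪v, w⟫ / F + ‖w‖^2 / τ := by rw [hG, hH]


lemma mem_negPolarP_of_localmin {W : Euc n → EReal} {zb : Euc n × ℝ} (hzb : zb ∈ eepi W)
    {pe : Euc n} {qe CC ρ₀ : ℝ} (hρ₀ : 0 < ρ₀) (hCC : 0 ≤ CC)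
    (H : ∀ z ∈ eepi W, dist z zb ≤ ρ₀ →
      0 ≤ -⟪pe, z.1 - zb.1⟫ - qe * (z.2 - zb.2) + CC * dist z zb ^ 2) :
    (pe, qe) ∈ negPolarP (contCone (eepi W) zb) := by
  intro w hw
  by_contra hcon
  push_neg at hcon
  set c := ⟪pe, w.1⟫ + qe * w.2 with hcdef
  have hcpos : (0:ℝ) < c := hcon
  set A := ‖pe‖ + |qe| with hA
  have hA0 : 0 ≤ A := by positivity
  set B := CC * (‖w‖ + 1)^2 with hB
  have hB0 : 0 ≤ B := by positivity
  have hw1 : (0:ℝ) < ‖w‖ + 1 := by positivity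
  set ε' := min 1 (min (ρ₀ / (‖w‖ + 1)) (c / (2 * (A + B + 1)))) with hε'
  have hε'pos : 0 < ε' := by
    apply lt_min one_pos
    apply lt_min (by positivity) (by positivity)
  obtain ⟨h, hh0, hhε, hinf⟩ := hw ε' hε'pos
  obtain ⟨z, hzmem, hzd⟩ := (Metric.infDist_lt_iff ⟨zb, hzb⟩).1 hinf
  have hed : ‖zb + h • w - z‖ < ε' * h := by rwa [dist_eq_norm] at hzd
  set e := zb + h • w - z with he
  have hz1 : z.1 - zb.1 = h • w.1 - e.1 := by
    simp only [he, Prod.fst_sub, Prod.fst_add, Prod.smul_fst]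
    abel
  have hz2 : z.2 - zb.2 = h * w.2 - e.2 := by
    simp only [he, Prod.snd_sub, Prod.snd_add, Prod.smul_snd, smul_eq_mul]
    ring
  have he1 : ‖e.1‖ ≤ ε' * h := (norm_fst_le e).trans hed.le
  have he2 : |e.2| ≤ ε' * h := by
    have := (norm_snd_le e).trans hed.le
    rwa [Real.norm_eq_abs] at this
  have hzzb : z - zb = h • w - e := by rw [he]; abel
  have hdz : dist z zb ≤ h * (‖w‖ + 1) := by
    rw [dist_eq_norm, hzzb]
    calc ‖h • w - e‖ ≤ ‖h • w‖ + ‖e‖ := norm_sub_le _ _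
      _ ≤ h * ‖w‖ + ε' * h := by
          rw [norm_smul, Real.norm_eq_abs, abs_of_pos hh0]
          exact add_le_add le_rfl hed.le
      _ ≤ h * (‖w‖ + 1) := by
          have hε'le1 : ε' ≤ 1 := min_le_left _ _
          nlinarith [mul_nonneg (sub_nonneg.2 hε'le1) hh0.le]
  have hρ : dist z zb ≤ ρ₀ := by
    have h1 : h * (‖w‖ + 1) ≤ ε' * (‖w‖ + 1) := by nlinarith
    have h2 : ε' * (‖w‖ + 1) ≤ ρ₀ := by
      have := (min_le_right 1 _).trans (min_le_left (ρ₀ / (‖w‖ + 1)) (c / (2 * (A + B + 1))))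
      have h3 : ε' ≤ ρ₀ / (‖w‖ + 1) := (min_le_right 1 _).trans (min_le_left _ _)
      calc ε' * (‖w‖ + 1) ≤ (ρ₀ / (‖w‖ + 1)) * (‖w‖ + 1) := by nlinarith
        _ = ρ₀ := by field_simp
    linarith [hdz]
  have hH0 := H z hzmem hρ
  -- term bounds
  have hT1 : -⟪pe, z.1 - zb.1⟫ ≤ -(h * ⟪pe, w.1⟫) + ‖pe‖ * (ε' * h) := by
    rw [hz1, inner_sub_right, real_inner_smul_right]
    have : ⟪pe, e.1⟫ ≤ ‖pe‖ * ‖e.1‖ := real_inner_le_norm pe e.1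
    have h2 : ‖pe‖ * ‖e.1‖ ≤ ‖pe‖ * (ε' * h) :=
      mul_le_mul_of_nonneg_left he1 (norm_nonneg pe)
    have h3 : -⟪pe, e.1⟫ ≤ ‖pe‖ * (ε' * h) := by
      have := real_inner_le_norm pe (-e.1)
      rw [inner_neg_right] at this
      calc -⟪pe, e.1⟫ ≤ ‖pe‖ * ‖-e.1‖ := this
        _ = ‖pe‖ * ‖e.1‖ := by rw [norm_neg]
        _ ≤ _ := h2
    linarith
  have hT2 : -(qe * (z.2 - zb.2)) ≤ -(h * (qe * w.2)) + |qe| * (ε' * h) := by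
    rw [hz2]
    have h1 : qe * e.2 ≤ |qe| * (ε' * h) := by
      calc qe * e.2 ≤ |qe * e.2| := le_abs_self _
        _ = |qe| * |e.2| := abs_mul _ _
        _ ≤ |qe| * (ε' * h) := mul_le_mul_of_nonneg_left he2 (abs_nonneg qe)
    have hexp : -(qe * (h * w.2 - e.2)) = -(h * (qe * w.2)) + qe * e.2 := by ring
    linarith [h1, hexp.le, hexp.ge]
  have hT3 : CC * dist z zb ^ 2 ≤ ε' * B * h := by
    have h1 : dist z zb ^ 2 ≤ (h * (‖w‖ + 1))^2 := by
      exact pow_le_pow_left₀ dist_nonneg hdz 2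
    calc CC * dist z zb ^ 2 ≤ CC * (h * (‖w‖ + 1))^2 := by nlinarith
      _ = (CC * (‖w‖ + 1)^2) * h * h := by ring
      _ ≤ (CC * (‖w‖ + 1)^2) * ε' * h := by
          nlinarith [mul_nonneg (mul_nonneg (mul_nonneg hCC (sq_nonneg (‖w‖+1))) (sub_nonneg.2 hhε.le)) hh0.le]
      _ = ε' * B * h := by rw [hB]; ring
  -- combine
  have hc2 : h * c = h * ⟪pe, w.1⟫ + h * (qe * w.2) := by rw [hcdef]; ring
  have hAeq : ‖pe‖ * (ε' * h) + |qe| * (ε' * h) + ε' * B * h = h * (ε' * (A + B)) := by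
    rw [hA]; ring
  have hsum : 0 ≤ h * (-c + ε' * (A + B)) := by
    have hlin : 0 ≤ -(h * c) + (‖pe‖ * (ε' * h) + |qe| * (ε' * h) + ε' * B * h) := by
      linarith [hH0, hT1, hT2, hT3, hc2.le, hc2.ge]
    have : h * (-c + ε' * (A + B)) = -(h * c) + h * (ε' * (A + B)) := by ring
    linarith [hAeq.le, hAeq.ge]
  have hkey : 0 ≤ -c + ε' * (A + B) := by
    by_contra hneg
    push_neg at hneg
    nlinarith
  have hle : ε' * (2 * (A + B + 1)) ≤ c := by
    have h3 : ε' ≤ c / (2 * (A + B + 1)) := (min_le_right 1 _).trans (min_le_right _ _)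
    rw [← le_div_iff₀ (by positivity)]
    exact h3
  have hexpand : ε' * (2 * (A + B + 1)) = 2 * (ε' * (A + B)) + 2 * ε' := by ring
  have hprod : 0 ≤ ε' * (A + B) := mul_nonneg hε'pos.le (add_nonneg hA0 hB0)
  linarith


lemma frechet {W : Euc n → EReal} {x : Euc n} {p : Euc n} {a : ℝ}
    (hpol : ∀ w ∈ contCone (eepi W) (x, a), ⟪p, w.1⟫ ≤ 0)
    {s : ℝ} (hs : 0 < s) :
    ∃ δF > 0, ∀ z ∈ eepi W, dist z (x, a) ≤ δF → ⟪p, z.1 - x⟫ ≤ s * dist z (x, a) := by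
  by_contra hcon
  push_neg at hcon
  have hseq : ∀ k : ℕ, ∃ z, z ∈ eepi W ∧ dist z (x, a) ≤ 1/(k+1) ∧
      s * dist z (x, a) < ⟪p, z.1 - x⟫ := by
    intro k
    obtain ⟨z, hz1, hz2, hz3⟩ := hcon (1/(k+1)) (by positivity)
    exact ⟨z, hz1, hz2, hz3⟩
  choose zk hzk1 hzk2 hzk3 using hseq
  have hd0 : ∀ k, 0 < dist (zk k) (x, a) := by
    intro k
    rcases lt_or_eq_of_le (dist_nonneg (x := zk k) (y := (x, a))) with h | h
    · exact h
    · exfalso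
      have h1 : dist (zk k).1 x ≤ dist (zk k) (x, a) := by
        rw [Prod.dist_eq]; exact le_max_left _ _
      have h2 : (zk k).1 = x := dist_eq_zero.1 (le_antisymm (h ▸ h1) dist_nonneg)
      have h3 := hzk3 k
      rw [h2, sub_self, inner_zero_right, ← h, mul_zero] at h3
      exact lt_irrefl 0 h3
  set wk : ℕ → Euc n × ℝ := fun k => (dist (zk k) (x, a))⁻¹ • (zk k - (x, a)) with hwk
  have hwknorm : ∀ k, ‖wk k‖ = 1 := by
    intro k
    rw [hwk]
    simp only [norm_smul, Real.norm_eq_abs, abs_of_pos (inv_pos.2 (hd0 k)), ← dist_eq_norm]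
    field_simp [(hd0 k).ne']
  have hwkmem : ∀ k, wk k ∈ Metric.sphere (0 : Euc n × ℝ) 1 := by
    intro k
    simp [Metric.mem_sphere, dist_zero_right, hwknorm k]
  obtain ⟨w, hwsp, φ, hφ, hconv⟩ := (isCompact_sphere (0 : Euc n × ℝ) 1).tendsto_subseq hwkmem
  have hsmul : ∀ k, zk k = (x, a) + dist (zk k) (x, a) • wk k := by
    intro k
    rw [hwk, smul_inv_smul₀ (hd0 k).ne']
    abel
  have hinner : ∀ k, s < ⟪p, (wk k).1⟫ := by
    intro k
    have h1 : (wk k).1 = (dist (zk k) (x, a))⁻¹ • ((zk k).1 - x) := by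
      rw [hwk]; simp [Prod.smul_fst]
    rw [h1, real_inner_smul_right]
    calc s = s * dist (zk k) (x, a) * (dist (zk k) (x, a))⁻¹ := by
            rw [mul_assoc, mul_inv_cancel₀ (hd0 k).ne', mul_one]
      _ < ⟪p, (zk k).1 - x⟫ * (dist (zk k) (x, a))⁻¹ :=
            mul_lt_mul_of_pos_right (hzk3 k) (inv_pos.2 (hd0 k))
      _ = (dist (zk k) (x, a))⁻¹ * ⟪p, (zk k).1 - x⟫ := by ring
  have hwin : s ≤ ⟪p, w.1⟫ := by
    have hcont : Filter.Tendsto (fun j => ⟪p, (wk (φ j)).1⟫) atTop (𝓝 ⟪p, w.1⟫) := by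
      have h1 : Filter.Tendsto (fun j => (wk (φ j)).1) atTop (𝓝 w.1) :=
        ((continuous_fst.tendsto w).comp hconv)
      exact Filter.Tendsto.inner tendsto_const_nhds h1
    exact ge_of_tendsto hcont (Filter.Eventually.of_forall fun j => (hinner (φ j)).le)
  have hwcone : w ∈ contCone (eepi W) (x, a) := by
    intro ε'' hε''
    obtain ⟨k₀, hk₀⟩ := exists_nat_one_div_lt hε''
    have hconv' := Metric.tendsto_atTop.1 hconv
    obtain ⟨j₀, hj₀⟩ := hconv' ε'' hε''
    set j := max j₀ k₀ with hj
    set h := dist (zk (φ j)) (x, a) with hh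
    have hφj : (k₀:ℝ) ≤ φ j := by
      exact_mod_cast (le_max_right j₀ k₀).trans (hφ.le_apply)
    have hhsmall : h < ε'' := by
      have := hzk2 (φ j)
      have h2 : 1/((φ j:ℝ)+1) ≤ 1/((k₀:ℝ)+1) := by
        apply one_div_le_one_div_of_le (by positivity) (by linarith)
      calc h ≤ 1/((φ j:ℝ)+1) := this
        _ ≤ 1/((k₀:ℝ)+1) := h2
        _ < ε'' := hk₀
    refine ⟨h, hd0 (φ j), hhsmall, ?_⟩
    have hmem := hzk1 (φ j)
    calc Metric.infDist ((x, a) + h • w) (eepi W) ≤ dist ((x, a) + h • w) (zk (φ j)) :=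
          Metric.infDist_le_dist_of_mem hmem
      _ = ‖h • w - h • wk (φ j)‖ := by
          rw [hsmul (φ j), dist_eq_norm]
          congr 1
          rw [← hh]
          abel
      _ = h * ‖w - wk (φ j)‖ := by
          rw [← smul_sub, norm_smul, Real.norm_eq_abs, abs_of_pos (hd0 (φ j))]
      _ < ε'' * h := by
          have hlt : ‖w - wk (φ j)‖ < ε'' := by
            have := hj₀ j (le_max_left j₀ k₀)
            rwa [dist_comm, dist_eq_norm] at this
          calc h * ‖w - wk (φ j)‖ < h * ε'' := by
                apply mul_lt_mul_of_pos_left hlt (hd0 (φ j))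
            _ = ε'' * h := by ring
  have := hpol w hwcone
  linarith


lemma key {W : Euc n → EReal} (hWbot : ∀ y, W y ≠ ⊥) (hWlsc : LowerSemicontinuous W)
    {x : Euc n} (hx : W x ≠ ⊤) {p : Euc n}
    (hpol : (p, (0:ℝ)) ∈ negPolarP (contCone (eepi W) (x, (W x).toReal)))
    {ε : ℝ} (hε0 : 0 < ε) (hε1 : ε ≤ 1) :
    ∃ (y : Euc n) (pe : Euc n) (qe : ℝ),
      ‖y - x‖ ≤ ε ∧ W y ≠ ⊤ ∧ |(W y).toReal - (W x).toReal| ≤ ε ∧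
      ‖pe - p‖ ≤ ε ∧ qe < 0 ∧ -ε ≤ qe ∧
      (pe, qe) ∈ negPolarP (contCone (eepi W) (y, (W y).toReal)) := by
  set a := (W x).toReal with ha
  have haW : (↑a : EReal) = W x := EReal.coe_toReal hx (hWbot x)
  -- constants
  set s := ε/100 with hs
  set κ := ε/2 with hκ
  set θ := ε/50 with hθ
  have hs0 : 0 < s := by rw [hs]; positivity
  have hκ0 : 0 < κ := by rw [hκ]; positivity
  have hθ0 : 0 < θ := by rw [hθ]; positivity
  have hpol' : ∀ w ∈ contCone (eepi W) (x, a), ⟪p, w.1⟫ ≤ 0 := by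
    intro w hw
    have := hpol w hw
    simpa using this
  obtain ⟨δF, hδF0, hPF⟩ := frechet hpol' hs0
  -- lsc margin
  have hmargin : ∃ δm > 0, ∀ y : Euc n, dist y x ≤ δm → (↑(a - ε/2) : EReal) < W y := by
    have hlt : (↑(a - ε/2) : EReal) < W x := by
      rw [← haW]
      exact_mod_cast (show a - ε/2 < a by linarith)
    have hev := hWlsc x _ hlt
    rw [Metric.eventually_nhds_iff] at hev
    obtain ⟨r, hr0, hr⟩ := hev
    exact ⟨r/2, half_pos hr0, fun y hy => hr (lt_of_le_of_lt hy (half_lt_self hr0))⟩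
  obtain ⟨δm, hδm0, hmar⟩ := hmargin
  set δ₂ := min δF (min δm (min ε 1)) with hδ₂
  have hδ₂0 : 0 < δ₂ := lt_min hδF0 (lt_min hδm0 (lt_min hε0 one_pos))
  have hδ₂F : δ₂ ≤ δF := min_le_left _ _
  have hδ₂m : δ₂ ≤ δm := (min_le_right _ _).trans (min_le_left _ _)
  have hδ₂ε : δ₂ ≤ ε := (min_le_right _ _).trans ((min_le_right _ _).trans (min_le_left _ _))
  have hδ₂1 : δ₂ ≤ 1 := (min_le_right _ _).trans ((min_le_right _ _).trans (min_le_right _ _))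
  set δ := δ₂/2 with hδ
  have hδ0 : 0 < δ := half_pos hδ₂0
  set τ := δ/4 with hτ
  have hτ0 : 0 < τ := by rw [hτ]; positivity
  -- penalized functional
  set f : Euc n → ℝ := fun v => Real.sqrt (‖v‖^2 + τ^2) with hfdef
  set g : ℝ → ℝ := fun ρ => δ * (Real.exp (ρ/δ) - 1) with hgdef
  set L : Euc n × ℝ → ℝ := fun z => -⟪p, z.1 - x⟫ + θ * g (z.2 - a) + κ * f (z.1 - x) with hLdef
  set K : Set (Euc n × ℝ) := eepi W ∩ (Metric.closedBall x δ ×ˢ Icc (a-2) (a+δ)) with hKdef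
  have hKc : IsCompact K :=
    ((isCompact_closedBall x δ).prod isCompact_Icc).inter_left (isClosed_eepi W hWlsc)
  have hxa_mem : (x, a) ∈ K := by
    refine ⟨?_, ?_, ?_⟩
    · show W x ≤ ((a:ℝ) : EReal); rw [haW]
    · simpa using hδ0.le
    · exact ⟨by linarith, by linarith⟩
  have hf_ge_norm : ∀ v : Euc n, ‖v‖ ≤ f v := by
    intro v
    have h := Real.sqrt_le_sqrt (show ‖v‖^2 ≤ ‖v‖^2 + τ^2 by nlinarith)
    rwa [Real.sqrt_sq (norm_nonneg v)] at h
  have hf_ge_τ : ∀ v : Euc n, τ ≤ f v := by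
    intro v
    have h := Real.sqrt_le_sqrt (show τ^2 ≤ ‖v‖^2 + τ^2 by nlinarith [sq_nonneg ‖v‖])
    rwa [Real.sqrt_sq hτ0.le] at h
  have hf0pos : ∀ v : Euc n, 0 < f v := fun v => lt_of_lt_of_le hτ0 (hf_ge_τ v)
  have hg_ge : ∀ ρ : ℝ, ρ ≤ g ρ := by
    intro ρ
    rw [hgdef]
    have := Real.add_one_le_exp (ρ/δ)
    have h2 : δ * (ρ/δ) ≤ δ * (Real.exp (ρ/δ) - 1) := by
      apply mul_le_mul_of_nonneg_left (by linarith) hδ0.le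
    calc ρ = δ * (ρ/δ) := by field_simp
      _ ≤ _ := h2
  have hg_lb : ∀ ρ : ℝ, -δ ≤ g ρ := by
    intro ρ
    rw [hgdef]
    nlinarith [Real.exp_nonneg (ρ/δ), hδ0]
  have hg0 : g 0 = 0 := by rw [hgdef]; simp
  have hLcont : ContinuousOn L K := by
    apply Continuous.continuousOn
    rw [hLdef]
    apply Continuous.add
    apply Continuous.add
    · exact (continuous_const.inner (continuous_fst.sub continuous_const)).neg
    · apply continuous_const.mul
      rw [hgdef]
      fun_prop
    · apply continuous_const.mul
      rw [hfdef]
      fun_prop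
  obtain ⟨zb, hzbK, hzbmin⟩ := hKc.exists_isMinOn ⟨(x, a), hxa_mem⟩ hLcont
  obtain ⟨hzbepi, hzbprod⟩ := hzbK
  obtain ⟨hzbball, hzbIcc⟩ := hzbprod
  set yb := zb.1 with hyb
  set rb := zb.2 with hrb
  have hu_le_δ : ‖yb - x‖ ≤ δ := by
    rw [← dist_eq_norm]; exact hzbball
  have hrb_lb : a - 2 ≤ rb := hzbIcc.1
  have hrb_ub : rb ≤ a + δ := hzbIcc.2
  have hepi : W yb ≤ ((rb : ℝ) : EReal) := hzbepi
  have hWyb_top : W yb ≠ ⊤ := by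
    intro hcontra
    rw [hcontra] at hepi
    exact (EReal.coe_ne_top rb) (top_le_iff.1 hepi)
  set t₀ := (W yb).toReal with ht₀
  have hWyb : (↑t₀ : EReal) = W yb := EReal.coe_toReal hWyb_top (hWbot yb)
  have hmarb : ((a - ε/2 : ℝ) : EReal) < W yb := by
    apply hmar
    calc dist yb x ≤ δ := hzbball
      _ ≤ δ₂ := by rw [hδ]; linarith
      _ ≤ δm := hδ₂m
  have ht₀lb : a - ε/2 < t₀ := by
    rw [← hWyb] at hmarb
    exact_mod_cast hmarb
  have ht₀rb : t₀ ≤ rb := by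
    rw [← hWyb] at hepi
    exact_mod_cast hepi
  -- minimum is on the graph
  have hrbeq : rb = t₀ := by
    rcases eq_or_lt_of_le ht₀rb with h | h
    · exact h.symm
    · exfalso
      have hz'K : (yb, t₀) ∈ K := by
        refine ⟨?_, ?_, ?_⟩
        · show W yb ≤ ((t₀:ℝ) : EReal); rw [hWyb]
        · exact hzbball
        · exact ⟨by linarith, by linarith⟩
      have hgm : g (t₀ - a) < g (rb - a) := by
        rw [hgdef]
        have hlt2 : (t₀ - a)/δ < (rb - a)/δ := by
          apply div_lt_div_of_pos_right ?_ hδ0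
          · linarith
        have hexp := Real.exp_lt_exp.2 hlt2
        nlinarith [hδ0]
      have hlt : L (yb, t₀) < L zb := by
        have h1 : L (yb, t₀) = -⟪p, yb - x⟫ + θ * g (t₀ - a) + κ * f (yb - x) := rfl
        have h2 : L zb = -⟪p, yb - x⟫ + θ * g (rb - a) + κ * f (yb - x) := rfl
        rw [h1, h2]
        have := mul_lt_mul_of_pos_left hgm hθ0
        linarith
      exact absurd (isMinOn_iff.1 hzbmin (yb, t₀) hz'K) (not_le.2 hlt)
  -- basic value of L at the minimizer and at (x,a)
  have hLzb : L zb = -⟪p, yb - x⟫ + θ * g (rb - a) + κ * f (yb - x) := rfl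
  have hE1 : L zb ≤ κ * τ := by
    have h1 := isMinOn_iff.1 hzbmin (x, a) hxa_mem
    have h2 : L (x, a) = κ * τ := by
      have h3 : L (x, a) = -⟪p, x - x⟫ + θ * g (a - a) + κ * f (x - x) := rfl
      rw [h3, sub_self, sub_self, inner_zero_right, hg0]
      have h4 : f 0 = τ := by
        rw [hfdef]
        simp only [norm_zero]
        rw [show (0:ℝ)^2 + τ^2 = τ^2 by ring, Real.sqrt_sq hτ0.le]
      rw [h4]
      ring
    linarith [h1, h2.le, h2.ge]
  -- Fréchet bound at a point above the minimizer
  have hE2 : ⟪p, yb - x⟫ ≤ s * δ₂ := by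
    set cc := max rb (a - δ₂) with hcc
    have hcmem : (yb, cc) ∈ eepi W := by
      show W yb ≤ ((cc:ℝ) : EReal)
      calc W yb ≤ ((rb:ℝ):EReal) := hepi
        _ ≤ ((cc:ℝ):EReal) := by exact_mod_cast le_max_left rb (a - δ₂)
    have hcd : dist (yb, cc) (x, a) ≤ δ₂ := by
      rw [Prod.dist_eq]
      apply max_le
      · calc dist yb x ≤ δ := hzbball
          _ ≤ δ₂ := by rw [hδ]; linarith
      · rw [Real.dist_eq, abs_le]
        constructor
        · have := le_max_right rb (a - δ₂); linarith
        · have h1 : rb ≤ a + δ₂ := by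
            have : δ ≤ δ₂ := by rw [hδ]; linarith
            linarith
          have h2 : cc ≤ a + δ₂ := max_le h1 (by linarith)
          linarith
    have h1 := hPF (yb, cc) hcmem (hcd.trans hδ₂F)
    calc ⟪p, yb - x⟫ = ⟪p, (yb, cc).1 - x⟫ := rfl
      _ ≤ s * dist (yb, cc) (x, a) := h1
      _ ≤ s * δ₂ := mul_le_mul_of_nonneg_left hcd hs0.le
  -- bound on ‖yb - x‖
  have hu33 : ‖yb - x‖ ≤ (33/100) * δ := by
    have h1 : κ * ‖yb - x‖ ≤ κ * f (yb - x) :=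
      mul_le_mul_of_nonneg_left (hf_ge_norm _) hκ0.le
    have h2 : -(θ * δ) ≤ θ * g (rb - a) := by nlinarith [hg_lb (rb - a), hθ0]
    have h3 : κ * ‖yb - x‖ ≤ κ * τ + s * δ₂ + θ * δ := by linarith [hE1, hE2, hLzb.le, hLzb.ge]
    have hδ₂eq : δ₂ = 2 * δ := by rw [hδ]; ring
    rw [hδ₂eq] at h3
    have hκe : κ = ε/2 := hκ
    have hse : s = ε/100 := hs
    have hθe : θ = ε/50 := hθ
    have hτe : τ = δ/4 := hτ
    rw [hκe, hse, hθe, hτe] at h3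
    nlinarith [h3, hε0]
  -- upper bound on rb - a
  have hρub : rb - a ≤ (33/100) * δ := by
    by_cases hcase : rb - a ≤ 0
    · calc rb - a ≤ 0 := hcase
        _ ≤ (33/100) * δ := by positivity
    · push_neg at hcase
      have hdzb : dist zb (x, a) ≤ δ := by
        rw [Prod.dist_eq]
        apply max_le hzbball
        rw [Real.dist_eq, abs_le]
        exact ⟨by linarith, by linarith⟩
      have h1 := hPF zb hzbepi (hdzb.trans (by rw [hδ]; linarith : δ ≤ δF))
      have h2 : dist zb (x, a) ≤ ‖yb - x‖ + (rb - a) := by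
        rw [Prod.dist_eq]
        apply max_le
        · rw [← dist_eq_norm] at *; linarith [hzbball, dist_nonneg (x := zb) (y := (x,a)), hcase.le]
        · rw [Real.dist_eq, abs_of_pos hcase]
          linarith [norm_nonneg (yb - x)]
      have h3 : ⟪p, yb - x⟫ ≤ s * (‖yb - x‖ + (rb - a)) := by
        calc ⟪p, yb - x⟫ = ⟪p, zb.1 - x⟫ := rfl
          _ ≤ s * dist zb (x, a) := h1
          _ ≤ s * (‖yb - x‖ + (rb - a)) := mul_le_mul_of_nonneg_left h2 hs0.le
      have h4 : θ * g (rb - a) ≤ ⟪p, yb - x⟫ := by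
        have hfτ : κ * τ ≤ κ * f (yb - x) := mul_le_mul_of_nonneg_left (hf_ge_τ _) hκ0.le
        linarith [hE1, hLzb.le, hLzb.ge]
      have h5 : θ * (rb - a) ≤ θ * g (rb - a) :=
        mul_le_mul_of_nonneg_left (hg_ge _) hθ0.le
      have h6 : θ * (rb - a) = 2 * (s * (rb - a)) := by rw [hθ, hs]; ring
      have h7 : s * (rb - a) ≤ s * ‖yb - x‖ := by nlinarith [h3, h4, h5]
      nlinarith [hu33, hs0, h7]
  -- define the approximate subgradient
  set F := f (yb - x) with hFd
  set E := Real.exp ((rb - a)/δ) with hEd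
  set pe := p - (κ / F) • (yb - x) with hped
  set qe := -(θ * E) with hqed
  have hF0 : 0 < F := hf0pos _
  have hFnorm : ‖yb - x‖ ≤ F := hf_ge_norm _
  have hE0 : 0 < E := Real.exp_pos _
  have hE3 : E ≤ 3 := by
    rw [hEd]
    have h1 : (rb - a)/δ ≤ 1 := by
      rw [div_le_one hδ0]; linarith [hρub]
    calc Real.exp ((rb - a)/δ) ≤ Real.exp 1 := Real.exp_le_exp.2 h1
      _ ≤ 3 := by linarith [Real.exp_one_lt_d9.le]
  have hpe_bound : ‖pe - p‖ ≤ ε := by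
    have h1 : pe - p = -((κ / F) • (yb - x)) := by rw [hped]; abel
    rw [h1, norm_neg, norm_smul, Real.norm_eq_abs, abs_of_nonneg (by positivity)]
    have h2 : (κ / F) * ‖yb - x‖ ≤ κ := by
      rw [div_mul_eq_mul_div, div_le_iff₀ hF0]
      nlinarith [hκ0]
    calc (κ / F) * ‖yb - x‖ ≤ κ := h2
      _ ≤ ε := by rw [hκ]; linarith
  have hqe_neg : qe < 0 := by
    rw [hqed]
    nlinarith [hθ0, hE0]
  have hqe_lb : -ε ≤ qe := by
    rw [hqed, hθ]
    nlinarith [hE3, hE0, hε0]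
  -- the membership via local minimality
  have hmem : (pe, qe) ∈ negPolarP (contCone (eepi W) zb) := by
    apply mem_negPolarP_of_localmin (hzbepi) (show (0:ℝ) < τ/4 by positivity)
      (show (0:ℝ) ≤ κ/τ + 3*θ/δ by positivity)
    intro z hz hdist
    have hd1 : ‖z.1 - yb‖ ≤ τ/4 := by
      rw [← dist_eq_norm]
      calc dist z.1 yb ≤ dist z zb := by rw [Prod.dist_eq]; exact le_max_left _ _
        _ ≤ τ/4 := hdist
    have hd2 : |z.2 - rb| ≤ τ/4 := by
      rw [← Real.dist_eq]
      calc dist z.2 rb ≤ dist z zb := by rw [Prod.dist_eq]; exact le_max_right _ _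
        _ ≤ τ/4 := hdist
    have hτδ : τ = δ/4 := hτ
    have hδhalf : δ ≤ 1/2 := by rw [hδ]; linarith
    have hzK : z ∈ K := by
      refine ⟨hz, ?_, ?_, ?_⟩
      · show dist z.1 x ≤ δ
        calc dist z.1 x ≤ dist z.1 yb + dist yb x := dist_triangle _ _ _
          _ ≤ τ/4 + (33/100)*δ := by
              rw [dist_eq_norm, dist_eq_norm]
              exact add_le_add hd1 hu33
          _ ≤ δ := by rw [hτδ]; linarith [hδ0]
      · show a - 2 ≤ z.2
        have : rb - τ/4 ≤ z.2 := by
          have := abs_le.1 hd2; linarith [this.1]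
        rw [hτδ] at this
        have hrblb : a - ε/2 ≤ rb := by rw [hrbeq]; linarith [ht₀lb]
        linarith [hδ0]
      · show z.2 ≤ a + δ
        have : z.2 ≤ rb + τ/4 := by
          have := abs_le.1 hd2; linarith [this.2]
        rw [hτδ] at this
        linarith [hρub, hδ0]
    have hmin2 : L zb ≤ L z := isMinOn_iff.1 hzbmin z hzK
    have hLz : L z = -⟪p, z.1 - x⟫ + θ * g (z.2 - a) + κ * f (z.1 - x) := rfl
    -- expansions
    have hsum : (yb - x) + (z.1 - yb) = z.1 - x := by abel
    have hfexp : f (z.1 - x) ≤ F + ⟪yb - x, z.1 - yb⟫ / F + ‖z.1 - yb‖^2/τ := by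
      have h1 := sqrt_expand hτ0 (yb - x) (z.1 - yb) (by linarith [hd1] : ‖z.1 - yb‖ ≤ τ/2)
      rw [hsum] at h1
      exact h1
    have hgexp : g (z.2 - a) - g (rb - a) ≤ E * (z.2 - rb) + 3 * (z.2 - rb)^2 / δ := by
      set d := z.2 - rb with hdd
      have hz2a : z.2 - a = (rb - a) + d := by rw [hdd]; ring
      have habs : |d/δ| ≤ 1 := by
        rw [abs_div, abs_of_pos hδ0, div_le_one hδ0]
        calc |d| ≤ τ/4 := hd2
          _ ≤ δ := by rw [hτδ]; linarith [hδ0]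
      have hexpb : Real.exp (d/δ) - 1 - d/δ ≤ (d/δ)^2 :=
        le_trans (le_abs_self _) (Real.abs_exp_sub_one_sub_id_le habs)
      have h1 : g (z.2 - a) - g (rb - a) = δ * E * (Real.exp (d/δ) - 1) := by
        rw [hz2a, hgdef]
        simp only
        rw [show ((rb - a) + d)/δ = (rb - a)/δ + d/δ by ring, Real.exp_add, hEd]
        ring
      rw [h1]
      have h2 : δ * E * (Real.exp (d/δ) - 1) ≤ δ * E * (d/δ + (d/δ)^2) := by
        apply mul_le_mul_of_nonneg_left (by linarith) (by positivity)
      have h3 : δ * E * (d/δ + (d/δ)^2) = E * d + E * d^2 / δ := by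
        field_simp
      have h4 : E * d^2 / δ ≤ 3 * d^2 / δ := by
        gcongr
      linarith [h2, h3.le, h3.ge, h4]
    -- inner product decompositions
    have hinner1 : ⟪p, z.1 - x⟫ = ⟪p, yb - x⟫ + ⟪p, z.1 - yb⟫ := by
      rw [← hsum, inner_add_right]
    have hinner2 : ⟪pe, z.1 - yb⟫ = ⟪p, z.1 - yb⟫ - (κ/F) * ⟪yb - x, z.1 - yb⟫ := by
      rw [hped, inner_sub_left, real_inner_smul_left]
    -- distance bounds
    have hw1d : ‖z.1 - yb‖^2 ≤ dist z zb ^ 2 := by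
      apply pow_le_pow_left₀ (norm_nonneg _) ?_ 2
      rw [← dist_eq_norm]
      rw [Prod.dist_eq]; exact le_max_left _ _
    have hdd2 : (z.2 - rb)^2 ≤ dist z zb ^ 2 := by
      have h1 : |z.2 - rb| ≤ dist z zb := by
        rw [← Real.dist_eq, Prod.dist_eq]; exact le_max_right _ _
      calc (z.2 - rb)^2 = |z.2 - rb|^2 := (sq_abs _).symm
        _ ≤ dist z zb ^ 2 := pow_le_pow_left₀ (abs_nonneg _) h1 2
    -- assemble
    have hmul1 : κ * f (z.1 - x) ≤ κ * (F + ⟪yb - x, z.1 - yb⟫ / F + ‖z.1 - yb‖^2/τ) :=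
      mul_le_mul_of_nonneg_left hfexp hκ0.le
    have hmul2 : θ * (g (z.2 - a) - g (rb - a)) ≤ θ * (E * (z.2 - rb) + 3 * (z.2 - rb)^2 / δ) :=
      mul_le_mul_of_nonneg_left hgexp hθ0.le
    have hc1 : κ * (⟪yb - x, z.1 - yb⟫ / F) = (κ/F) * ⟪yb - x, z.1 - yb⟫ := by ring
    have hc2 : κ * (‖z.1 - yb‖^2/τ) = (κ/τ) * ‖z.1 - yb‖^2 := by ring
    have hc3 : θ * (E * (z.2 - rb)) = (θ * E) * (z.2 - rb) := by ring
    have hc4 : θ * (3 * (z.2 - rb)^2 / δ) = (3*θ/δ) * (z.2 - rb)^2 := by ring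
    have hq1 : (κ/τ) * ‖z.1 - yb‖^2 ≤ (κ/τ) * dist z zb ^2 :=
      mul_le_mul_of_nonneg_left hw1d (by positivity)
    have hq2 : (3*θ/δ) * (z.2 - rb)^2 ≤ (3*θ/δ) * dist z zb ^2 :=
      mul_le_mul_of_nonneg_left hdd2 (by positivity)
    -- final inequality
    have hLzz : 0 ≤ L z - L zb := by linarith [hmin2]
    rw [hLz, hLzb] at hLzz
    have hstep : 0 ≤ -⟪p, z.1 - yb⟫ + (θ*E) * (z.2 - rb) + (3*θ/δ) * (z.2 - rb)^2
        + (κ/F) * ⟪yb - x, z.1 - yb⟫ + (κ/τ) * ‖z.1 - yb‖^2 := by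
      have e1 : θ * (E * (z.2 - rb) + 3 * (z.2 - rb)^2 / δ)
          = (θ*E)*(z.2-rb) + (3*θ/δ)*(z.2-rb)^2 := by ring
      have e2 : κ * (F + ⟪yb - x, z.1 - yb⟫ / F + ‖z.1 - yb‖^2/τ)
          = κ*F + (κ/F)*⟪yb - x, z.1 - yb⟫ + (κ/τ)*‖z.1 - yb‖^2 := by ring
      linarith [hLzz, hmul1, hmul2, e1.le, e1.ge, e2.le, e2.ge, hinner1.le, hinner1.ge]
    have hz1eq : z.1 - zb.1 = z.1 - yb := rfl
    have hz2eq : z.2 - zb.2 = z.2 - rb := rfl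
    rw [hz1eq, hz2eq, hinner2, hqed]
    linarith [hstep, hq1, hq2]
  refine ⟨yb, pe, qe, ?_, hWyb_top, ?_, hpe_bound, hqe_neg, hqe_lb, ?_⟩
  · have : δ ≤ δ₂ := by rw [hδ]; linarith
    linarith [hu33, hδ0, hδ₂ε]
  · rw [← ht₀, abs_le]
    constructor
    · linarith [ht₀lb]
    · have : t₀ - a ≤ (33/100)*δ := by rw [← hrbeq]; exact hρub
      have h2 : δ ≤ δ₂ := by rw [hδ]; linarith
      linarith [hδ₂ε, hδ0]
  · have hpt : ((yb : Euc n), (W yb).toReal) = zb := by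
      rw [← ht₀, ← hrbeq]
    rw [hpt]
    exact hmem


end Stmt9Aux

theorem stmt9 {n : ℕ} (W : Euc n → EReal)
    (hWbot : ∀ y, W y ≠ ⊥)
    (hWlsc : LowerSemicontinuous W)
    (x : Euc n) (hx : W x ≠ ⊤)
    (p : Euc n) (hp : p ≠ 0)
    (hpol : (p, (0:ℝ)) ∈ negPolarP (contCone (eepi W) (x, (W x).toReal))) :
    ∃ xe : ℝ → Euc n, ∃ pe : ℝ → Euc n, ∃ qe : ℝ → ℝ,
      Filter.Tendsto xe (𝓝[>] (0:ℝ)) (𝓝 x) ∧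
      Filter.Tendsto (fun ε => W (xe ε)) (𝓝[>] (0:ℝ)) (𝓝 (W x)) ∧
      Filter.Tendsto (fun ε => (pe ε, qe ε)) (𝓝[>] (0:ℝ)) (𝓝 (p, (0:ℝ))) ∧
      ∀ ε : ℝ, 0 < ε → qe ε < 0 ∧
        (pe ε, qe ε) ∈ negPolarP (contCone (eepi W) (xe ε, (W (xe ε)).toReal)) := by
  have key' : ∀ ε : ℝ, 0 < ε →
      ∃ (y : Euc n) (pe : Euc n) (qe : ℝ),
        ‖y - x‖ ≤ ε ∧ W y ≠ ⊤ ∧ |(W y).toReal - (W x).toReal| ≤ ε ∧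
        ‖pe - p‖ ≤ ε ∧ qe < 0 ∧ -ε ≤ qe ∧
        (pe, qe) ∈ negPolarP (contCone (eepi W) (y, (W y).toReal)) := by
    intro ε hε
    obtain ⟨y, pe, qe, h1, h2, h3, h4, h5, h6, h7⟩ :=
      Stmt9Aux.key hWbot hWlsc hx hpol (lt_min hε one_pos) (min_le_right ε 1)
    have hmin : min ε 1 ≤ ε := min_le_left ε 1
    exact ⟨y, pe, qe, h1.trans hmin, h2, h3.trans hmin, h4.trans hmin, h5,
      le_trans (by linarith) h6, h7⟩
  choose! y pe qe hy hyT hWy hpe hqneg hqlb hmem using key'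
  refine ⟨y, pe, qe, ?_, ?_, ?_, fun ε hε => ⟨hqneg ε hε, hmem ε hε⟩⟩
  · -- y → x
    rw [Metric.tendsto_nhds]
    intro η hη
    filter_upwards [Ioo_mem_nhdsGT_of_mem (Set.left_mem_Ico.2 (lt_min hη one_pos))]
      with ε hε
    have h1 := hy ε hε.1
    rw [dist_eq_norm]
    calc ‖y ε - x‖ ≤ ε := h1
      _ < min η 1 := hε.2
      _ ≤ η := min_le_left _ _
  · -- W (y ε) → W x
    have haW : ((W x).toReal : EReal) = W x := EReal.coe_toReal hx (hWbot x)
    have htoReal : Filter.Tendsto (fun ε => (W (y ε)).toReal) (𝓝[>] (0:ℝ))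
        (𝓝 ((W x).toReal)) := by
      rw [Metric.tendsto_nhds]
      intro η hη
      filter_upwards [Ioo_mem_nhdsGT_of_mem (Set.left_mem_Ico.2 (lt_min hη one_pos))]
        with ε hε
      have h1 := hWy ε hε.1
      rw [Real.dist_eq]
      calc |(W (y ε)).toReal - (W x).toReal| ≤ ε := h1
        _ < min η 1 := hε.2
        _ ≤ η := min_le_left _ _
    have hcoe : Filter.Tendsto (fun ε => (((W (y ε)).toReal : ℝ) : EReal)) (𝓝[>] (0:ℝ))
        (𝓝 (W x)) := by
      rw [← haW]
      exact (continuous_coe_real_ereal.tendsto _).comp htoReal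
    apply hcoe.congr'
    filter_upwards [self_mem_nhdsWithin] with ε hε
    exact EReal.coe_toReal (hyT ε hε) (hWbot (y ε))
  · -- (pe, qe) → (p, 0)
    have hpet : Filter.Tendsto pe (𝓝[>] (0:ℝ)) (𝓝 p) := by
      rw [Metric.tendsto_nhds]
      intro η hη
      filter_upwards [Ioo_mem_nhdsGT_of_mem (Set.left_mem_Ico.2 (lt_min hη one_pos))]
        with ε hε
      have h1 := hpe ε hε.1
      rw [dist_eq_norm]
      calc ‖pe ε - p‖ ≤ ε := h1
        _ < min η 1 := hε.2
        _ ≤ η := min_le_left _ _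
    have hqet : Filter.Tendsto qe (𝓝[>] (0:ℝ)) (𝓝 (0:ℝ)) := by
      rw [Metric.tendsto_nhds]
      intro η hη
      filter_upwards [Ioo_mem_nhdsGT_of_mem (Set.left_mem_Ico.2 (lt_min hη one_pos))]
        with ε hε
      have h1 := hqlb ε hε.1
      have h2 := hqneg ε hε.1
      rw [Real.dist_eq, sub_zero, abs_lt]
      have hm : min η 1 ≤ η := min_le_left η 1
      exact ⟨by linarith [hε.2], by linarith⟩
    rw [nhds_prod_eq]
    exact hpet.prodMk hqet
end
end

section
/- (Geometric consequence of the technical conditions) Let W : (0,∞) × ℝⁿ → [0,∞] be lower semicontinuous with the properties: for every (t,x) ∈ dom(W) with t > 0 there exists u with D↑W(t,x)(−1,u) < +∞, and the subsolution inequality p_t + H(x,−p_x) ≤ 0 holds for all (p_t,p_x) ∈ ∂₋W(t,x), where H(x,p) = sup_u(⟨p,u⟩ − L(x,u)) with L continuous and nonnegative. Then for every (t,x) ∈ dom(W) with t > 0: if (p_t, 0, 0) ∈ [T_{Epi(W)}(t,x,W(t,x))]⁻, then p_t = 0. -/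
open Filter Topology Metric Set
open scoped RealInnerProductSpace

noncomputable section

def eepiPos {n : ℕ} (W : ℝ × Euc n → EReal) : Set ((ℝ × Euc n) × ℝ) :=
  {p | 0 < p.1.1 ∧ W p.1 ≤ (p.2 : EReal)}

def negPolarQ {n : ℕ} (T : Set ((ℝ × Euc n) × ℝ)) : Set ((ℝ × Euc n) × ℝ) :=
  {v | ∀ w ∈ T, v.1.1 * w.1.1 + ⟪v.1.2, w.1.2⟫ + v.2 * w.2 ≤ (0:ℝ)}

lemma frechet_of_polar {F : Type*} [NormedAddCommGroup F] [NormedSpace ℝ F] [ProperSpace F]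
    (E : Set F) (q₀ : F) (g : F →L[ℝ] ℝ)
    (hg : ∀ w ∈ contCone E q₀, g w ≤ 0) {δ : ℝ} (hδ : 0 < δ) :
    ∃ r > 0, ∀ q ∈ E, dist q q₀ ≤ r → g (q - q₀) ≤ δ * dist q q₀ := by
  by_contra hcon
  push_neg at hcon
  choose q hqE hqd hqg using fun i : ℕ => hcon (1 / (i + 1)) (by positivity)
  have hne : ∀ i, q i ≠ q₀ := by
    intro i h
    have := hqg i
    rw [h] at this
    simp at this
  have hpos : ∀ i, (0:ℝ) < ‖q i - q₀‖ := fun i =>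
    norm_pos_iff.2 (sub_ne_zero.2 (hne i))
  set w : ℕ → F := fun i => ‖q i - q₀‖⁻¹ • (q i - q₀) with hw
  have hw1 : ∀ i, w i ∈ sphere (0:F) 1 := by
    intro i
    simp only [mem_sphere, dist_zero_right, hw]
    rw [norm_smul]
    simp [abs_of_pos (inv_pos.2 (hpos i)), inv_mul_cancel₀ (ne_of_gt (hpos i))]
  obtain ⟨wl, hwl, φ, hφ, hlim⟩ := (isCompact_sphere (0:F) 1).tendsto_subseq hw1
  have hdist0 : Tendsto (fun k => ‖q (φ k) - q₀‖) atTop (𝓝 0) := by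
    apply squeeze_zero (fun k => norm_nonneg _) (fun k => ?_)
    · exact tendsto_one_div_add_atTop_nhds_zero_nat
    · calc ‖q (φ k) - q₀‖ = dist (q (φ k)) q₀ := (dist_eq_norm _ _).symm
        _ ≤ 1 / (φ k + 1) := hqd _
        _ ≤ 1 / (k + 1) := by
            apply one_div_le_one_div_of_le (by positivity)
            have h : k ≤ φ k := hφ.le_apply
            have : (k:ℝ) ≤ (φ k : ℝ) := Nat.cast_le.2 h
            linarith
  have hmem : wl ∈ contCone E q₀ := by
    intro ε hε
    have h1 : ∀ᶠ k in atTop, dist (w (φ k)) wl < ε / 2 :=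
      hlim (Metric.ball_mem_nhds wl (by positivity))
    have h2 : ∀ᶠ k in atTop, ‖q (φ k) - q₀‖ < ε :=
      hdist0 (Iio_mem_nhds hε)
    obtain ⟨k, hk1, hk2⟩ := (h1.and h2).exists
    refine ⟨‖q (φ k) - q₀‖, hpos _, hk2, ?_⟩
    have hmemq : q (φ k) ∈ E := hqE _
    calc Metric.infDist (q₀ + ‖q (φ k) - q₀‖ • wl) E
        ≤ dist (q₀ + ‖q (φ k) - q₀‖ • wl) (q (φ k)) := Metric.infDist_le_dist_of_mem hmemq
      _ = ‖‖q (φ k) - q₀‖ • wl - ‖q (φ k) - q₀‖ • w (φ k)‖ := by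
          rw [dist_eq_norm, hw]
          congr 1
          rw [smul_inv_smul₀ (ne_of_gt (hpos _))]
          abel
      _ = ‖q (φ k) - q₀‖ * ‖wl - w (φ k)‖ := by
          rw [← smul_sub, norm_smul]
          simp [abs_of_pos (hpos _)]
      _ ≤ ‖q (φ k) - q₀‖ * (ε / 2) := by
          apply mul_le_mul_of_nonneg_left _ (le_of_lt (hpos _))
          rw [← dist_eq_norm, dist_comm]
          exact le_of_lt hk1
      _ < ε * ‖q (φ k) - q₀‖ := by
          rw [mul_comm]
          apply mul_lt_mul_of_pos_right _ (hpos _)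
          linarith
  have hlow : ∀ k, δ ≤ g (w (φ k)) := by
    intro k
    have := hqg (φ k)
    have hd : dist (q (φ k)) q₀ = ‖q (φ k) - q₀‖ := dist_eq_norm _ _
    rw [hd] at this
    have : δ * ‖q (φ k) - q₀‖ < g (q (φ k) - q₀) := this
    have hgw : g (w (φ k)) = ‖q (φ k) - q₀‖⁻¹ * g (q (φ k) - q₀) := by
      simp [hw, map_smul]
    rw [hgw]
    rw [le_inv_mul_iff₀ (hpos _)]
    calc ‖q (φ k) - q₀‖ * δ = δ * ‖q (φ k) - q₀‖ := mul_comm _ _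
      _ ≤ g (q (φ k) - q₀) := le_of_lt this
  have hlimg : Tendsto (fun k => g (w (φ k))) atTop (𝓝 (g wl)) :=
    (g.continuous.tendsto wl).comp hlim
  have : δ ≤ g wl := ge_of_tendsto' hlimg hlow |>.trans_eq rfl |> id
  exact absurd (hg wl hmem) (by linarith)

lemma isClosed_epi_cap {n : ℕ} (W : ℝ × Euc n → EReal)
    (hW : LowerSemicontinuousOn W {q : ℝ × Euc n | 0 < q.1}) {c : ℝ} (hc : 0 < c) :
    IsClosed {p : (ℝ × Euc n) × ℝ | c ≤ p.1.1 ∧ W p.1 ≤ (p.2 : EReal)} := by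
  apply IsSeqClosed.isClosed
  intro u p hu hup
  have h1 : Tendsto (fun k => (u k).1.1) atTop (𝓝 p.1.1) :=
    ((continuous_fst.fst).tendsto p).comp hup
  have h2 : Tendsto (fun k => (u k).2) atTop (𝓝 p.2) :=
    (continuous_snd.tendsto p).comp hup
  have hc1 : c ≤ p.1.1 := le_of_tendsto_of_tendsto' tendsto_const_nhds h1 (fun k => (hu k).1)
  refine ⟨hc1, ?_⟩
  by_contra hW2
  push_neg at hW2
  obtain ⟨b, hb1, hb2⟩ := EReal.exists_between_coe_real hW2
  have hp1 : p.1 ∈ {q : ℝ × Euc n | 0 < q.1} := lt_of_lt_of_le hc hc1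
  have hlsc := hW p.1 hp1 (b : EReal) hb2
  have hup1 : Tendsto (fun k => (u k).1) atTop (𝓝[{q : ℝ × Euc n | 0 < q.1}] p.1) := by
    apply tendsto_nhdsWithin_of_tendsto_nhds_of_eventually_within
    · exact (continuous_fst.tendsto p).comp hup
    · filter_upwards with k
      exact lt_of_lt_of_le hc (hu k).1
  have hev : ∀ᶠ k in atTop, (b : EReal) < W (u k).1 := hup1.eventually hlsc
  have hev2 : ∀ᶠ k in atTop, b < (u k).2 := by
    filter_upwards [hev] with k hk
    have := lt_of_lt_of_le hk (hu k).2
    exact_mod_cast this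
  have : b ≤ p.2 := ge_of_tendsto h2 (hev2.mono fun k hk => le_of_lt hk)
  have : (b : EReal) ≤ (p.2 : EReal) := EReal.coe_le_coe_iff.2 this
  exact absurd (lt_of_le_of_lt this hb1) (lt_irrefl _)

lemma tangent_back {n : ℕ} (W : ℝ × Euc n → EReal) (hW0 : ∀ q, 0 ≤ W q)
    (t : ℝ) (x : Euc n) (ht : 0 < t) (hfin : W (t, x) ≠ ⊤) (u : Euc n)
    (hDup : Dup W (t, x) ((-1:ℝ), u) < ⊤) :
    ∃ z₀ : ℝ, ((((-1:ℝ), u), z₀) : (ℝ × Euc n) × ℝ) ∈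
      contCone (eepiPos W) (((t, x), (W (t, x)).toReal)) := by
  set Wr : ℝ := (W (t, x)).toReal with hWrdef
  have hbot : W (t, x) ≠ ⊥ := ne_bot_of_le_ne_bot (by simp) (hW0 (t, x))
  have hWr : W (t, x) = (Wr : EReal) := (EReal.coe_toReal hfin hbot).symm
  obtain ⟨z₀, hz₀, -⟩ := EReal.exists_between_coe_real hDup
  refine ⟨z₀, ?_⟩
  have hfreq : ∃ᶠ p in (𝓝[>] (0:ℝ)) ×ˢ 𝓝 ((-1:ℝ), u),
      ((p.1⁻¹ : ℝ) : EReal) * (W ((t, x) + p.1 • p.2) - W (t, x)) < (z₀ : EReal) :=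
    Filter.frequently_lt_of_liminf_lt (by isBoundedDefault) hz₀
  intro ε hε
  set ρ : ℝ := min ε 1 / 2 with hρdef
  have hρ : 0 < ρ := by positivity
  have hρε : ρ < ε := by
    rcases le_total ε 1 with h | h
    · simp only [hρdef, min_eq_left h]; linarith
    · simp only [hρdef, min_eq_right h]; linarith
  have hρhalf : ρ ≤ 1 / 2 := by
    simp only [hρdef]
    have : min ε 1 ≤ 1 := min_le_right _ _
    linarith
  have hS : (Ioo (0:ℝ) (min ε (t / 2)) ×ˢ ball ((-1:ℝ), u) ρ : Set (ℝ × (ℝ × Euc n))) ∈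
      (𝓝[>] (0:ℝ)) ×ˢ 𝓝 ((-1:ℝ), u) := by
    apply Filter.prod_mem_prod
    · exact Ioo_mem_nhdsGT_of_mem ⟨le_refl 0, by positivity⟩
    · exact ball_mem_nhds _ hρ
  obtain ⟨⟨h, v⟩, hmem, hval⟩ :=
    ((Filter.eventually_of_mem hS (fun p hp => hp)).and_frequently hfreq).exists
  obtain ⟨⟨hh0, hhlt⟩, hvball⟩ := hmem
  have hhε : h < ε := lt_of_lt_of_le hhlt (min_le_left _ _)
  have hht : h < t / 2 := lt_of_lt_of_le hhlt (min_le_right _ _)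
  -- distance components
  have hvd : max (dist v.1 (-1:ℝ)) (dist v.2 u) < ρ := by
    have := mem_ball.1 hvball
    rwa [Prod.dist_eq] at this
  have hv1 : dist v.1 (-1:ℝ) < ρ := lt_of_le_of_lt (le_max_left _ _) hvd
  have hv2 : dist v.2 u < ρ := lt_of_le_of_lt (le_max_right _ _) hvd
  -- the point where W is evaluated
  set P : ℝ × Euc n := (t, x) + h • v with hPdef
  have hP1 : P.1 = t + h * v.1 := rfl
  have hP2 : P.2 = x + h • v.2 := rfl
  -- P.1 > 0
  have hv1' : |v.1 - (-1)| < ρ := by rwa [Real.dist_eq] at hv1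
  have hv1lb : -(3/2 : ℝ) < v.1 := by
    have : ρ ≤ 1/2 := hρhalf
    have := abs_lt.1 hv1'
    cases this with
    | intro h1 h2 => linarith
  have hPpos : 0 < P.1 := by
    rw [hP1]
    nlinarith [hv1lb, hh0, hht, ht]
  -- W P is finite
  have hWPne : W P ≠ ⊤ := by
    intro htop
    rw [htop, hWr, EReal.top_sub_coe] at hval
    have hinv : (0 : EReal) < ((h⁻¹ : ℝ) : EReal) := by
      exact_mod_cast inv_pos.2 hh0
    rw [EReal.mul_top_of_pos hinv] at hval
    exact not_top_lt hval
  have hWPbot : W P ≠ ⊥ := ne_bot_of_le_ne_bot (by simp) (hW0 P)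
  set a : ℝ := (W P).toReal with hadef
  have hWP : W P = (a : EReal) := (EReal.coe_toReal hWPne hWPbot).symm
  have hvalr : h⁻¹ * (a - Wr) < z₀ := by
    rw [hWP, hWr, ← EReal.coe_sub, ← EReal.coe_mul] at hval
    exact_mod_cast hval
  have haWr : a ≤ Wr + h * z₀ := by
    have h1 : a - Wr < h * z₀ := by
      have := mul_lt_mul_of_pos_left hvalr hh0
      rwa [mul_inv_cancel_left₀ (ne_of_gt hh0)] at this
    linarith
  -- epigraph point
  set e : (ℝ × Euc n) × ℝ := ((t + h * v.1, x + h • v.2), Wr + h * z₀) with hedef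
  have heE : e ∈ eepiPos W := by
    constructor
    · exact hPpos
    · have : e.1 = P := by
        apply Prod.ext
        · exact hP1.symm
        · exact hP2.symm
      rw [this, hWP]
      exact_mod_cast haWr
  refine ⟨h, hh0, hhε, ?_⟩
  have hq₀ : ((t, x), Wr) + h • ((((-1:ℝ), u), z₀) : (ℝ × Euc n) × ℝ)
      = ((t + h * (-1), x + h • u), Wr + h * z₀) := by
    apply Prod.ext
    · apply Prod.ext <;> simp [Prod.smul_def]
    · simp [Prod.smul_def]
  calc Metric.infDist (((t, x), Wr) + h • ((((-1:ℝ), u), z₀) : (ℝ × Euc n) × ℝ)) (eepiPos W)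
      ≤ dist (((t, x), Wr) + h • ((((-1:ℝ), u), z₀) : (ℝ × Euc n) × ℝ)) e :=
        Metric.infDist_le_dist_of_mem heE
    _ < ε * h := by
        rw [hq₀, hedef, Prod.dist_eq, Prod.dist_eq]
        simp only [dist_self]
        have d1 : dist (t + h * (-1)) (t + h * v.1) = h * dist v.1 (-1:ℝ) := by
          rw [Real.dist_eq, Real.dist_eq]
          rw [show t + h * (-1) - (t + h * v.1) = h * (-(v.1 - (-1))) by ring]
          rw [abs_mul, abs_neg, abs_of_pos hh0]
        have d2 : dist (x + h • u) (x + h • v.2) = h * dist v.2 u := by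
          rw [dist_eq_norm, dist_eq_norm]
          rw [show x + h • u - (x + h • v.2) = (-h) • (v.2 - u) by
            rw [neg_smul, smul_sub]; abel]
          rw [norm_smul, Real.norm_eq_abs, abs_neg, abs_of_pos hh0, ← dist_eq_norm]
        rw [d1, d2]
        have hmax : max (max (h * dist v.1 (-1:ℝ)) (h * dist v.2 u)) 0
            = h * max (dist v.1 (-1:ℝ)) (dist v.2 u) := by
          rw [max_eq_left, mul_max_of_nonneg _ _ (le_of_lt hh0)]
          positivity
        rw [hmax]
        calc h * max (dist v.1 (-1:ℝ)) (dist v.2 u) < h * ρ :=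
              mul_lt_mul_of_pos_left hvd hh0
          _ < h * ε := mul_lt_mul_of_pos_left hρε hh0
          _ = ε * h := mul_comm _ _

set_option maxHeartbeats 2000000 in
theorem stmt16 {n : ℕ} (L : Euc n → Euc n → ℝ) (W : ℝ × Euc n → EReal)
    (hL0 : ∀ x u, 0 ≤ L x u)
    (hLc : Continuous (fun q : Euc n × Euc n => L q.1 q.2))
    (hW0 : ∀ q, 0 ≤ W q)
    (hWlsc : LowerSemicontinuousOn W {q : ℝ × Euc n | 0 < q.1})
    (htech1 : ∀ t : ℝ, ∀ x : Euc n, 0 < t → W (t, x) ≠ ⊤ →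
      ∃ u : Euc n, Dup W (t, x) ((-1:ℝ), u) < ⊤)
    (hsub : ∀ t : ℝ, ∀ x : Euc n, 0 < t → ∀ p ∈ subdiffP W (t, x),
      (p.1 : ℝ) + Ham L x (-p.2) ≤ (0 : EReal)) :
    ∀ t : ℝ, ∀ x : Euc n, 0 < t → W (t, x) ≠ ⊤ → ∀ pt : ℝ,
      ((pt, (0 : Euc n)), (0:ℝ)) ∈
        negPolarQ (contCone (eepiPos W) ((t, x), (W (t, x)).toReal)) →
      pt = 0 := by
  intro t x ht hfin pt hpt
  set Wr : ℝ := (W (t, x)).toReal with hWrdef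
  have hbot : W (t, x) ≠ ⊥ := ne_bot_of_le_ne_bot (by simp) (hW0 (t, x))
  have hWr : W (t, x) = (Wr : EReal) := (EReal.coe_toReal hfin hbot).symm
  have hWrnn : (0:ℝ) ≤ Wr := by
    have := hW0 (t, x)
    rw [hWr] at this
    exact_mod_cast this
  set q₀ : (ℝ × Euc n) × ℝ := ((t, x), Wr) with hq₀def
  have hpt' : ∀ w ∈ contCone (eepiPos W) q₀, pt * w.1.1 ≤ 0 := by
    intro w hw
    have := hpt w hw
    simpa using this
  -- Part 1 : 0 ≤ pt
  have hge : 0 ≤ pt := by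
    obtain ⟨u, hu⟩ := htech1 t x ht hfin
    obtain ⟨z₀, hz⟩ := tangent_back W hW0 t x ht hfin u hu
    have := hpt' _ hz
    simp only at this
    linarith [this]
  -- Part 2 : pt ≤ 0
  have hle : pt ≤ 0 := by
    by_contra hc0
    push_neg at hc0
    -- bound on L near x
    obtain ⟨M₀, hM₀, hM₀0⟩ : ∃ M₀ : ℝ, (∀ y ∈ closedBall x 1, L y 0 ≤ M₀) ∧ 0 ≤ M₀ := by
      have hcont : ContinuousOn (fun y : Euc n => L y 0) (closedBall x 1) :=
        (hLc.comp (continuous_id.prodMk continuous_const)).continuousOn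
      obtain ⟨y₀, hy₀, hmax⟩ := (isCompact_closedBall x 1).exists_isMaxOn
        ⟨x, mem_closedBall_self zero_le_one⟩ hcont
      refine ⟨L y₀ 0, fun y hy => hmax hy, le_trans (hL0 y₀ 0) (le_refl _)⟩
    set N : ℝ := M₀ + 2 with hNdef
    have hN2 : (2:ℝ) ≤ N := by linarith
    clear_value N
    -- the linear functional
    set g : ((ℝ × Euc n) × ℝ) →L[ℝ] ℝ :=
      pt • ((ContinuousLinearMap.fst ℝ ℝ (Euc n)).comp
        (ContinuousLinearMap.fst ℝ (ℝ × Euc n) ℝ)) with hgdef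
    have hgapp : ∀ w : (ℝ × Euc n) × ℝ, g w = pt * w.1.1 := fun w => rfl
    have hδpos : (0:ℝ) < pt / (N + 3) := by positivity
    obtain ⟨r, hr, hstar⟩ := frechet_of_polar (eepiPos W) q₀ g
      (fun w hw => by rw [hgapp]; exact hpt' w hw) hδpos
    -- the growth estimate
    have hA : ∀ s : ℝ, ∀ y : Euc n, ∀ c : ℝ, t < s → s - t ≤ r → dist y x ≤ r →
        0 ≤ c → c ≤ r → dist y x + c < (N + 2) * (s - t) →
        ((Wr + c : ℝ) : EReal) < W (s, y) := by
      intro s y c hts hsr hyr hc0' hcr hcond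
      by_contra hW2
      push_neg at hW2
      have hqE : (((s, y), Wr + c) : (ℝ × Euc n) × ℝ) ∈ eepiPos W :=
        ⟨lt_trans ht hts, hW2⟩
      have hdist : dist (((s, y), Wr + c) : (ℝ × Euc n) × ℝ) q₀
          = max (max (dist s t) (dist y x)) (dist (Wr + c) Wr) := by
        rw [hq₀def, Prod.dist_eq, Prod.dist_eq]
      have hds : dist s t = s - t := by
        rw [Real.dist_eq, abs_of_pos (by linarith)]
      have hdc : dist (Wr + c) Wr = c := by
        rw [Real.dist_eq]
        rw [show Wr + c - Wr = c by ring, abs_of_nonneg hc0']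
      have hdle : dist (((s, y), Wr + c) : (ℝ × Euc n) × ℝ) q₀ ≤ r := by
        rw [hdist, hds, hdc]
        exact max_le (max_le (by linarith) hyr) hcr
      have := hstar _ hqE hdle
      rw [hgapp] at this
      have hsub1 : (((s, y), Wr + c) - q₀ : (ℝ × Euc n) × ℝ).1.1 = s - t := rfl
      rw [hsub1] at this
      have hdsum : dist (((s, y), Wr + c) : (ℝ × Euc n) × ℝ) q₀ ≤ (s - t) + dist y x + c := by
        rw [hdist, hds, hdc]
        have h1 : (0:ℝ) ≤ s - t := by linarith
        have h2 : (0:ℝ) ≤ dist y x := dist_nonneg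
        exact max_le (max_le (by linarith) (by linarith)) (by linarith)
      have hfin2 : pt * (s - t) ≤ pt / (N + 3) * ((s - t) + dist y x + c) :=
        le_trans this (by
          apply mul_le_mul_of_nonneg_left hdsum (le_of_lt hδpos))
      have hN3 : (0:ℝ) < N + 3 := by linarith
      rw [div_mul_eq_mul_div, le_div_iff₀ hN3] at hfin2
      linarith [hfin2, mul_lt_mul_of_pos_left hcond hc0]
    -- constants
    obtain ⟨σ, hσ0, hσr, hσt, hσ1⟩ :
        ∃ σ : ℝ, 0 < σ ∧ (N + 1) * σ ≤ r ∧ σ ≤ t / 2 ∧ σ ≤ 1 := by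
      refine ⟨min (r / (N + 1)) (min (t / 2) 1), ?_, ?_, ?_, ?_⟩
      · exact lt_min (by positivity) (lt_min (by positivity) one_pos)
      · have h5 : min (r / (N + 1)) (min (t / 2) 1) ≤ r / (N + 1) := min_le_left _ _
        have h6 : r / (N + 1) * (N + 1) = r := div_mul_cancel₀ _ (by linarith)
        nlinarith
      · exact le_trans (min_le_right _ _) (min_le_left _ _)
      · exact le_trans (min_le_right _ _) (min_le_right _ _)
    have h2σ : 2 * σ ≤ N * σ := mul_le_mul_of_nonneg_right hN2 (le_of_lt hσ0)
    have hσler : σ ≤ r := by linarith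
    have hNσler : N * σ ≤ r := by linarith
    have hσsq : (0:ℝ) < σ ^ 2 := by positivity
    obtain ⟨A, hA0, hAσ⟩ : ∃ A : ℝ, 0 < A ∧ A * σ ^ 2 = Wr + 1 :=
      ⟨(Wr + 1) / σ ^ 2, by positivity, div_mul_cancel₀ _ (ne_of_gt hσsq)⟩
    obtain ⟨C, hC0, hCσ, hCA⟩ :
        ∃ C : ℝ, 0 < C ∧ Wr + N * σ < C * σ ^ 2 ∧ A ^ 2 * (Wr + N * σ) ≤ C := by
      refine ⟨max ((Wr + N * σ + 1) / σ ^ 2) (A ^ 2 * (Wr + N * σ)) + 1, ?_, ?_, ?_⟩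
      · have h5 : (0:ℝ) ≤ A ^ 2 * (Wr + N * σ) := by positivity
        have h6 := le_max_right ((Wr + N * σ + 1) / σ ^ 2) (A ^ 2 * (Wr + N * σ))
        linarith
      · have h5 := le_max_left ((Wr + N * σ + 1) / σ ^ 2) (A ^ 2 * (Wr + N * σ))
        have h6 : (Wr + N * σ + 1) / σ ^ 2 * σ ^ 2 = Wr + N * σ + 1 :=
          div_mul_cancel₀ _ (ne_of_gt hσsq)
        linarith [mul_le_mul_of_nonneg_right h5 (le_of_lt hσsq)]
      · have h6 := le_max_right ((Wr + N * σ + 1) / σ ^ 2) (A ^ 2 * (Wr + N * σ))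
        linarith
    set B : ℝ := Wr + N * σ + 1 with hBdef
    clear_value B
    have hNσ0 : (0:ℝ) ≤ N * σ := mul_nonneg (by linarith) (le_of_lt hσ0)
    have hB0 : (0:ℝ) ≤ B := by linarith
    -- the compact set
    set Eb : Set ((ℝ × Euc n) × ℝ) := {p | W p.1 ≤ (p.2 : EReal) ∧ |p.1.1 - t| ≤ σ ∧
      dist p.1.2 x ≤ σ ∧ p.2 ≤ B} with hEbdef
    have hEbeq : Eb = ({p : (ℝ × Euc n) × ℝ | t - σ ≤ p.1.1 ∧ W p.1 ≤ (p.2 : EReal)} ∩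
        ({p : (ℝ × Euc n) × ℝ | |p.1.1 - t| ≤ σ} ∩
         ({p : (ℝ × Euc n) × ℝ | dist p.1.2 x ≤ σ} ∩ {p : (ℝ × Euc n) × ℝ | p.2 ≤ B}))) := by
      ext p
      simp only [hEbdef, mem_setOf_eq, mem_inter_iff]
      constructor
      · rintro ⟨h1, h2, h3, h4⟩
        have := abs_le.1 h2
        exact ⟨⟨by linarith [this.1], h1⟩, h2, h3, h4⟩
      · rintro ⟨⟨_, h1⟩, h2, h3, h4⟩
        exact ⟨h1, h2, h3, h4⟩
    have htσ : (0:ℝ) < t - σ := by linarith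
    have hclosed : IsClosed Eb := by
      rw [hEbeq]
      refine (isClosed_epi_cap W hWlsc htσ).inter (IsClosed.inter ?_ (IsClosed.inter ?_ ?_))
      · exact isClosed_le (by fun_prop) continuous_const
      · exact isClosed_le (Continuous.dist (by fun_prop) continuous_const) continuous_const
      · exact isClosed_le (by fun_prop) continuous_const
    have hEbbd : Eb ⊆ closedBall q₀ (σ + B + Wr + 1) := by
      intro p hp
      obtain ⟨h1, h2, h3, h4⟩ := hp
      have ha0 : (0:ℝ) ≤ p.2 := by
        have : ((0:ℝ) : EReal) ≤ (p.2 : EReal) := le_trans (hW0 p.1) h1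
        exact_mod_cast this
      rw [mem_closedBall, hq₀def, Prod.dist_eq, Prod.dist_eq]
      have hd3 : dist p.2 Wr ≤ B + Wr := by
        rw [Real.dist_eq, abs_le]
        constructor <;> linarith
      refine max_le (max_le ?_ ?_) ?_
      · rw [Real.dist_eq]; linarith [abs_nonneg (p.1.1 - t), h2]
      · linarith [dist_nonneg (x := p.1.2) (y := x)]
      · linarith
    have hcompact : IsCompact Eb :=
      IsCompact.of_isClosed_subset (isCompact_closedBall q₀ _) hclosed hEbbd
    have hq₀Eb : q₀ ∈ Eb := by
      refine ⟨?_, by simp [hq₀def, abs_of_nonneg, le_of_lt hσ0], by simp [hq₀def, le_of_lt hσ0], ?_⟩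
      · rw [hq₀def]; rw [show (((t, x), Wr) : (ℝ × Euc n) × ℝ).1 = (t, x) from rfl, hWr]
      · rw [hq₀def]; show Wr ≤ B; linarith
    set f : ((ℝ × Euc n) × ℝ) → ℝ := fun p =>
      p.2 + A * (p.1.1 - t) ^ 2 + C * (dist p.1.2 x) ^ 2 - N * (p.1.1 - t) with hfdef
    have hfc : ContinuousOn f Eb := by
      apply Continuous.continuousOn
      fun_prop
    obtain ⟨qs, hqsEb, hqsmin'⟩ := hcompact.exists_isMinOn ⟨q₀, hq₀Eb⟩ hfc
    have hqsmin : ∀ p ∈ Eb, f qs ≤ f p := fun p hp => hqsmin' hp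
    obtain ⟨hWa', hsbox, hdbox, haB⟩ := hqsEb
    have ha0 : (0:ℝ) ≤ qs.2 := by
      have : ((0:ℝ) : EReal) ≤ (qs.2 : EReal) := le_trans (hW0 qs.1) hWa'
      exact_mod_cast this
    have hfq₀ : f q₀ = Wr := by
      simp [hfdef, hq₀def]
    have hfq : f qs ≤ Wr := by
      rw [← hfq₀]; exact hqsmin q₀ hq₀Eb
    set s' : ℝ := qs.1.1 with hs'def
    set d' : ℝ := dist qs.1.2 x with hd'def
    have hd'0 : 0 ≤ d' := dist_nonneg
    have F1 : qs.2 + A * (s' - t) ^ 2 + C * d' ^ 2 - N * (s' - t) ≤ Wr := hfq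
    have hsabs := abs_le.1 hsbox
    have F3 : qs.2 ≤ Wr + N * (s' - t) - A * (s' - t) ^ 2 - C * d' ^ 2 := by linarith
    have hAsq : (0:ℝ) ≤ A * (s' - t) ^ 2 := mul_nonneg (le_of_lt hA0) (sq_nonneg _)
    have hCsq : (0:ℝ) ≤ C * d' ^ 2 := mul_nonneg (le_of_lt hC0) (sq_nonneg _)
    have hNub : N * (s' - t) ≤ N * σ := mul_le_mul_of_nonneg_left hsabs.2 (by linarith)
    have F3' : qs.2 ≤ Wr + N * σ := by linarith
    have F4 : -σ < s' - t := by
      rcases le_or_gt (s' - t) 0 with hcase | hcase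
      · have hN1 : N * (s' - t) ≤ N * 0 := mul_le_mul_of_nonneg_left hcase (by linarith)
        have h1 : A * (s' - t) ^ 2 ≤ Wr := by linarith
        have h2 : (s' - t) ^ 2 < σ ^ 2 := by
          by_contra hcc
          push_neg at hcc
          have := mul_le_mul_of_nonneg_left hcc (le_of_lt hA0)
          linarith
        have h3 : |s' - t| < σ := abs_lt_of_sq_lt_sq h2 (le_of_lt hσ0)
        linarith [abs_lt.1 h3]
      · linarith
    have F5 : d' < σ := by
      have h1 : C * d' ^ 2 ≤ Wr + N * σ := by linarith
      have h2 : d' ^ 2 < σ ^ 2 := by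
        by_contra hcc
        push_neg at hcc
        have := mul_le_mul_of_nonneg_left hcc (le_of_lt hC0)
        linarith
      have h3 : |d'| < σ := abs_lt_of_sq_lt_sq h2 (le_of_lt hσ0)
      linarith [abs_lt.1 h3]
    have F6 : 2 * (s' - t) ≤ d' := by
      rcases le_or_gt s' t with hcase | hcase
      · linarith
      · by_contra hcon2
        push_neg at hcon2
        have hNst0 : (0:ℝ) ≤ N * (s' - t) := mul_nonneg (by linarith) (by linarith)
        have hkey := hA s' qs.1.2 (N * (s' - t)) hcase (by linarith) (by linarith)
          hNst0 (by linarith) (by linarith)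
        have heta : ((s', qs.1.2) : ℝ × Euc n) = qs.1 := rfl
        rw [heta] at hkey
        have : W qs.1 ≤ ((Wr + N * (s' - t) : ℝ) : EReal) := by
          refine le_trans hWa' ?_
          exact_mod_cast (by linarith : qs.2 ≤ Wr + N * (s' - t))
        exact absurd (lt_of_lt_of_le hkey this) (lt_irrefl _)
    have F7 : 2 * A * (s' - t) ≤ 1 := by
      rcases le_or_gt (s' - t) 0 with hcase | hcase
      · have := mul_le_mul_of_nonneg_left hcase (le_of_lt hA0)
        linarith
      · have h1 : C * d' ^ 2 ≤ Wr + N * σ := by linarith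
        have h2a : A ^ 2 * (C * d' ^ 2) ≤ A ^ 2 * (Wr + N * σ) :=
          mul_le_mul_of_nonneg_left h1 (sq_nonneg A)
        have h2b : C * (A ^ 2 * d' ^ 2) ≤ C * 1 := by linarith
        have h2 : A ^ 2 * d' ^ 2 ≤ 1 := (mul_le_mul_iff_of_pos_left hC0).1 h2b
        have h3 : A * d' ≤ 1 := by
          have h4 : (A * d') ^ 2 ≤ 1 := by
            calc (A * d') ^ 2 = A ^ 2 * d' ^ 2 := by ring
              _ ≤ 1 := h2
          have h5 : |A * d'| ≤ 1 := (sq_le_one_iff_abs_le_one (A * d')).1 h4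
          linarith [le_abs_self (A * d')]
        have h6 := mul_le_mul_of_nonneg_left F6 (le_of_lt hA0)
        linarith
    set p1 : ℝ := N - 2 * A * (s' - t) with hp1def
    have hp1 : N - 1 ≤ p1 := by linarith
    set p2 : Euc n := (-(2 * C)) • (qs.1.2 - x) with hp2def
    have hsint : |s' - t| < σ := by
      rw [abs_lt]
      exact ⟨F4, by linarith⟩
    have hspos : 0 < s' := by linarith
    -- W at the min point equals qs.2
    have hWa : W qs.1 = (qs.2 : EReal) := by
      refine le_antisymm hWa' ?_
      by_contra hne
      push_neg at hne
      have hlt : W qs.1 < (qs.2 : EReal) := hne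
      obtain ⟨b, hb1, hb2⟩ := EReal.exists_between_coe_real hlt
      have hbr : b < qs.2 := by exact_mod_cast hb2
      have hmem2 : ((qs.1, b) : (ℝ × Euc n) × ℝ) ∈ Eb :=
        ⟨le_of_lt hb1, hsbox, hdbox, by linarith⟩
      have := hqsmin _ hmem2
      simp only [hfdef] at this
      have : qs.2 ≤ b := by linarith [this]
      linarith
    -- the subgradient
    have hsubgrad : ((p1, p2) : ℝ × Euc n) ∈ subdiffP W (s', qs.1.2) := by
      intro ε hε
      set η : ℝ := min (min (σ - |s' - t|) (σ - d'))
        (min (ε / (A + C + 1)) (1 / (|p1| + ‖p2‖ + 1))) with hηdef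
      have hη0 : 0 < η := by
        apply lt_min (lt_min (by linarith) (by linarith))
        exact lt_min (by positivity) (by positivity)
      have hη1 : η ≤ σ - |s' - t| := le_trans (min_le_left _ _) (min_le_left _ _)
      have hη2 : η ≤ σ - d' := le_trans (min_le_left _ _) (min_le_right _ _)
      have hη3 : η ≤ ε / (A + C + 1) := le_trans (min_le_right _ _) (min_le_left _ _)
      have hη4 : η ≤ 1 / (|p1| + ‖p2‖ + 1) := le_trans (min_le_right _ _) (min_le_right _ _)
      have heta : ((s', qs.1.2) : ℝ × Euc n) = qs.1 := rfl
      rw [heta]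
      filter_upwards [Metric.ball_mem_nhds qs.1 hη0] with z hz
      set D : ℝ := ‖z - qs.1‖ with hDdef
      have hD : D < η := by
        rw [hDdef, ← dist_eq_norm]
        exact hz
      have hD0 : 0 ≤ D := norm_nonneg _
      have hz1 : |z.1 - s'| ≤ D := by
        have : ‖(z - qs.1).1‖ ≤ ‖z - qs.1‖ := norm_fst_le _
        simpa [Real.norm_eq_abs] using this
      have hz2 : ‖z.2 - qs.1.2‖ ≤ D := by
        have : ‖(z - qs.1).2‖ ≤ ‖z - qs.1‖ := norm_snd_le _
        simpa using this
      have hbox1 : |z.1 - t| ≤ σ := by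
        calc |z.1 - t| ≤ |z.1 - s'| + |s' - t| := abs_sub_le _ _ _
          _ ≤ D + |s' - t| := by linarith
          _ ≤ σ := by linarith
      have hbox2 : dist z.2 x ≤ σ := by
        calc dist z.2 x ≤ dist z.2 qs.1.2 + d' := dist_triangle _ _ _
          _ ≤ D + d' := by rw [dist_eq_norm]; linarith
          _ ≤ σ := by linarith
      have hip : ⟪p2, z.2 - qs.1.2⟫ = -(2 * C) * ⟪qs.1.2 - x, z.2 - qs.1.2⟫ := by
        rw [hp2def, real_inner_smul_left]
      have hipbd : |⟪p2, z.2 - qs.1.2⟫| ≤ ‖p2‖ * D := by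
        calc |⟪p2, z.2 - qs.1.2⟫| ≤ ‖p2‖ * ‖z.2 - qs.1.2‖ := abs_real_inner_le_norm _ _
          _ ≤ ‖p2‖ * D := mul_le_mul_of_nonneg_left hz2 (norm_nonneg p2)
      have hlin1 : p1 * (z.1 - s') + ⟪p2, z.2 - qs.1.2⟫ ≤ 1 := by
        have h1 : p1 * (z.1 - s') ≤ |p1| * D := by
          calc p1 * (z.1 - s') ≤ |p1 * (z.1 - s')| := le_abs_self _
            _ = |p1| * |z.1 - s'| := abs_mul _ _
            _ ≤ |p1| * D := mul_le_mul_of_nonneg_left hz1 (abs_nonneg p1)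
        have h2 : (|p1| + ‖p2‖) * η ≤ 1 := by
          have h3 : (0:ℝ) < |p1| + ‖p2‖ + 1 := by positivity
          rw [le_div_iff₀ h3] at hη4
          linarith [hη0]
        have h4 : |p1| * D ≤ |p1| * η := mul_le_mul_of_nonneg_left (le_of_lt hD) (abs_nonneg p1)
        have h5 : ‖p2‖ * D ≤ ‖p2‖ * η := mul_le_mul_of_nonneg_left (le_of_lt hD) (norm_nonneg p2)
        linarith [abs_le.1 hipbd]
      by_cases hB2 : W z ≤ (B : EReal)
      · -- use the minimality
        have hWzne : W z ≠ ⊤ := by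
          intro htop
          rw [htop] at hB2
          exact absurd hB2 (by simp)
        have hWzbot : W z ≠ ⊥ := ne_bot_of_le_ne_bot (by simp) (hW0 z)
        set b : ℝ := (W z).toReal with hbdef
        have hWzb : W z = (b : EReal) := (EReal.coe_toReal hWzne hWzbot).symm
        have hbB : b ≤ B := by
          rw [hWzb] at hB2
          exact_mod_cast hB2
        have hmem3 : ((z, b) : (ℝ × Euc n) × ℝ) ∈ Eb :=
          ⟨le_of_eq hWzb, hbox1, hbox2, hbB⟩
        have hmin3 := hqsmin _ hmem3
        simp only [hfdef] at hmin3
        -- expansions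
        have e1' : A * (z.1 - t) ^ 2 = A * (s' - t) ^ 2 + 2 * A * (s' - t) * (z.1 - s')
            + A * (z.1 - s') ^ 2 := by ring
        have e2 : (dist z.2 x) ^ 2 = d' ^ 2 + 2 * ⟪qs.1.2 - x, z.2 - qs.1.2⟫
            + ‖z.2 - qs.1.2‖ ^ 2 := by
          rw [hd'def, dist_eq_norm, dist_eq_norm]
          rw [show z.2 - x = (qs.1.2 - x) + (z.2 - qs.1.2) by abel]
          rw [norm_add_sq_real]
          try ring
        have e2' : C * (dist z.2 x) ^ 2 = C * d' ^ 2 + 2 * C * ⟪qs.1.2 - x, z.2 - qs.1.2⟫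
            + C * ‖z.2 - qs.1.2‖ ^ 2 := by rw [e2]; ring
        have hquad : A * (z.1 - s') ^ 2 + C * ‖z.2 - qs.1.2‖ ^ 2 ≤ ε * D := by
          have h1 : (z.1 - s') ^ 2 ≤ D ^ 2 := by
            have := pow_le_pow_left₀ (abs_nonneg (z.1 - s')) hz1 2
            rwa [sq_abs] at this
          have h2 : ‖z.2 - qs.1.2‖ ^ 2 ≤ D ^ 2 := pow_le_pow_left₀ (norm_nonneg _) hz2 2
          have h3 : (A + C) * η ≤ ε := by
            have h4 : (0:ℝ) < A + C + 1 := by positivity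
            rw [le_div_iff₀ h4] at hη3
            linarith [hη0]
          have h5 : A * (z.1 - s') ^ 2 ≤ A * D ^ 2 := mul_le_mul_of_nonneg_left h1 (le_of_lt hA0)
          have h6 : C * ‖z.2 - qs.1.2‖ ^ 2 ≤ C * D ^ 2 := mul_le_mul_of_nonneg_left h2 (le_of_lt hC0)
          have h7 : D * D ≤ η * D := mul_le_mul_of_nonneg_right (le_of_lt hD) hD0
          have h8 : (A + C) * (D * D) ≤ (A + C) * (η * D) :=
            mul_le_mul_of_nonneg_left h7 (by positivity)
          have h9 : ((A + C) * η) * D ≤ ε * D := mul_le_mul_of_nonneg_right h3 hD0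
          linarith [h5, h6, h8, h9]
        have hkey : qs.2 + (p1 * (z.1 - s') + ⟪p2, z.2 - qs.1.2⟫ - ε * D) ≤ b := by
          rw [hip, hp1def]
          linarith [hmin3, e1', e2', hquad]
        rw [hWa, hWzb, ← EReal.coe_add, EReal.coe_le_coe_iff]
        exact hkey
      · -- W z is large
        have hBz : (B : EReal) < W z := not_le.1 hB2
        have hkey : qs.2 + (p1 * (z.1 - s') + ⟪p2, z.2 - qs.1.2⟫ - ε * ‖z - qs.1‖) ≤ B := by
          have : -(ε * ‖z - qs.1‖) ≤ 0 := by
            have : 0 ≤ ε * ‖z - qs.1‖ := by positivity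
            linarith
          have hD' : ‖z - qs.1‖ = D := rfl
          linarith [hlin1, F3']
        calc W qs.1 + ((p1 * (z.1 - s') + ⟪p2, z.2 - qs.1.2⟫ - ε * ‖z - qs.1‖ : ℝ) : EReal)
            = ((qs.2 + (p1 * (z.1 - s') + ⟪p2, z.2 - qs.1.2⟫ - ε * ‖z - qs.1‖) : ℝ) : EReal) := by
              rw [hWa, ← EReal.coe_add]
          _ ≤ ((B : ℝ) : EReal) := by exact_mod_cast hkey
          _ ≤ W z := le_of_lt hBz
    -- contradiction with the subsolution property
    have hs2 := hsub s' qs.1.2 hspos (p1, p2) hsubgrad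
    have hHam : ((-(L qs.1.2 0) : ℝ) : EReal) ≤ Ham L qs.1.2 (-(p1, p2).2) := by
      have h0 : ((⟪-(p1, p2).2, (0 : Euc n)⟫ - L qs.1.2 0 : ℝ) : EReal)
          = ((-(L qs.1.2 0) : ℝ) : EReal) := by
        rw [inner_zero_right]
        norm_num
      have hle := le_iSup (fun u : Euc n => ((⟪-(p1, p2).2, u⟫ - L qs.1.2 u : ℝ) : EReal)) 0
      rw [h0] at hle
      exact hle
    have hcomb : (((p1 : ℝ) - L qs.1.2 0 : ℝ) : EReal) ≤ 0 := by
      calc (((p1 : ℝ) - L qs.1.2 0 : ℝ) : EReal)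
          = ((p1 : ℝ) : EReal) + ((-(L qs.1.2 0) : ℝ) : EReal) := by
            rw [← EReal.coe_add, sub_eq_add_neg]
        _ ≤ ((p1 : ℝ) : EReal) + Ham L qs.1.2 (-(p1, p2).2) := add_le_add_right hHam _
        _ ≤ 0 := hs2
    have hreal : p1 - L qs.1.2 0 ≤ 0 := by exact_mod_cast hcomb
    have hLbd : L qs.1.2 0 ≤ M₀ := hM₀ _ (mem_closedBall.2 (by rw [← hd'def]; linarith))
    linarith
  linarith
end
end
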